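/- arXiv:1110.0160 — 5 statements merged into one kernel-verified Lean document; each statement's English description precedes it below -/
import Mathlib

section
/- Fix an integer ℓ > 0. There exists a constant c > 0 depending only on ℓ such that the following holds for every n: if a Young diagram λ is a subset of the staircase Young diagram of size n, and x = (i,j) is a corner of λ with i ≥ n/4, j ≥ n/4 and n − i − j ≤ ℓ, then for a uniformly random standard Young tableau T of shape λ, the probability that T(x) = |λ| is at least c/n. -/
noncomputable section

/-- A finite set of boxes in `ℕ × ℕ` (with coordinates `≥ 1`) forms a Young diagram:
it is of the form `{(i,j) : 1 ≤ j ≤ λ_i}` for a nonincreasing sequence `λ_1 ≥ λ_2 ≥ ⋯`,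
equivalently it is downward closed in both coordinates. -/
def IsDiagram (D : Finset (ℕ × ℕ)) : Prop :=
  ∀ c ∈ D, 1 ≤ c.1 ∧ 1 ≤ c.2 ∧
    ∀ i j : ℕ, 1 ≤ i → i ≤ c.1 → 1 ≤ j → j ≤ c.2 → (i, j) ∈ D

/-- A standard Young tableau of shape `D`: a bijection from the boxes of `D` onto
`{1, …, |D|}`, increasing along rows and columns (normalized to vanish off `D`). -/
def IsSYT (D : Finset (ℕ × ℕ)) (T : ℕ × ℕ → ℕ) : Prop :=
  Set.BijOn T ↑D ↑(Finset.Icc 1 D.card) ∧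
  (∀ x, x ∉ D → T x = 0) ∧
  (∀ i j : ℕ, (i, j) ∈ D → (i, j + 1) ∈ D → T (i, j) < T (i, j + 1)) ∧
  (∀ i j : ℕ, (i, j) ∈ D → (i + 1, j) ∈ D → T (i, j) < T (i + 1, j))

/-- `dim D` is the number of standard Young tableaux of shape `D`. -/
def dimYD (D : Finset (ℕ × ℕ)) : ℕ := Nat.card {T : ℕ × ℕ → ℕ // IsSYT D T}

/-- The hook length of a box `x` in `D`: the number of boxes in the hook of `x`
(`x` itself, its arm and its leg). -/
def hookLength (D : Finset (ℕ × ℕ)) (x : ℕ × ℕ) : ℕ :=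
  (D.filter fun c => (c.1 = x.1 ∧ x.2 ≤ c.2) ∨ (c.2 = x.2 ∧ x.1 ≤ c.1)).card

/-- The co-hook of a box `x` in `D`: the union of its co-arm and co-leg. -/
def coHook (D : Finset (ℕ × ℕ)) (x : ℕ × ℕ) : Finset (ℕ × ℕ) :=
  D.filter fun c => (c.1 = x.1 ∧ c.2 < x.2) ∨ (c.2 = x.2 ∧ c.1 < x.1)

/-- A corner of `D` is a box with hook length `1`. -/
def IsCornerBox (D : Finset (ℕ × ℕ)) (x : ℕ × ℕ) : Prop := x ∈ D ∧ hookLength D x = 1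

/-- The boxes of the staircase Young diagram of size `n`, with row lengths
`(n-1, n-2, …, 1)`. -/
def staircase (n : ℕ) : Finset (ℕ × ℕ) :=
  (Finset.Icc 1 n ×ˢ Finset.Icc 1 n).filter fun c => c.1 + c.2 ≤ n

namespace YDaux

/-- A downward-closed finset of positive naturals is an initial segment. -/
lemma downclosed_eq_Icc (J : Finset ℕ) (h1 : ∀ j ∈ J, 1 ≤ j)
    (h2 : ∀ j ∈ J, ∀ k, 1 ≤ k → k ≤ j → k ∈ J) : J = Finset.Icc 1 J.card := by
  rcases J.eq_empty_or_nonempty with rfl | hne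
  · simp
  · have hM : J.max' hne ∈ J := J.max'_mem hne
    have hJ : J = Finset.Icc 1 (J.max' hne) := by
      ext k
      simp only [Finset.mem_Icc]
      constructor
      · exact fun hk => ⟨h1 k hk, Finset.le_max' J k hk⟩
      · rintro ⟨h1k, h2k⟩
        exact h2 _ hM k h1k h2k
    have hcard : J.card = J.max' hne := by
      conv_lhs => rw [hJ]
      rw [Nat.card_Icc]
      omega
    rw [hcard, ← hJ]

def rowLen (D : Finset (ℕ × ℕ)) (r : ℕ) : ℕ :=
  ((D.filter fun p => p.1 = r).image Prod.snd).card

def colLen (D : Finset (ℕ × ℕ)) (c : ℕ) : ℕ :=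
  ((D.filter fun p => p.2 = c).image Prod.fst).card

variable {D : Finset (ℕ × ℕ)}

lemma rowImage_eq (hD : IsDiagram D) (r : ℕ) :
    (D.filter fun p => p.1 = r).image Prod.snd = Finset.Icc 1 (rowLen D r) := by
  apply downclosed_eq_Icc
  · intro j hj
    simp only [Finset.mem_image, Finset.mem_filter] at hj
    obtain ⟨p, ⟨hpD, _⟩, rfl⟩ := hj
    exact (hD p hpD).2.1
  · intro j hj k hk1 hkj
    simp only [Finset.mem_image, Finset.mem_filter] at hj ⊢
    obtain ⟨p, ⟨hpD, hpr⟩, rfl⟩ := hj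
    refine ⟨(r, k), ⟨?_, rfl⟩, rfl⟩
    have := (hD p hpD).2.2 r k (by have := (hD p hpD).1; omega) (le_of_eq hpr.symm) hk1 hkj
    simpa [hpr] using this

lemma mem_iff_rowLen (hD : IsDiagram D) {r c : ℕ} :
    (r, c) ∈ D ↔ 1 ≤ r ∧ 1 ≤ c ∧ c ≤ rowLen D r := by
  constructor
  · intro h
    refine ⟨(hD _ h).1, (hD _ h).2.1, ?_⟩
    have : c ∈ (D.filter fun p => p.1 = r).image Prod.snd := by
      simp only [Finset.mem_image, Finset.mem_filter]
      exact ⟨(r, c), ⟨h, rfl⟩, rfl⟩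
    rw [rowImage_eq hD] at this
    exact (Finset.mem_Icc.1 this).2
  · rintro ⟨hr, hc, hcl⟩
    have : c ∈ (D.filter fun p => p.1 = r).image Prod.snd := by
      rw [rowImage_eq hD]
      exact Finset.mem_Icc.2 ⟨hc, hcl⟩
    simp only [Finset.mem_image, Finset.mem_filter] at this
    obtain ⟨p, ⟨hpD, hpr⟩, hps⟩ := this
    have : p = (r, c) := Prod.ext hpr hps
    rwa [this] at hpD

lemma colImage_eq (hD : IsDiagram D) (c : ℕ) :
    (D.filter fun p => p.2 = c).image Prod.fst = Finset.Icc 1 (colLen D c) := by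
  apply downclosed_eq_Icc
  · intro j hj
    simp only [Finset.mem_image, Finset.mem_filter] at hj
    obtain ⟨p, ⟨hpD, _⟩, rfl⟩ := hj
    exact (hD p hpD).1
  · intro j hj k hk1 hkj
    simp only [Finset.mem_image, Finset.mem_filter] at hj ⊢
    obtain ⟨p, ⟨hpD, hpc⟩, rfl⟩ := hj
    refine ⟨(k, c), ⟨?_, rfl⟩, rfl⟩
    have := (hD p hpD).2.2 k c hk1 hkj (by have := (hD p hpD).2.1; omega) (le_of_eq hpc.symm)
    simpa [hpc] using this

lemma mem_iff_colLen (hD : IsDiagram D) {r c : ℕ} :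
    (r, c) ∈ D ↔ 1 ≤ r ∧ 1 ≤ c ∧ r ≤ colLen D c := by
  constructor
  · intro h
    refine ⟨(hD _ h).1, (hD _ h).2.1, ?_⟩
    have : r ∈ (D.filter fun p => p.2 = c).image Prod.fst := by
      simp only [Finset.mem_image, Finset.mem_filter]
      exact ⟨(r, c), ⟨h, rfl⟩, rfl⟩
    rw [colImage_eq hD] at this
    exact (Finset.mem_Icc.1 this).2
  · rintro ⟨hr, hc, hcl⟩
    have : r ∈ (D.filter fun p => p.2 = c).image Prod.fst := by
      rw [colImage_eq hD]
      exact Finset.mem_Icc.2 ⟨hr, hcl⟩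
    simp only [Finset.mem_image, Finset.mem_filter] at this
    obtain ⟨p, ⟨hpD, hpc⟩, hpf⟩ := this
    have : p = (r, c) := Prod.ext hpf hpc
    rwa [this] at hpD

/-- The hook of a box, as a union of a row segment and a column segment. -/
lemma hook_eq (hD : IsDiagram D) {r c : ℕ} (h : (r, c) ∈ D) :
    D.filter (fun p => (p.1 = r ∧ c ≤ p.2) ∨ (p.2 = c ∧ r ≤ p.1)) =
      ((Finset.Icc c (rowLen D r)).image fun j => (r, j)) ∪
      ((Finset.Icc r (colLen D c)).image fun i => (i, c)) := by
  have hr1 : 1 ≤ r := (hD _ h).1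
  have hc1 : 1 ≤ c := (hD _ h).2.1
  ext ⟨a, b⟩
  simp only [Finset.mem_filter, Finset.mem_union, Finset.mem_image, Finset.mem_Icc, Prod.mk.injEq]
  constructor
  · rintro ⟨hab, (⟨rfl, hcb⟩ | ⟨rfl, hra⟩)⟩
    · exact Or.inl ⟨b, ⟨hcb, (mem_iff_rowLen hD).1 hab |>.2.2⟩, rfl, rfl⟩
    · exact Or.inr ⟨a, ⟨hra, (mem_iff_colLen hD).1 hab |>.2.2⟩, rfl, rfl⟩
  · rintro (⟨j, ⟨hcj, hjl⟩, rfl, rfl⟩ | ⟨i, ⟨hri, hil⟩, rfl, rfl⟩)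
    · exact ⟨(mem_iff_rowLen hD).2 ⟨hr1, le_trans hc1 hcj, hjl⟩, Or.inl ⟨rfl, hcj⟩⟩
    · exact ⟨(mem_iff_colLen hD).2 ⟨le_trans hr1 hri, hc1, hil⟩, Or.inr ⟨rfl, hri⟩⟩

lemma hookLength_eq (hD : IsDiagram D) {r c : ℕ} (h : (r, c) ∈ D) :
    hookLength D (r, c) = (rowLen D r - c) + (colLen D c - r) + 1 := by
  have hcl : c ≤ rowLen D r := ((mem_iff_rowLen hD).1 h).2.2
  have hrl : r ≤ colLen D c := ((mem_iff_colLen hD).1 h).2.2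
  unfold hookLength
  rw [hook_eq hD h]
  rw [Finset.card_union]
  have hA : ((Finset.Icc c (rowLen D r)).image fun j => (r, j)).card = rowLen D r - c + 1 := by
    rw [Finset.card_image_of_injective _ (fun a b hab => by simpa using hab), Nat.card_Icc]
    omega
  have hB : ((Finset.Icc r (colLen D c)).image fun i => (i, c)).card = colLen D c - r + 1 := by
    rw [Finset.card_image_of_injective _ (fun a b hab => by simpa using hab), Nat.card_Icc]
    omega
  have hI : ((Finset.Icc c (rowLen D r)).image fun j => (r, j)) ∩
      ((Finset.Icc r (colLen D c)).image fun i => (i, c)) = {(r, c)} := by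
    ext ⟨a, b⟩
    simp only [Finset.mem_inter, Finset.mem_image, Finset.mem_Icc, Prod.mk.injEq,
      Finset.mem_singleton]
    constructor
    · rintro ⟨⟨j, ⟨hj1, hj2⟩, rfl, rfl⟩, ⟨i, ⟨hi1, hi2⟩, hi3, hi4⟩⟩
      exact ⟨rfl, hi4.symm⟩
    · rintro ⟨rfl, rfl⟩
      exact ⟨⟨b, ⟨le_refl _, hcl⟩, rfl, rfl⟩, ⟨a, ⟨le_refl _, hrl⟩, rfl, rfl⟩⟩
  rw [hA, hB, hI]
  simp only [Finset.card_singleton]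
  omega

lemma isCorner_iff (hD : IsDiagram D) {r c : ℕ} :
    IsCornerBox D (r, c) ↔ (r, c) ∈ D ∧ rowLen D r = c ∧ colLen D c = r := by
  constructor
  · rintro ⟨hm, hh⟩
    have hcl : c ≤ rowLen D r := ((mem_iff_rowLen hD).1 hm).2.2
    have hrl : r ≤ colLen D c := ((mem_iff_colLen hD).1 hm).2.2
    rw [hookLength_eq hD hm] at hh
    exact ⟨hm, by omega, by omega⟩
  · rintro ⟨hm, h1, h2⟩
    refine ⟨hm, ?_⟩
    rw [hookLength_eq hD hm, h1, h2]
    omega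


lemma rowLen_antitone (hD : IsDiagram D) {r r' : ℕ} (h1 : 1 ≤ r) (h : r ≤ r') :
    rowLen D r' ≤ rowLen D r := by
  rcases Nat.eq_zero_or_pos (rowLen D r') with h0 | hpos
  · omega
  · have hmem : (r', rowLen D r') ∈ D := (mem_iff_rowLen hD).2 ⟨by omega, hpos, le_refl _⟩
    have : (r, rowLen D r') ∈ D := (hD _ hmem).2.2 r (rowLen D r') h1 h hpos (le_refl _)
    exact ((mem_iff_rowLen hD).1 this).2.2

lemma colLen_antitone (hD : IsDiagram D) {c c' : ℕ} (h1 : 1 ≤ c) (h : c ≤ c') :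
    colLen D c' ≤ colLen D c := by
  rcases Nat.eq_zero_or_pos (colLen D c') with h0 | hpos
  · omega
  · have hmem : (colLen D c', c') ∈ D := (mem_iff_colLen hD).2 ⟨hpos, by omega, le_refl _⟩
    have : (colLen D c', c) ∈ D := (hD _ hmem).2.2 _ c hpos (le_refl _) h1 h
    exact ((mem_iff_colLen hD).1 this).2.2

lemma hookLength_pos {y : ℕ × ℕ} (h : y ∈ D) : 1 ≤ hookLength D y := by
  rw [Nat.succ_le_iff]
  apply Finset.card_pos.2
  exact ⟨y, Finset.mem_filter.2 ⟨h, Or.inl ⟨rfl, le_refl _⟩⟩⟩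

lemma corner_iff_nbrs (hD : IsDiagram D) {a b : ℕ} (hm : (a, b) ∈ D) :
    IsCornerBox D (a, b) ↔ (a, b + 1) ∉ D ∧ (a + 1, b) ∉ D := by
  have hbl : b ≤ rowLen D a := ((mem_iff_rowLen hD).1 hm).2.2
  have hal : a ≤ colLen D b := ((mem_iff_colLen hD).1 hm).2.2
  have h1 : 1 ≤ a := (hD _ hm).1
  have h2 : 1 ≤ b := (hD _ hm).2.1
  rw [isCorner_iff hD, mem_iff_rowLen hD (r := a) (c := b + 1),
    mem_iff_colLen hD (r := a + 1) (c := b)]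
  constructor
  · rintro ⟨-, hr, hc⟩
    exact ⟨fun h => by omega, fun h => by omega⟩
  · rintro ⟨hr, hc⟩
    exact ⟨hm, by omega, by omega⟩

lemma exists_corner (hD : IsDiagram D) (hne : D.Nonempty) :
    ∃ x, IsCornerBox D x := by
  obtain ⟨p, hp, hmax⟩ := D.exists_max_image (fun p => p.1 + p.2) hne
  refine ⟨(p.1, p.2), (corner_iff_nbrs hD (by simpa using hp)).2 ⟨fun h => ?_, fun h => ?_⟩⟩
  · have := hmax _ h; simp at this
  · have := hmax _ h; simp at this

lemma mem_of_corner_dominated (hD : IsDiagram D) {a b : ℕ} (hx : IsCornerBox D (a, b))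
    {c : ℕ × ℕ} (hc : c ∈ D) (h1 : a ≤ c.1) (h2 : b ≤ c.2) : c = (a, b) := by
  rcases (isCorner_iff hD).1 hx with ⟨hm, hra, hcb⟩
  have h1a : 1 ≤ a := (hD _ hm).1
  have hc2 : c.2 ≤ rowLen D c.1 := ((mem_iff_rowLen hD).1 (by rwa [← Prod.mk.eta (p := c)] at hc)).2.2
  have hrow : rowLen D c.1 ≤ rowLen D a := rowLen_antitone hD h1a h1
  have hc2b : c.2 = b := by omega
  have hc1' : c.1 ≤ colLen D c.2 := ((mem_iff_colLen hD).1 (by rwa [← Prod.mk.eta (p := c)] at hc)).2.2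
  rw [hc2b, hcb] at hc1'
  have : c.1 = a := by omega
  exact Prod.ext this hc2b

lemma erase_corner_diagram (hD : IsDiagram D) {x : ℕ × ℕ} (hx : IsCornerBox D x) :
    IsDiagram (D.erase x) := by
  intro c hc
  rcases Finset.mem_erase.1 hc with ⟨hne, hcD⟩
  refine ⟨(hD _ hcD).1, (hD _ hcD).2.1, fun i j hi hic hj hjc => ?_⟩
  have hij : (i, j) ∈ D := (hD _ hcD).2.2 i j hi hic hj hjc
  rw [Finset.mem_erase]
  refine ⟨fun hEq => ?_, hij⟩
  obtain ⟨a, b⟩ := x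
  have hia : i = a := congrArg Prod.fst hEq
  have hjb : j = b := congrArg Prod.snd hEq
  exact hne (mem_of_corner_dominated hD hx hcD (by omega) (by omega))

/-- Erasing a corner decreases by one exactly the hooks through its co-hook. -/
lemma hookLength_erase (hD : IsDiagram D) {x : ℕ × ℕ} (hx : IsCornerBox D x)
    {y : ℕ × ℕ} (hy : y ∈ D.erase x) :
    hookLength (D.erase x) y =
      if y ∈ coHook D x then hookLength D y - 1 else hookLength D y := by
  have hyne : y ≠ x := (Finset.mem_erase.1 hy).1
  have hyD : y ∈ D := (Finset.mem_erase.1 hy).2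
  unfold hookLength
  rw [Finset.filter_erase]
  by_cases hco : y ∈ coHook D x
  · rw [if_pos hco]
    rw [Finset.card_erase_of_mem]
    rcases Finset.mem_filter.1 hco with ⟨hxD', hcond⟩
    refine Finset.mem_filter.2 ⟨hx.1, ?_⟩
    rcases hcond with ⟨h1, h2⟩ | ⟨h1, h2⟩
    · exact Or.inl ⟨h1.symm, le_of_lt h2⟩
    · exact Or.inr ⟨h1.symm, le_of_lt h2⟩
  · rw [if_neg hco]
    rw [Finset.erase_eq_of_notMem]
    intro hmem
    rcases Finset.mem_filter.1 hmem with ⟨hxD, hcond⟩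
    refine hco (Finset.mem_filter.2 ⟨hyD, ?_⟩)
    rcases hcond with ⟨h1, h2⟩ | ⟨h1, h2⟩
    · refine Or.inl ⟨h1.symm, lt_of_le_of_ne h2 ?_⟩
      intro h
      exact hyne (Prod.ext h1.symm h)
    · refine Or.inr ⟨h1.symm, lt_of_le_of_ne h2 ?_⟩
      intro h
      exact hyne (Prod.ext h h1.symm)

lemma coHook_hook_ge_two (hD : IsDiagram D) {x : ℕ × ℕ} (hx : IsCornerBox D x)
    {y : ℕ × ℕ} (hy : y ∈ coHook D x) : 2 ≤ hookLength D y := by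
  rcases Finset.mem_filter.1 hy with ⟨hyD, hcond⟩
  have hyne : y ≠ x := by
    rintro rfl
    rcases hcond with ⟨-, h⟩ | ⟨-, h⟩ <;> omega
  have hxmem : x ∈ D.filter fun c => (c.1 = y.1 ∧ y.2 ≤ c.2) ∨ (c.2 = y.2 ∧ y.1 ≤ c.1) := by
    refine Finset.mem_filter.2 ⟨hx.1, ?_⟩
    rcases hcond with ⟨h1, h2⟩ | ⟨h1, h2⟩
    · exact Or.inl ⟨h1.symm, le_of_lt h2⟩
    · exact Or.inr ⟨h1.symm, le_of_lt h2⟩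
  have hymem : y ∈ D.filter fun c => (c.1 = y.1 ∧ y.2 ≤ c.2) ∨ (c.2 = y.2 ∧ y.1 ≤ c.1) :=
    Finset.mem_filter.2 ⟨hyD, Or.inl ⟨rfl, le_refl _⟩⟩
  unfold hookLength
  have hsub : ({x, y} : Finset (ℕ × ℕ)) ⊆
      D.filter fun c => (c.1 = y.1 ∧ y.2 ≤ c.2) ∨ (c.2 = y.2 ∧ y.1 ≤ c.1) := by
    intro z hz
    rcases Finset.mem_insert.1 hz with rfl | hz
    · exact hxmem
    · rwa [Finset.mem_singleton.1 hz]
  calc 2 = ({x, y} : Finset (ℕ × ℕ)).card := by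
        rw [Finset.card_insert_of_notMem (by simpa using (Ne.symm hyne)), Finset.card_singleton]
  _ ≤ _ := Finset.card_le_card hsub

/-! ### The Greene–Nijenhuis–Wilf machinery -/

/-- Real-valued hook length. -/
def hkR (D : Finset (ℕ × ℕ)) (p : ℕ × ℕ) : ℝ := (hookLength D p : ℝ)

/-- Row factor of the hook-walk generating function for target corner `(a,b)`. -/
def Rfun (D : Finset (ℕ × ℕ)) (a b : ℕ) (r : ℕ) : ℝ :=
  if r = a then 1
  else (hkR D (r, b) - 1)⁻¹ * ∏ i ∈ Finset.Ioo r a, (1 + (hkR D (i, b) - 1)⁻¹)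

/-- Column factor. -/
def Cfun (D : Finset (ℕ × ℕ)) (a b : ℕ) (c : ℕ) : ℝ :=
  if c = b then 1
  else (hkR D (a, c) - 1)⁻¹ * ∏ j ∈ Finset.Ioo c b, (1 + (hkR D (a, j) - 1)⁻¹)

/-- Hook-walk hitting function for target corner `(a,b)`. -/
def Efun (D : Finset (ℕ × ℕ)) (a b : ℕ) (p : ℕ × ℕ) : ℝ :=
  if p.1 ≤ a ∧ p.2 ≤ b then Rfun D a b p.1 * Cfun D a b p.2 else 0

section GNW

variable {D : Finset (ℕ × ℕ)} {a b : ℕ}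

lemma rect_mem (hD : IsDiagram D) (hx : (a, b) ∈ D) {r c : ℕ}
    (h1 : 1 ≤ r) (h2 : r ≤ a) (h3 : 1 ≤ c) (h4 : c ≤ b) : (r, c) ∈ D :=
  (hD _ hx).2.2 r c h1 h2 h3 h4

lemma coarm_mem (hD : IsDiagram D) (hx : IsCornerBox D (a, b)) {c : ℕ}
    (h3 : 1 ≤ c) (h4 : c < b) : (a, c) ∈ coHook D (a, b) := by
  refine Finset.mem_filter.2 ⟨rect_mem hD hx.1 (hD _ hx.1).1 le_rfl h3 (le_of_lt h4), ?_⟩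
  exact Or.inl ⟨rfl, h4⟩

lemma coleg_mem (hD : IsDiagram D) (hx : IsCornerBox D (a, b)) {r : ℕ}
    (h1 : 1 ≤ r) (h2 : r < a) : (r, b) ∈ coHook D (a, b) := by
  refine Finset.mem_filter.2 ⟨rect_mem hD hx.1 h1 (le_of_lt h2) (hD _ hx.1).2.1 le_rfl, ?_⟩
  exact Or.inr ⟨rfl, h2⟩

lemma coarm_hk (hD : IsDiagram D) (hx : IsCornerBox D (a, b)) {c : ℕ}
    (h3 : 1 ≤ c) (h4 : c < b) : 1 ≤ hkR D (a, c) - 1 := by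
  have := coHook_hook_ge_two hD hx (coarm_mem hD hx h3 h4)
  unfold hkR
  have : (2 : ℝ) ≤ (hookLength D (a, c) : ℝ) := by exact_mod_cast this
  linarith

lemma coleg_hk (hD : IsDiagram D) (hx : IsCornerBox D (a, b)) {r : ℕ}
    (h1 : 1 ≤ r) (h2 : r < a) : 1 ≤ hkR D (r, b) - 1 := by
  have := coHook_hook_ge_two hD hx (coleg_mem hD hx h1 h2)
  unfold hkR
  have : (2 : ℝ) ≤ (hookLength D (r, b) : ℝ) := by exact_mod_cast this
  linarith

/-- Telescoping sum for the column factors. -/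
lemma sumC (hD : IsDiagram D) (hx : IsCornerBox D (a, b)) :
    ∀ k c, b - c = k → c < b →
      ∑ j ∈ Finset.Ioc c b, Cfun D a b j =
        ∏ j ∈ Finset.Ioo c b, (1 + (hkR D (a, j) - 1)⁻¹) := by
  intro k
  induction k using Nat.strong_induction_on with
  | _ k IH =>
    intro c hk hcb
    rcases eq_or_lt_of_le (Nat.succ_le_of_lt hcb) with hsucc | hlt
    · -- c + 1 = b
      have hIoc : Finset.Ioc c b = {b} := by
        ext t; simp only [Finset.mem_Ioc, Finset.mem_singleton]; omega
      have hIoo : Finset.Ioo c b = ∅ := by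
        ext t; simp only [Finset.mem_Ioo, Finset.notMem_empty, iff_false]; omega
      rw [hIoc, hIoo, Finset.sum_singleton, Finset.prod_empty, Cfun, if_pos rfl]
    · -- c + 1 < b
      have hmemIoc : Finset.Ioc c b = insert (c + 1) (Finset.Ioc (c + 1) b) := by
        ext t; simp only [Finset.mem_Ioc, Finset.mem_insert]; omega
      have hmemIoo : Finset.Ioo c b = insert (c + 1) (Finset.Ioo (c + 1) b) := by
        ext t; simp only [Finset.mem_Ioo, Finset.mem_insert]; omega
      have hni : (c + 1) ∉ Finset.Ioc (c + 1) b := by simp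
      have hni' : (c + 1) ∉ Finset.Ioo (c + 1) b := by simp
      have IH' := IH (b - (c + 1)) (by omega) (c + 1) rfl (by omega)
      rw [hmemIoc, hmemIoo, Finset.sum_insert hni, Finset.prod_insert hni', IH']
      have hCc1 : Cfun D a b (c + 1) =
          (hkR D (a, c + 1) - 1)⁻¹ * ∏ j ∈ Finset.Ioo (c + 1) b, (1 + (hkR D (a, j) - 1)⁻¹) := by
        rw [Cfun, if_neg (by omega)]
      rw [hCc1]
      ring

/-- Telescoping sum for the row factors. -/
lemma sumR (hD : IsDiagram D) (hx : IsCornerBox D (a, b)) :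
    ∀ k r, a - r = k → r < a →
      ∑ i ∈ Finset.Ioc r a, Rfun D a b i =
        ∏ i ∈ Finset.Ioo r a, (1 + (hkR D (i, b) - 1)⁻¹) := by
  intro k
  induction k using Nat.strong_induction_on with
  | _ k IH =>
    intro r hk hra
    rcases eq_or_lt_of_le (Nat.succ_le_of_lt hra) with hsucc | hlt
    · have hIoc : Finset.Ioc r a = {a} := by
        ext t; simp only [Finset.mem_Ioc, Finset.mem_singleton]; omega
      have hIoo : Finset.Ioo r a = ∅ := by
        ext t; simp only [Finset.mem_Ioo, Finset.notMem_empty, iff_false]; omega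
      rw [hIoc, hIoo, Finset.sum_singleton, Finset.prod_empty, Rfun, if_pos rfl]
    · have hmemIoc : Finset.Ioc r a = insert (r + 1) (Finset.Ioc (r + 1) a) := by
        ext t; simp only [Finset.mem_Ioc, Finset.mem_insert]; omega
      have hmemIoo : Finset.Ioo r a = insert (r + 1) (Finset.Ioo (r + 1) a) := by
        ext t; simp only [Finset.mem_Ioo, Finset.mem_insert]; omega
      have hni : (r + 1) ∉ Finset.Ioc (r + 1) a := by simp
      have hni' : (r + 1) ∉ Finset.Ioo (r + 1) a := by simp
      have IH' := IH (a - (r + 1)) (by omega) (r + 1) rfl (by omega)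
      rw [hmemIoc, hmemIoo, Finset.sum_insert hni, Finset.prod_insert hni', IH']
      have hRr1 : Rfun D a b (r + 1) =
          (hkR D (r + 1, b) - 1)⁻¹ * ∏ i ∈ Finset.Ioo (r + 1) a, (1 + (hkR D (i, b) - 1)⁻¹) := by
        rw [Rfun, if_neg (by omega)]
      rw [hRr1]
      ring

/-- Sum of column factors equals hook ratio times the bottom factor. -/
lemma sumC' (hD : IsDiagram D) (hx : IsCornerBox D (a, b)) {c : ℕ} (h3 : 1 ≤ c) (h4 : c < b) :
    ∑ j ∈ Finset.Ioc c b, Cfun D a b j = (hkR D (a, c) - 1) * Cfun D a b c := by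
  rw [sumC hD hx (b - c) c rfl h4, Cfun, if_neg (by omega)]
  have h := coarm_hk hD hx h3 h4
  field_simp

lemma sumR' (hD : IsDiagram D) (hx : IsCornerBox D (a, b)) {r : ℕ} (h1 : 1 ≤ r) (h2 : r < a) :
    ∑ i ∈ Finset.Ioc r a, Rfun D a b i = (hkR D (r, b) - 1) * Rfun D a b r := by
  rw [sumR hD hx (a - r) r rfl h2, Rfun, if_neg (by omega)]
  have h := coleg_hk hD hx h1 h2
  field_simp

lemma hkR_sub_one (hD : IsDiagram D) {r c : ℕ} (hp : (r, c) ∈ D) :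
    hkR D (r, c) - 1 = ((rowLen D r - c) + (colLen D c - r) : ℕ) := by
  unfold hkR
  rw [hookLength_eq hD hp]
  push_cast
  ring

lemma hkR_corner (hx : IsCornerBox D (a, b)) : hkR D (a, b) = 1 := by
  unfold hkR
  rw [hx.2]
  norm_num

/-- The fundamental hook length identity behind the hook walk. -/
lemma hook_split (hD : IsDiagram D) (hx : IsCornerBox D (a, b)) {r c : ℕ}
    (hp : (r, c) ∈ D) (hra : r ≤ a) (hcb : c ≤ b) :
    hkR D (r, c) - 1 = (hkR D (r, b) - 1) + (hkR D (a, c) - 1) := by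
  have h1r : 1 ≤ r := (hD _ hp).1
  have h1c : 1 ≤ c := (hD _ hp).2.1
  have h1a : 1 ≤ a := (hD _ hx.1).1
  have h1b : 1 ≤ b := (hD _ hx.1).2.1
  have hrb : (r, b) ∈ D := rect_mem hD hx.1 h1r hra h1b le_rfl
  have hac : (a, c) ∈ D := rect_mem hD hx.1 h1a le_rfl h1c hcb
  rcases (isCorner_iff hD).1 hx with ⟨-, hrowa, hcolb⟩
  have hm1 : c ≤ rowLen D r := ((mem_iff_rowLen hD).1 hp).2.2
  have hm2 : r ≤ colLen D c := ((mem_iff_colLen hD).1 hp).2.2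
  have hm3 : rowLen D a ≤ rowLen D r := rowLen_antitone hD h1r hra
  have hm4 : colLen D b ≤ colLen D c := colLen_antitone hD h1c hcb
  rw [hkR_sub_one hD hp, hkR_sub_one hD hrb, hkR_sub_one hD hac]
  have : (rowLen D r - c) + (colLen D c - r) =
      ((rowLen D r - b) + (colLen D b - r)) + ((rowLen D a - c) + (colLen D c - a)) := by
    omega
  exact_mod_cast congrArg (Nat.cast : ℕ → ℝ) this

/-- The punctured hook of a box, as a disjoint union of segments. -/
lemma hook_erase (hD : IsDiagram D) {r c : ℕ} (hp : (r, c) ∈ D) :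
    (D.filter fun q => (q.1 = r ∧ c ≤ q.2) ∨ (q.2 = c ∧ r ≤ q.1)).erase (r, c) =
      ((Finset.Ioc c (rowLen D r)).image fun j => (r, j)) ∪
      ((Finset.Ioc r (colLen D c)).image fun i => (i, c)) := by
  rw [hook_eq hD hp]
  ext ⟨u, v⟩
  simp only [Finset.mem_erase, Finset.mem_union, Finset.mem_image, Finset.mem_Icc,
    Finset.mem_Ioc, Prod.mk.injEq, ne_eq]
  have hm1 : c ≤ rowLen D r := ((mem_iff_rowLen hD).1 hp).2.2
  have hm2 : r ≤ colLen D c := ((mem_iff_colLen hD).1 hp).2.2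
  constructor
  · rintro ⟨hne, (⟨j, ⟨hj1, hj2⟩, rfl, rfl⟩ | ⟨i, ⟨hi1, hi2⟩, rfl, rfl⟩)⟩
    · refine Or.inl ⟨j, ⟨?_, hj2⟩, rfl, rfl⟩
      rcases Nat.lt_or_ge c j with h | h
      · exact h
      · exact absurd (by omega : j = c) (fun hh => hne (by simp [hh]))
    · rcases Nat.lt_or_ge r i with h | h
      · exact Or.inr ⟨i, ⟨h, hi2⟩, rfl, rfl⟩
      · exact absurd (by omega : i = r) (fun hh => (hne (by simp [hh])).elim)
  · rintro (⟨j, ⟨hj1, hj2⟩, rfl, rfl⟩ | ⟨i, ⟨hi1, hi2⟩, rfl, rfl⟩)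
    · exact ⟨by simp; omega, Or.inl ⟨j, ⟨by omega, hj2⟩, rfl, rfl⟩⟩
    · exact ⟨by simp; omega, Or.inr ⟨i, ⟨by omega, hi2⟩, rfl, rfl⟩⟩

lemma Efun_corner_self (hx : IsCornerBox D (a, b)) : Efun D a b (a, b) = 1 := by
  rw [Efun, if_pos ⟨le_rfl, le_rfl⟩, Rfun, if_pos rfl, Cfun, if_pos rfl]
  norm_num

lemma Efun_corner_other (hD : IsDiagram D) (hx : IsCornerBox D (a, b)) {r c : ℕ}
    (hp : IsCornerBox D (r, c)) (hne : (r, c) ≠ (a, b)) : Efun D a b (r, c) = 0 := by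
  rw [Efun, if_neg]
  rintro ⟨h1, h2⟩
  rcases (isCorner_iff hD).1 hx with ⟨hmx, hrowa, hcolb⟩
  rcases (isCorner_iff hD).1 hp with ⟨hmp, hrowr, hcolc⟩
  have h1r : 1 ≤ r := (hD _ hmp).1
  have hm3 : rowLen D a ≤ rowLen D r := rowLen_antitone hD h1r h1
  have hcb : c = b := by omega
  subst hcb
  exact hne (Prod.ext (by omega) rfl)

/-- The hook-walk recursion for `Efun`. -/
lemma E_recursion (hD : IsDiagram D) (hx : IsCornerBox D (a, b)) {r c : ℕ}
    (hp : (r, c) ∈ D) :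
    ∑ y ∈ (D.filter fun q =>
        (q.1 = r ∧ c ≤ q.2) ∨ (q.2 = c ∧ r ≤ q.1)).erase (r, c), Efun D a b y =
      (hkR D (r, c) - 1) * Efun D a b (r, c) := by
  have h1r : 1 ≤ r := (hD _ hp).1
  have h1c : 1 ≤ c := (hD _ hp).2.1
  rw [hook_erase hD hp]
  have hdisj : Disjoint ((Finset.Ioc c (rowLen D r)).image fun j => (r, j))
      ((Finset.Ioc r (colLen D c)).image fun i => (i, c)) := by
    rw [Finset.disjoint_left]
    rintro ⟨u, v⟩ h1 h2
    simp only [Finset.mem_image, Finset.mem_Ioc, Prod.mk.injEq] at h1 h2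
    obtain ⟨j, hj, rfl, rfl⟩ := h1
    obtain ⟨i, hi, rfl, hic⟩ := h2
    omega
  rw [Finset.sum_union hdisj,
    Finset.sum_image (by intro p hp' q hq' h; simpa using h),
    Finset.sum_image (by intro p hp' q hq' h; simpa using h)]
  by_cases hra : r ≤ a
  · by_cases hcb : c ≤ b
    · -- main case
      have hE : Efun D a b (r, c) = Rfun D a b r * Cfun D a b c := by
        rw [Efun, if_pos ⟨hra, hcb⟩]
      have hble : b ≤ rowLen D r :=
        le_trans (le_of_eq ((isCorner_iff hD).1 hx).2.1.symm) (rowLen_antitone hD h1r hra)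
      have hale : a ≤ colLen D c :=
        le_trans (le_of_eq ((isCorner_iff hD).1 hx).2.2.symm) (colLen_antitone hD h1c hcb)
      have hrow : ∑ j ∈ Finset.Ioc c (rowLen D r), Efun D a b (r, j) =
          (hkR D (a, c) - 1) * (Rfun D a b r * Cfun D a b c) := by
        rcases eq_or_lt_of_le hcb with hceq | hclt
        · -- c = b : all terms vanish, and the factor vanishes
          have hz : ∀ j ∈ Finset.Ioc c (rowLen D r), Efun D a b (r, j) = 0 := by
            intro j hj
            rw [Efun, if_neg]
            rintro ⟨-, hjb⟩
            rcases Finset.mem_Ioc.1 hj with ⟨hj1, -⟩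
            omega
          rw [Finset.sum_eq_zero hz, hceq, hkR_corner hx]
          ring
        · have hdis : Disjoint (Finset.Ioc c b) (Finset.Ioc b (rowLen D r)) := by
            rw [Finset.disjoint_left]
            intro t h1 h2
            rcases Finset.mem_Ioc.1 h1 with ⟨-, h1'⟩
            rcases Finset.mem_Ioc.1 h2 with ⟨h2', -⟩
            omega
          rw [← Finset.Ioc_union_Ioc_eq_Ioc hcb hble, Finset.sum_union hdis]
          have h2 : ∑ j ∈ Finset.Ioc b (rowLen D r), Efun D a b (r, j) = 0 := by
            apply Finset.sum_eq_zero
            intro j hj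
            rw [Efun, if_neg]
            rintro ⟨-, hjb⟩
            rcases Finset.mem_Ioc.1 hj with ⟨hj1, -⟩
            omega
          have h1 : ∑ j ∈ Finset.Ioc c b, Efun D a b (r, j) =
              Rfun D a b r * ∑ j ∈ Finset.Ioc c b, Cfun D a b j := by
            rw [Finset.mul_sum]
            apply Finset.sum_congr rfl
            intro j hj
            rcases Finset.mem_Ioc.1 hj with ⟨-, hjb⟩
            rw [Efun, if_pos ⟨hra, hjb⟩]
          rw [h1, h2, sumC' hD hx h1c hclt]
          ring
      have hcol : ∑ i ∈ Finset.Ioc r (colLen D c), Efun D a b (i, c) =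
          (hkR D (r, b) - 1) * (Rfun D a b r * Cfun D a b c) := by
        rcases eq_or_lt_of_le hra with hreq | hrlt
        · have hz : ∀ i ∈ Finset.Ioc r (colLen D c), Efun D a b (i, c) = 0 := by
            intro i hi
            rw [Efun, if_neg]
            rintro ⟨hia, -⟩
            rcases Finset.mem_Ioc.1 hi with ⟨hi1, -⟩
            omega
          rw [Finset.sum_eq_zero hz, hreq, hkR_corner hx]
          ring
        · have hdis : Disjoint (Finset.Ioc r a) (Finset.Ioc a (colLen D c)) := by
            rw [Finset.disjoint_left]
            intro t h1 h2
            rcases Finset.mem_Ioc.1 h1 with ⟨-, h1'⟩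
            rcases Finset.mem_Ioc.1 h2 with ⟨h2', -⟩
            omega
          rw [← Finset.Ioc_union_Ioc_eq_Ioc hra hale, Finset.sum_union hdis]
          have h2 : ∑ i ∈ Finset.Ioc a (colLen D c), Efun D a b (i, c) = 0 := by
            apply Finset.sum_eq_zero
            intro i hi
            rw [Efun, if_neg]
            rintro ⟨hia, -⟩
            rcases Finset.mem_Ioc.1 hi with ⟨hi1, -⟩
            omega
          have h1 : ∑ i ∈ Finset.Ioc r a, Efun D a b (i, c) =
              Cfun D a b c * ∑ i ∈ Finset.Ioc r a, Rfun D a b i := by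
            rw [Finset.mul_sum]
            apply Finset.sum_congr rfl
            intro i hi
            rcases Finset.mem_Ioc.1 hi with ⟨-, hia⟩
            rw [Efun, if_pos ⟨hia, hcb⟩]
            ring
          rw [h1, h2, sumR' hD hx h1r hrlt]
          ring
      rw [hrow, hcol, hE, hook_split hD hx hp hra hcb]
      ring
    · -- c > b : everything vanishes
      push_neg at hcb
      have hE : Efun D a b (r, c) = 0 := by
        rw [Efun, if_neg]; rintro ⟨-, h⟩; omega
      have h2 : ∑ j ∈ Finset.Ioc c (rowLen D r), Efun D a b (r, j) = 0 := by
        apply Finset.sum_eq_zero; intro j hj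
        rw [Efun, if_neg]; rintro ⟨-, h⟩
        rcases Finset.mem_Ioc.1 hj with ⟨hj1, -⟩; omega
      have h3 : ∑ i ∈ Finset.Ioc r (colLen D c), Efun D a b (i, c) = 0 := by
        apply Finset.sum_eq_zero; intro i hi
        rw [Efun, if_neg]; rintro ⟨-, h⟩; omega
      rw [hE, h2, h3]; ring
  · -- r > a : everything vanishes
    push_neg at hra
    have hE : Efun D a b (r, c) = 0 := by
      rw [Efun, if_neg]; rintro ⟨h, -⟩; omega
    have h2 : ∑ j ∈ Finset.Ioc c (rowLen D r), Efun D a b (r, j) = 0 := by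
      apply Finset.sum_eq_zero; intro j hj
      rw [Efun, if_neg]; rintro ⟨h, -⟩; omega
    have h3 : ∑ i ∈ Finset.Ioc r (colLen D c), Efun D a b (i, c) = 0 := by
      apply Finset.sum_eq_zero; intro i hi
      rw [Efun, if_neg]; rintro ⟨h, -⟩
      rcases Finset.mem_Ioc.1 hi with ⟨hi1, -⟩; omega
    rw [hE, h2, h3]; ring

/-- Summing `Efun` over all corners gives `1` at every cell. -/
lemma sum_corners_E (hD : IsDiagram D) :
    ∀ p ∈ D, ∑ x ∈ D.filter (fun x => hookLength D x = 1), Efun D x.1 x.2 p = 1 := by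
  classical
  set B := D.sup (fun q => q.1 + q.2) with hB
  suffices H : ∀ k, ∀ p ∈ D, B - (p.1 + p.2) = k →
      ∑ x ∈ D.filter (fun x => hookLength D x = 1), Efun D x.1 x.2 p = 1 by
    intro p hp
    exact H _ p hp rfl
  intro k
  induction k using Nat.strong_induction_on with
  | _ k IH =>
    rintro ⟨r, c⟩ hp hk
    by_cases hcp : hookLength D (r, c) = 1
    · -- `p` is itself a corner
      have hpcorner : IsCornerBox D (r, c) := ⟨hp, hcp⟩
      rw [Finset.sum_eq_single_of_mem (r, c) (Finset.mem_filter.2 ⟨hp, hcp⟩)]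
      · exact Efun_corner_self hpcorner
      · rintro ⟨u, v⟩ hx hne
        rcases Finset.mem_filter.1 hx with ⟨hxD, hx1⟩
        exact Efun_corner_other hD ⟨hxD, hx1⟩ hpcorner (Ne.symm hne)
    · -- non-corner: use the recursion
      have hk2 : 2 ≤ hookLength D (r, c) := by
        have := hookLength_pos hp
        omega
      have hk2R : (1 : ℝ) ≤ hkR D (r, c) - 1 := by
        unfold hkR
        have : (2 : ℝ) ≤ (hookLength D (r, c) : ℝ) := by exact_mod_cast hk2
        linarith
      have hkne : hkR D (r, c) - 1 ≠ 0 := by linarith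
      set S := (D.filter fun q =>
          (q.1 = r ∧ c ≤ q.2) ∨ (q.2 = c ∧ r ≤ q.1)).erase (r, c) with hS
      have hcardS : (S.card : ℝ) = hkR D (r, c) - 1 := by
        rw [hS, Finset.card_erase_of_mem
          (Finset.mem_filter.2 ⟨hp, Or.inl ⟨rfl, le_refl _⟩⟩)]
        unfold hkR hookLength
        have h1 := hookLength_pos hp
        unfold hookLength at h1
        push_cast [Nat.cast_sub h1]
        ring
      have hyfacts : ∀ y ∈ S, y ∈ D ∧ r + c < y.1 + y.2 := by
        rintro ⟨u, v⟩ hy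
        rcases Finset.mem_erase.1 hy with ⟨hne, hyf⟩
        rcases Finset.mem_filter.1 hyf with ⟨hyD, hcond⟩
        refine ⟨hyD, ?_⟩
        rcases hcond with ⟨h1, h2⟩ | ⟨h1, h2⟩
        · subst h1
          have : v ≠ c := fun h => hne (by rw [h])
          omega
        · subst h1
          have : u ≠ r := fun h => hne (by rw [h])
          omega
      have hIH : ∀ y ∈ S, ∑ x ∈ D.filter (fun x => hookLength D x = 1),
          Efun D x.1 x.2 y = 1 := by
        intro y hy
        rcases hyfacts y hy with ⟨hyD, hlt⟩
        have hyB : y.1 + y.2 ≤ B := Finset.le_sup (f := fun q => q.1 + q.2) hyD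
        have hpB : r + c ≤ B := Finset.le_sup (f := fun q => (q.1 + q.2)) hp
        have := IH (B - (y.1 + y.2)) (by omega) ⟨y.1, y.2⟩ (by simpa using hyD) (by simp)
        simpa using this
      have hrec : ∀ x ∈ D.filter (fun x => hookLength D x = 1),
          Efun D x.1 x.2 (r, c) = (hkR D (r, c) - 1)⁻¹ * ∑ y ∈ S, Efun D x.1 x.2 y := by
        intro x hx
        rcases Finset.mem_filter.1 hx with ⟨hxD, hx1⟩
        have hxco : IsCornerBox D (x.1, x.2) := ⟨by simpa using hxD, by simpa using hx1⟩
        have h := E_recursion hD hxco hp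
        rw [← hS] at h
        rw [h, inv_mul_cancel_left₀ hkne]
      rw [Finset.sum_congr rfl hrec, ← Finset.mul_sum, Finset.sum_comm]
      rw [Finset.sum_congr rfl hIH, Finset.sum_const, nsmul_eq_mul, mul_one, hcardS]
      field_simp

/-- The co-hook of a corner decomposes into a row and a column segment. -/
lemma coHook_decomp (hD : IsDiagram D) (hx : IsCornerBox D (a, b)) :
    coHook D (a, b) = ((Finset.Ioo 0 b).image fun j => (a, j)) ∪
      ((Finset.Ioo 0 a).image fun i => (i, b)) := by
  have h1a : 1 ≤ a := (hD _ hx.1).1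
  have h1b : 1 ≤ b := (hD _ hx.1).2.1
  ext ⟨u, v⟩
  simp only [coHook, Finset.mem_filter, Finset.mem_union, Finset.mem_image, Finset.mem_Ioo,
    Prod.mk.injEq]
  constructor
  · rintro ⟨hm, (⟨h1, h2⟩ | ⟨h1, h2⟩)⟩
    · exact Or.inl ⟨v, ⟨(hD _ hm).2.1, h2⟩, h1.symm, rfl⟩
    · exact Or.inr ⟨u, ⟨(hD _ hm).1, h2⟩, rfl, h1.symm⟩
  · rintro (⟨j, ⟨hj1, hj2⟩, rfl, rfl⟩ | ⟨i, ⟨hi1, hi2⟩, rfl, rfl⟩)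
    · exact ⟨rect_mem hD hx.1 h1a le_rfl hj1 (le_of_lt hj2), Or.inl ⟨rfl, hj2⟩⟩
    · exact ⟨rect_mem hD hx.1 hi1 (le_of_lt hi2) h1b le_rfl, Or.inr ⟨rfl, hi2⟩⟩

/-- The co-hook product as a product of the two telescoping products. -/
lemma prod_coHook (hD : IsDiagram D) (hx : IsCornerBox D (a, b)) :
    ∏ y ∈ coHook D (a, b), (hkR D y / (hkR D y - 1)) =
      (∏ i ∈ Finset.Ioo 0 a, (1 + (hkR D (i, b) - 1)⁻¹)) *
      (∏ j ∈ Finset.Ioo 0 b, (1 + (hkR D (a, j) - 1)⁻¹)) := by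
  rw [coHook_decomp hD hx]
  have hdisj : Disjoint ((Finset.Ioo 0 b).image fun j => (a, j))
      ((Finset.Ioo 0 a).image fun i => (i, b)) := by
    rw [Finset.disjoint_left]
    rintro ⟨u, v⟩ h1 h2
    simp only [Finset.mem_image, Finset.mem_Ioo, Prod.mk.injEq] at h1 h2
    obtain ⟨j, hj, rfl, rfl⟩ := h1
    obtain ⟨i, hi, rfl, hjb⟩ := h2
    omega
  rw [Finset.prod_union hdisj,
    Finset.prod_image (by intro p hp' q hq' h; simpa using h),
    Finset.prod_image (by intro p hp' q hq' h; simpa using h)]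
  rw [mul_comm]
  congr 1
  · apply Finset.prod_congr rfl
    intro i hi
    rcases Finset.mem_Ioo.1 hi with ⟨hi1, hi2⟩
    have h := coleg_hk hD hx hi1 hi2
    rw [div_eq_iff (by linarith : hkR D (i, b) - 1 ≠ 0)]
    have h2 : hkR D (i, b) - 1 ≠ 0 := by linarith
    field_simp
    ring
  · apply Finset.prod_congr rfl
    intro j hj
    rcases Finset.mem_Ioo.1 hj with ⟨hj1, hj2⟩
    have h := coarm_hk hD hx hj1 hj2
    rw [div_eq_iff (by linarith : hkR D (a, j) - 1 ≠ 0)]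
    have h2 : hkR D (a, j) - 1 ≠ 0 := by linarith
    field_simp
    ring

/-- Summing `Efun` over all the cells of the diagram gives the co-hook product. -/
lemma sum_cells_E (hD : IsDiagram D) (hx : IsCornerBox D (a, b)) :
    ∑ p ∈ D, Efun D a b p = ∏ y ∈ coHook D (a, b), (hkR D y / (hkR D y - 1)) := by
  have h1a : 1 ≤ a := (hD _ hx.1).1
  have h1b : 1 ≤ b := (hD _ hx.1).2.1
  have hsub : (Finset.Icc 1 a ×ˢ Finset.Icc 1 b) ⊆ D := by
    rintro ⟨u, v⟩ hm
    rcases Finset.mem_product.1 hm with ⟨h1, h2⟩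
    rcases Finset.mem_Icc.1 h1 with ⟨h11, h12⟩
    rcases Finset.mem_Icc.1 h2 with ⟨h21, h22⟩
    exact rect_mem hD hx.1 h11 h12 h21 h22
  have hvanish : ∀ p ∈ D, p ∉ (Finset.Icc 1 a ×ˢ Finset.Icc 1 b) → Efun D a b p = 0 := by
    rintro ⟨u, v⟩ hm hnm
    rw [Efun, if_neg]
    rintro ⟨h1, h2⟩
    exact hnm (Finset.mem_product.2 ⟨Finset.mem_Icc.2 ⟨(hD _ hm).1, h1⟩,
      Finset.mem_Icc.2 ⟨(hD _ hm).2.1, h2⟩⟩)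
  rw [← Finset.sum_subset hsub hvanish]
  have : ∀ p ∈ (Finset.Icc 1 a ×ˢ Finset.Icc 1 b),
      Efun D a b p = Rfun D a b p.1 * Cfun D a b p.2 := by
    rintro ⟨u, v⟩ hm
    rcases Finset.mem_product.1 hm with ⟨h1, h2⟩
    rw [Efun, if_pos ⟨(Finset.mem_Icc.1 h1).2, (Finset.mem_Icc.1 h2).2⟩]
  rw [Finset.sum_congr rfl this, Finset.sum_product, prod_coHook hD hx]
  have hsums : ∀ u, ∑ v ∈ Finset.Icc 1 b, Rfun D a b u * Cfun D a b v =
      Rfun D a b u * ∑ v ∈ Finset.Icc 1 b, Cfun D a b v := by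
    intro u
    rw [Finset.mul_sum]
  rw [Finset.sum_congr rfl (fun u _ => hsums u), ← Finset.sum_mul]
  have hIcc_a : Finset.Icc 1 a = Finset.Ioc 0 a := rfl
  have hIcc_b : Finset.Icc 1 b = Finset.Ioc 0 b := rfl
  rw [hIcc_a, hIcc_b, sumR hD hx (a - 0) 0 rfl (by omega), sumC hD hx (b - 0) 0 rfl (by omega)]

/-- **The Greene–Nijenhuis–Wilf identity**. -/
lemma gnw_star (hD : IsDiagram D) :
    ∑ x ∈ D.filter (fun x => hookLength D x = 1),
      ∏ y ∈ coHook D x, (hkR D y / (hkR D y - 1)) = (D.card : ℝ) := by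
  have h1 : ∀ x ∈ D.filter (fun x => hookLength D x = 1),
      ∏ y ∈ coHook D x, (hkR D y / (hkR D y - 1)) = ∑ p ∈ D, Efun D x.1 x.2 p := by
    intro x hx
    rcases Finset.mem_filter.1 hx with ⟨hxD, hx1⟩
    have hxco : IsCornerBox D (x.1, x.2) := ⟨by simpa using hxD, by simpa using hx1⟩
    rw [← sum_cells_E hD hxco]
  rw [Finset.sum_congr rfl h1, Finset.sum_comm,
    Finset.sum_congr rfl (sum_corners_E hD), Finset.sum_const, nsmul_eq_mul, mul_one]

end GNW

/-! ### Counting standard Young tableaux -/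

section SYT

variable {D : Finset (ℕ × ℕ)}

lemma syt_finite (D : Finset (ℕ × ℕ)) : Finite {T : ℕ × ℕ → ℕ // IsSYT D T} := by
  classical
  let F : {T : ℕ × ℕ → ℕ // IsSYT D T} → (↥D → ↥(Finset.Icc 1 D.card)) := fun T p =>
    ⟨T.1 p.1, by
      have := T.2.1.mapsTo (by exact_mod_cast p.2 : (p.1 : ℕ × ℕ) ∈ (↑D : Set (ℕ × ℕ)))
      exact_mod_cast this⟩
  have hinj : Function.Injective F := by
    rintro ⟨T1, h1⟩ ⟨T2, h2⟩ h
    ext p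
    by_cases hp : p ∈ D
    · have := congrFun h ⟨p, hp⟩
      simpa [F] using this
    · show T1 p = T2 p
      rw [h1.2.1 p hp, h2.2.1 p hp]
  exact Finite.of_injective F hinj

lemma dimYD_empty : dimYD (∅ : Finset (ℕ × ℕ)) = 1 := by
  have h0 : IsSYT (∅ : Finset (ℕ × ℕ)) (fun _ => 0) := by
    refine ⟨?_, fun x _ => rfl, fun i j h => by simp at h, fun i j h => by simp at h⟩
    simp [Set.BijOn]
  have huniq : ∀ T : ℕ × ℕ → ℕ, IsSYT (∅ : Finset (ℕ × ℕ)) T → T = fun _ => 0 := by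
    intro T hT
    funext p
    exact hT.2.1 p (by simp)
  unfold dimYD
  rw [Nat.card_eq_one_iff_unique]
  constructor
  · constructor
    rintro ⟨T1, h1⟩ ⟨T2, h2⟩
    apply Subtype.ext
    show T1 = T2
    rw [huniq T1 h1, huniq T2 h2]
  · exact ⟨⟨fun _ => 0, h0⟩⟩

/-- In a SYT, the maximal entry sits at a corner. -/
lemma max_entry_corner (hD : IsDiagram D) {T : ℕ × ℕ → ℕ} (hT : IsSYT D T)
    {x : ℕ × ℕ} (hx : x ∈ D) (hval : T x = D.card) : IsCornerBox D x := by
  obtain ⟨x1, x2⟩ := x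
  rw [corner_iff_nbrs hD hx]
  constructor
  · intro hmem
    have h1 : T (x1, x2) < T (x1, x2 + 1) := hT.2.2.1 x1 x2 hx hmem
    have h2 : T (x1, x2 + 1) ∈ (Finset.Icc 1 D.card : Finset ℕ) := by
      have := hT.1.mapsTo (by exact_mod_cast hmem : ((x1, x2 + 1) : ℕ × ℕ) ∈ (↑D : Set (ℕ × ℕ)))
      exact_mod_cast this
    rw [hval] at h1
    rcases Finset.mem_Icc.1 h2 with ⟨-, h3⟩
    omega
  · intro hmem
    have h1 : T (x1, x2) < T (x1 + 1, x2) := hT.2.2.2 x1 x2 hx hmem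
    have h2 : T (x1 + 1, x2) ∈ (Finset.Icc 1 D.card : Finset ℕ) := by
      have := hT.1.mapsTo (by exact_mod_cast hmem : ((x1 + 1, x2) : ℕ × ℕ) ∈ (↑D : Set (ℕ × ℕ)))
      exact_mod_cast this
    rw [hval] at h1
    rcases Finset.mem_Icc.1 h2 with ⟨-, h3⟩
    omega

lemma exists_max_cell (hT : IsSYT D T) (hne : D.Nonempty) :
    ∃ x ∈ D, T x = D.card := by
  have hcard : 1 ≤ D.card := Finset.card_pos.2 hne
  have : (D.card : ℕ) ∈ (Finset.Icc 1 D.card : Finset ℕ) := Finset.mem_Icc.2 ⟨hcard, le_rfl⟩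
  obtain ⟨x, hx, hval⟩ := hT.1.2.2 (by exact_mod_cast this)
  exact ⟨x, by exact_mod_cast hx, hval⟩

/-- Removing the maximal entry of a SYT. -/
lemma syt_erase (hD : IsDiagram D) {x : ℕ × ℕ} (hx : IsCornerBox D x)
    {T : ℕ × ℕ → ℕ} (hT : IsSYT D T) (hval : T x = D.card) :
    IsSYT (D.erase x) (Function.update T x 0) := by
  classical
  have hxD : x ∈ D := hx.1
  have hcard : 1 ≤ D.card := Finset.card_pos.2 ⟨x, hxD⟩
  have hcard' : (D.erase x).card = D.card - 1 := Finset.card_erase_of_mem hxD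
  have hupd : ∀ p ∈ D.erase x, Function.update T x 0 p = T p := by
    intro p hp
    exact Function.update_of_ne (Finset.mem_erase.1 hp).1 _ _
  refine ⟨⟨?_, ?_, ?_⟩, ?_, ?_, ?_⟩
  · -- maps to
    intro p hp
    have hp' : p ∈ D.erase x := by exact_mod_cast hp
    have hpD : p ∈ D := (Finset.mem_erase.1 hp').2
    have hmem : T p ∈ (Finset.Icc 1 D.card : Finset ℕ) := by
      have := hT.1.mapsTo (by exact_mod_cast hpD : p ∈ (↑D : Set (ℕ × ℕ)))
      exact_mod_cast this
    have hne : T p ≠ D.card := by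
      intro h
      exact (Finset.mem_erase.1 hp').1
        (hT.1.2.1 (by exact_mod_cast hpD) (by exact_mod_cast hxD) (by rw [h, hval]))
    rcases Finset.mem_Icc.1 hmem with ⟨h1, h2⟩
    have : Function.update T x 0 p = T p := hupd p hp'
    rw [this]
    simp only [Finset.coe_Icc, Set.mem_Icc, hcard']
    omega
  · -- inj on
    intro p hp q hq h
    have hp' : p ∈ D.erase x := by exact_mod_cast hp
    have hq' : q ∈ D.erase x := by exact_mod_cast hq
    rw [hupd p hp', hupd q hq'] at h
    exact hT.1.2.1 (by exact_mod_cast (Finset.mem_erase.1 hp').2)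
      (by exact_mod_cast (Finset.mem_erase.1 hq').2) h
  · -- surj on
    intro v hv
    simp only [Finset.coe_Icc, Set.mem_Icc, hcard'] at hv
    have hv' : v ∈ (Finset.Icc 1 D.card : Set ℕ) := by
      simp only [Finset.coe_Icc, Set.mem_Icc]
      omega
    obtain ⟨p, hp, hpv⟩ := hT.1.2.2 hv'
    have hpD : p ∈ D := by exact_mod_cast hp
    have hpne : p ≠ x := by
      intro h
      rw [h, hval] at hpv
      omega
    refine ⟨p, ?_, ?_⟩
    · exact_mod_cast Finset.mem_erase.2 ⟨hpne, hpD⟩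
    · rw [Function.update_of_ne hpne]
      exact hpv
  · -- zero off
    intro p hp
    by_cases hpx : p = x
    · rw [hpx, Function.update_self]
    · rw [Function.update_of_ne hpx]
      exact hT.2.1 p (fun h => hp (Finset.mem_erase.2 ⟨hpx, h⟩))
  · -- rows
    intro i j h1 h2
    rw [hupd _ h1, hupd _ h2]
    exact hT.2.2.1 i j (Finset.mem_erase.1 h1).2 (Finset.mem_erase.1 h2).2
  · -- cols
    intro i j h1 h2
    rw [hupd _ h1, hupd _ h2]
    exact hT.2.2.2 i j (Finset.mem_erase.1 h1).2 (Finset.mem_erase.1 h2).2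

/-- Inserting a maximal entry at a corner. -/
lemma syt_insert (hD : IsDiagram D) {x : ℕ × ℕ} (hx : IsCornerBox D x)
    {T' : ℕ × ℕ → ℕ} (hT' : IsSYT (D.erase x) T') :
    IsSYT D (Function.update T' x D.card) := by
  classical
  have hxD : x ∈ D := hx.1
  have hcard : 1 ≤ D.card := Finset.card_pos.2 ⟨x, hxD⟩
  have hcard' : (D.erase x).card = D.card - 1 := Finset.card_erase_of_mem hxD
  have hval' : ∀ p ∈ D.erase x, T' p ∈ Finset.Icc 1 (D.card - 1) := by
    intro p hp
    have := hT'.1.mapsTo (by exact_mod_cast hp : p ∈ (↑(D.erase x) : Set (ℕ × ℕ)))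
    rw [hcard'] at this
    exact_mod_cast this
  refine ⟨⟨?_, ?_, ?_⟩, ?_, ?_, ?_⟩
  · intro p hp
    have hpD : p ∈ D := by exact_mod_cast hp
    by_cases hpx : p = x
    · rw [hpx, Function.update_self]
      simp only [Finset.coe_Icc, Set.mem_Icc]
      omega
    · rw [Function.update_of_ne hpx]
      have := hval' p (Finset.mem_erase.2 ⟨hpx, hpD⟩)
      rcases Finset.mem_Icc.1 this with ⟨h1, h2⟩
      simp only [Finset.coe_Icc, Set.mem_Icc]
      omega
  · intro p hp q hq h
    have hpD : p ∈ D := by exact_mod_cast hp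
    have hqD : q ∈ D := by exact_mod_cast hq
    by_cases hpx : p = x <;> by_cases hqx : q = x
    · rw [hpx, hqx]
    · exfalso
      rw [hpx, Function.update_self, Function.update_of_ne hqx] at h
      have := hval' q (Finset.mem_erase.2 ⟨hqx, hqD⟩)
      rcases Finset.mem_Icc.1 this with ⟨-, h2⟩
      omega
    · exfalso
      rw [hqx, Function.update_self, Function.update_of_ne hpx] at h
      have := hval' p (Finset.mem_erase.2 ⟨hpx, hpD⟩)
      rcases Finset.mem_Icc.1 this with ⟨-, h2⟩
      omega
    · rw [Function.update_of_ne hpx, Function.update_of_ne hqx] at h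
      exact hT'.1.2.1 (by exact_mod_cast Finset.mem_erase.2 ⟨hpx, hpD⟩)
        (by exact_mod_cast Finset.mem_erase.2 ⟨hqx, hqD⟩) h
  · intro v hv
    simp only [Finset.coe_Icc, Set.mem_Icc] at hv
    by_cases hvn : v = D.card
    · exact ⟨x, by exact_mod_cast hxD, by rw [Function.update_self, hvn]⟩
    · have : v ∈ (Finset.Icc 1 (D.erase x).card : Set ℕ) := by
        simp only [Finset.coe_Icc, Set.mem_Icc, hcard']
        omega
      obtain ⟨p, hp, hpv⟩ := hT'.1.2.2 this
      have hp' : p ∈ D.erase x := by exact_mod_cast hp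
      refine ⟨p, by exact_mod_cast (Finset.mem_erase.1 hp').2, ?_⟩
      rw [Function.update_of_ne (Finset.mem_erase.1 hp').1]
      exact hpv
  · intro p hp
    have hpx : p ≠ x := fun h => hp (h ▸ hxD)
    rw [Function.update_of_ne hpx]
    exact hT'.2.1 p (fun h => hp (Finset.mem_erase.1 h).2)
  · intro i j h1 h2
    by_cases h2x : (i, j + 1) = x
    · have h1x : (i, j) ≠ x := fun h => by
        rw [← h2x] at h
        exact absurd (congrArg Prod.snd h) (by omega)
      rw [h2x, Function.update_self, Function.update_of_ne h1x]
      have h1' : (i, j) ∈ D.erase x := Finset.mem_erase.2 ⟨h1x, h1⟩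
      have := hval' _ h1'
      rcases Finset.mem_Icc.1 this with ⟨-, hle⟩
      omega
    · by_cases h1x : (i, j) = x
      · exfalso
        obtain ⟨x1, x2⟩ := x
        have hi : i = x1 := congrArg Prod.fst h1x
        have hj : j = x2 := congrArg Prod.snd h1x
        subst hi; subst hj
        exact ((corner_iff_nbrs hD h1).1 hx).1 h2
      · rw [Function.update_of_ne h1x, Function.update_of_ne h2x]
        exact hT'.2.2.1 i j (Finset.mem_erase.2 ⟨h1x, h1⟩) (Finset.mem_erase.2 ⟨h2x, h2⟩)
  · intro i j h1 h2
    by_cases h2x : (i + 1, j) = x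
    · have h1x : (i, j) ≠ x := fun h => by
        rw [← h2x] at h
        exact absurd (congrArg Prod.fst h) (by omega)
      rw [h2x, Function.update_self, Function.update_of_ne h1x]
      have h1' : (i, j) ∈ D.erase x := Finset.mem_erase.2 ⟨h1x, h1⟩
      have := hval' _ h1'
      rcases Finset.mem_Icc.1 this with ⟨-, hle⟩
      omega
    · by_cases h1x : (i, j) = x
      · exfalso
        obtain ⟨x1, x2⟩ := x
        have hi : i = x1 := congrArg Prod.fst h1x
        have hj : j = x2 := congrArg Prod.snd h1x
        subst hi; subst hj
        exact ((corner_iff_nbrs hD h1).1 hx).2 h2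
      · rw [Function.update_of_ne h1x, Function.update_of_ne h2x]
        exact hT'.2.2.2 i j (Finset.mem_erase.2 ⟨h1x, h1⟩) (Finset.mem_erase.2 ⟨h2x, h2⟩)

/-- The set of SYT with maximal entry at a given corner is equinumerous with the SYT of the
diagram with the corner removed. -/
lemma card_top_at_corner (hD : IsDiagram D) {x : ℕ × ℕ} (hx : IsCornerBox D x) :
    Nat.card {T : ℕ × ℕ → ℕ // IsSYT D T ∧ T x = D.card} = dimYD (D.erase x) := by
  classical
  have hxD : x ∈ D := hx.1
  refine Nat.card_congr ⟨?_, ?_, ?_, ?_⟩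
  · rintro ⟨T, hT, hval⟩
    exact ⟨Function.update T x 0, syt_erase hD hx hT hval⟩
  · rintro ⟨T', hT'⟩
    refine ⟨Function.update T' x D.card, syt_insert hD hx hT', Function.update_self _ _ _⟩
  · rintro ⟨T, hT, hval⟩
    apply Subtype.ext
    funext p
    by_cases hpx : p = x
    · rw [hpx]
      simp only [Function.update_self]
      exact hval.symm
    · simp only [Function.update_of_ne hpx]
  · rintro ⟨T', hT'⟩
    apply Subtype.ext
    funext p
    by_cases hpx : p = x
    · rw [hpx]
      simp only [Function.update_self]
      exact (hT'.2.1 x (by simp)).symm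
    · simp only [Function.update_of_ne hpx]

/-- `ncard` of a disjoint union over a finset. -/
lemma ncard_finset_biUnion {α β : Type*} (s : Finset α) (f : α → Set β)
    (hfin : ∀ a ∈ s, (f a).Finite)
    (hdisj : ∀ a ∈ s, ∀ b ∈ s, a ≠ b → Disjoint (f a) (f b)) :
    (⋃ a ∈ s, f a).ncard = ∑ a ∈ s, (f a).ncard := by
  classical
  induction s using Finset.induction with
  | empty => simp
  | insert a s hnotmem ih =>
    rw [Finset.set_biUnion_insert, Finset.sum_insert hnotmem]
    have hfin1 : (f a).Finite := hfin a (Finset.mem_insert_self a s)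
    have hfin2 : (⋃ b ∈ s, f b).Finite :=
      Set.Finite.biUnion s.finite_toSet (fun b hb => hfin b (Finset.mem_insert_of_mem hb))
    have hdis : Disjoint (f a) (⋃ b ∈ s, f b) := by
      rw [Set.disjoint_iUnion₂_right]
      intro b hb
      exact hdisj a (Finset.mem_insert_self a s) b (Finset.mem_insert_of_mem hb)
        (fun h => hnotmem (h ▸ hb))
    rw [Set.ncard_union_eq hdis hfin1 hfin2,
      ih (fun b hb => hfin b (Finset.mem_insert_of_mem hb))
        (fun b hb c hc => hdisj b (Finset.mem_insert_of_mem hb) c (Finset.mem_insert_of_mem hc))]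

/-- The dimension recursion: remove the maximal entry. -/
lemma dim_rec (hD : IsDiagram D) (hne : D.Nonempty) :
    dimYD D = ∑ x ∈ D.filter (fun x => hookLength D x = 1), dimYD (D.erase x) := by
  classical
  have hfinT : Finite {T : ℕ × ℕ → ℕ // IsSYT D T} := syt_finite D
  have hAfin : {T : ℕ × ℕ → ℕ | IsSYT D T}.Finite := Set.finite_coe_iff.1 hfinT
  have hcover : {T : ℕ × ℕ → ℕ | IsSYT D T} =
      ⋃ x ∈ D.filter (fun x => hookLength D x = 1),
        {T : ℕ × ℕ → ℕ | IsSYT D T ∧ T x = D.card} := by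
    ext T
    simp only [Set.mem_setOf_eq, Set.mem_iUnion, exists_prop]
    constructor
    · intro hT
      obtain ⟨x, hxD, hval⟩ := exists_max_cell hT hne
      have hcor := max_entry_corner hD hT hxD hval
      exact ⟨x, Finset.mem_filter.2 ⟨hxD, hcor.2⟩, hT, hval⟩
    · rintro ⟨x, -, hT, -⟩
      exact hT
  have hdisj : ∀ x ∈ D.filter (fun x => hookLength D x = 1),
      ∀ y ∈ D.filter (fun x => hookLength D x = 1), x ≠ y →
      Disjoint {T : ℕ × ℕ → ℕ | IsSYT D T ∧ T x = D.card}
        {T : ℕ × ℕ → ℕ | IsSYT D T ∧ T y = D.card} := by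
    intro x hxm y hym hxy
    rw [Set.disjoint_left]
    rintro T ⟨hT, hvx⟩ ⟨-, hvy⟩
    exact hxy (hT.1.2.1 (by exact_mod_cast (Finset.mem_filter.1 hxm).1)
      (by exact_mod_cast (Finset.mem_filter.1 hym).1) (by rw [hvx, hvy]))
  have hfins : ∀ x ∈ D.filter (fun x => hookLength D x = 1),
      {T : ℕ × ℕ → ℕ | IsSYT D T ∧ T x = D.card}.Finite := by
    intro x hxm
    exact hAfin.subset (fun T hT => hT.1)
  have h1 : dimYD D = {T : ℕ × ℕ → ℕ | IsSYT D T}.ncard := by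
    unfold dimYD
    rw [← Nat.card_coe_set_eq]
    rfl
  rw [h1, hcover, ncard_finset_biUnion _ _ hfins hdisj]
  apply Finset.sum_congr rfl
  intro x hxm
  rcases Finset.mem_filter.1 hxm with ⟨hxD, hx1⟩
  rw [← card_top_at_corner hD ⟨hxD, hx1⟩, ← Nat.card_coe_set_eq]
  rfl

end SYT

/-! ### The hook length formula -/

section HLF

variable {D : Finset (ℕ × ℕ)}

lemma hkR_pos {y : ℕ × ℕ} (h : y ∈ D) : (1 : ℝ) ≤ hkR D y := by
  unfold hkR
  exact_mod_cast hookLength_pos h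

lemma prod_hkR_pos (D : Finset (ℕ × ℕ)) : 0 < ∏ y ∈ D, hkR D y :=
  Finset.prod_pos (fun y hy => lt_of_lt_of_le zero_lt_one (hkR_pos hy))

lemma coHook_subset_erase (hD : IsDiagram D) {x : ℕ × ℕ} :
    coHook D x ⊆ D.erase x := by
  intro y hy
  rcases Finset.mem_filter.1 hy with ⟨hyD, hcond⟩
  refine Finset.mem_erase.2 ⟨?_, hyD⟩
  rintro rfl
  rcases hcond with ⟨-, h⟩ | ⟨-, h⟩ <;> omega

/-- Product decomposition of hooks when a corner is removed. -/
lemma prod_hk_erase (hD : IsDiagram D) {x : ℕ × ℕ} (hx : IsCornerBox D x) :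
    ∏ y ∈ D, hkR D y =
      (∏ y ∈ coHook D x, (hkR D y / (hkR D y - 1))) *
      ∏ y ∈ D.erase x, hkR (D.erase x) y := by
  classical
  have hxD : x ∈ D := hx.1
  have h1 : ∏ y ∈ D, hkR D y = hkR D x * ∏ y ∈ D.erase x, hkR D y :=
    (Finset.mul_prod_erase D _ hxD).symm
  have h2 : hkR D x = 1 := by
    unfold hkR
    rw [hx.2]
    norm_num
  have h3 : ∀ y ∈ D.erase x, hkR D y =
      (if y ∈ coHook D x then hkR D y / (hkR D y - 1) else 1) * hkR (D.erase x) y := by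
    intro y hy
    have herase := hookLength_erase hD hx hy
    by_cases hco : y ∈ coHook D x
    · rw [if_pos hco]
      have hge2 : 2 ≤ hookLength D y := coHook_hook_ge_two hD hx hco
      have : hkR (D.erase x) y = hkR D y - 1 := by
        unfold hkR
        rw [herase, if_pos hco]
        push_cast [Nat.cast_sub (by omega : 1 ≤ hookLength D y)]
        ring
      rw [this]
      have hne : hkR D y - 1 ≠ 0 := by
        have : (2 : ℝ) ≤ hkR D y := by unfold hkR; exact_mod_cast hge2
        intro h
        linarith
      field_simp
    · rw [if_neg hco, one_mul]
      unfold hkR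
      rw [herase, if_neg hco]
  rw [h1, h2, one_mul, Finset.prod_congr rfl h3, Finset.prod_mul_distrib]
  congr 1
  rw [Finset.prod_ite_mem, Finset.inter_eq_right.2 (coHook_subset_erase hD)]

/-- **The hook length formula.** -/
lemma hlf : ∀ n (D : Finset (ℕ × ℕ)), IsDiagram D → D.card = n →
    (dimYD D : ℝ) * ∏ y ∈ D, hkR D y = (Nat.factorial n : ℝ) := by
  intro n
  induction n using Nat.strong_induction_on with
  | _ n IH =>
    intro D hD hcard
    rcases D.eq_empty_or_nonempty with rfl | hne
    · simp only [Finset.card_empty] at hcard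
      subst hcard
      rw [dimYD_empty]
      simp [Nat.factorial]
    · have hn1 : 1 ≤ n := by
        rw [← hcard]
        exact Finset.card_pos.2 hne
      have hrec := dim_rec hD hne
      have hsum : (dimYD D : ℝ) = ∑ x ∈ D.filter (fun x => hookLength D x = 1),
          (dimYD (D.erase x) : ℝ) := by
        rw [hrec]
        push_cast
        rfl
      have hterm : ∀ x ∈ D.filter (fun x => hookLength D x = 1),
          (dimYD (D.erase x) : ℝ) * ∏ y ∈ D, hkR D y =
            (Nat.factorial (n - 1) : ℝ) * ∏ y ∈ coHook D x, (hkR D y / (hkR D y - 1)) := by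
        intro x hxm
        rcases Finset.mem_filter.1 hxm with ⟨hxD, hx1⟩
        have hxcor : IsCornerBox D x := ⟨hxD, hx1⟩
        have hIH := IH (n - 1) (by omega) (D.erase x) (erase_corner_diagram hD hxcor)
          (by rw [Finset.card_erase_of_mem hxD, hcard])
        rw [prod_hk_erase hD hxcor]
        calc (dimYD (D.erase x) : ℝ) *
            ((∏ y ∈ coHook D x, (hkR D y / (hkR D y - 1))) * ∏ y ∈ D.erase x, hkR (D.erase x) y)
            = ((dimYD (D.erase x) : ℝ) * ∏ y ∈ D.erase x, hkR (D.erase x) y) *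
              ∏ y ∈ coHook D x, (hkR D y / (hkR D y - 1)) := by ring
          _ = (Nat.factorial (n - 1) : ℝ) * ∏ y ∈ coHook D x, (hkR D y / (hkR D y - 1)) := by
              rw [hIH]
      calc (dimYD D : ℝ) * ∏ y ∈ D, hkR D y
          = ∑ x ∈ D.filter (fun x => hookLength D x = 1),
            (dimYD (D.erase x) : ℝ) * ∏ y ∈ D, hkR D y := by
            rw [hsum, Finset.sum_mul]
        _ = ∑ x ∈ D.filter (fun x => hookLength D x = 1),
            (Nat.factorial (n - 1) : ℝ) * ∏ y ∈ coHook D x, (hkR D y / (hkR D y - 1)) :=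
            Finset.sum_congr rfl hterm
        _ = (Nat.factorial (n - 1) : ℝ) * ∑ x ∈ D.filter (fun x => hookLength D x = 1),
            ∏ y ∈ coHook D x, (hkR D y / (hkR D y - 1)) := by
            rw [Finset.mul_sum]
        _ = (Nat.factorial (n - 1) : ℝ) * (D.card : ℝ) := by rw [gnw_star hD]
        _ = (Nat.factorial n : ℝ) := by
            rw [hcard]
            rw [show n = (n - 1) + 1 by omega, Nat.factorial_succ]
            push_cast
            ring

lemma dimYD_pos (hD : IsDiagram D) : 0 < dimYD D := by
  by_contra h
  push_neg at h
  have h0 : dimYD D = 0 := by omega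
  have := hlf D.card D hD rfl
  rw [h0] at this
  simp only [Nat.cast_zero, zero_mul] at this
  have := Nat.factorial_pos D.card
  have : (0 : ℝ) < (Nat.factorial D.card : ℝ) := by exact_mod_cast this
  linarith

/-- The corner-removal dimension ratio. -/
lemma dim_ratio (hD : IsDiagram D) {x : ℕ × ℕ} (hx : IsCornerBox D x) :
    (dimYD (D.erase x) : ℝ) * (D.card : ℝ) =
      (dimYD D : ℝ) * ∏ y ∈ coHook D x, (hkR D y / (hkR D y - 1)) := by
  have hxD : x ∈ D := hx.1
  have hn1 : 1 ≤ D.card := Finset.card_pos.2 ⟨x, hxD⟩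
  have h1 := hlf D.card D hD rfl
  have h2 := hlf (D.card - 1) (D.erase x) (erase_corner_diagram hD hx)
    (by rw [Finset.card_erase_of_mem hxD])
  have hprodpos := prod_hkR_pos D
  have hprodpos' := prod_hkR_pos (D.erase x)
  have hfact : (Nat.factorial D.card : ℝ) = (D.card : ℝ) * (Nat.factorial (D.card - 1) : ℝ) := by
    rw [show D.card = (D.card - 1) + 1 by omega, Nat.factorial_succ]
    push_cast
    ring
  have hdecomp := prod_hk_erase hD hx
  -- multiply out
  have key : (dimYD (D.erase x) : ℝ) * (D.card : ℝ) * ∏ y ∈ D, hkR D y =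
      (dimYD D : ℝ) * (∏ y ∈ coHook D x, (hkR D y / (hkR D y - 1))) * ∏ y ∈ D, hkR D y := by
    calc (dimYD (D.erase x) : ℝ) * (D.card : ℝ) * ∏ y ∈ D, hkR D y
        = (D.card : ℝ) * (∏ y ∈ coHook D x, (hkR D y / (hkR D y - 1))) *
          ((dimYD (D.erase x) : ℝ) * ∏ y ∈ D.erase x, hkR (D.erase x) y) := by
          rw [hdecomp]; ring
      _ = (D.card : ℝ) * (∏ y ∈ coHook D x, (hkR D y / (hkR D y - 1))) *
          (Nat.factorial (D.card - 1) : ℝ) := by rw [h2]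
      _ = (∏ y ∈ coHook D x, (hkR D y / (hkR D y - 1))) * (Nat.factorial D.card : ℝ) := by
          rw [hfact]; ring
      _ = (dimYD D : ℝ) * (∏ y ∈ coHook D x, (hkR D y / (hkR D y - 1))) *
          ∏ y ∈ D, hkR D y := by rw [← h1]; ring
  exact mul_right_cancel₀ (ne_of_gt hprodpos) key

end HLF

/-! ### Final assembly -/

section Final

variable {D : Finset (ℕ × ℕ)} {n : ℕ}

lemma mem_staircase {p : ℕ × ℕ} : p ∈ staircase n ↔ 1 ≤ p.1 ∧ 1 ≤ p.2 ∧ p.1 + p.2 ≤ n := by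
  unfold staircase
  simp only [Finset.mem_filter, Finset.mem_product, Finset.mem_Icc]
  omega

lemma card_staircase_le : (staircase n).card ≤ n * n := by
  calc (staircase n).card ≤ (Finset.Icc 1 n ×ˢ Finset.Icc 1 n).card :=
        Finset.card_le_card (Finset.filter_subset _ _)
    _ = (Finset.Icc 1 n).card * (Finset.Icc 1 n).card := Finset.card_product _ _
    _ ≤ n * n := by rw [Nat.card_Icc]; simp

lemma colLen_staircase (hD : IsDiagram D) (hsub : D ⊆ staircase n) {r c : ℕ}
    (h : (r, c) ∈ D) : colLen D c + c ≤ n := by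
  have h1 : 1 ≤ r := (hD _ h).1
  have h2 : r ≤ colLen D c := ((mem_iff_colLen hD).1 h).2.2
  have hmem : (colLen D c, c) ∈ D := (mem_iff_colLen hD).2 ⟨by omega, (hD _ h).2.1, le_rfl⟩
  have := mem_staircase.1 (hsub hmem)
  omega

lemma rowLen_staircase (hD : IsDiagram D) (hsub : D ⊆ staircase n) {r c : ℕ}
    (h : (r, c) ∈ D) : r + rowLen D r ≤ n := by
  have h2 : c ≤ rowLen D r := ((mem_iff_rowLen hD).1 h).2.2
  have hmem : (r, rowLen D r) ∈ D := (mem_iff_rowLen hD).2 ⟨(hD _ h).1, by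
    have := (hD _ h).2.1; omega, le_rfl⟩
  have := mem_staircase.1 (hsub hmem)
  omega

/-- Hook bound along the co-arm. -/
lemma hook_bound_row (hD : IsDiagram D) (hsub : D ⊆ staircase n) {a b : ℕ}
    (hx : IsCornerBox D (a, b)) {j : ℕ} (hj1 : 1 ≤ j) (hjb : j < b) :
    hookLength D (a, j) + a + 2 * j ≤ b + n + 1 := by
  have haj : (a, j) ∈ D := rect_mem hD hx.1 (hD _ hx.1).1 le_rfl hj1 (le_of_lt hjb)
  have hcol : colLen D j + j ≤ n := colLen_staircase hD hsub haj
  have hrow : rowLen D a = b := ((isCorner_iff hD).1 hx).2.1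
  have hle1 : j ≤ rowLen D a := ((mem_iff_rowLen hD).1 haj).2.2
  have hle2 : a ≤ colLen D j := ((mem_iff_colLen hD).1 haj).2.2
  rw [hookLength_eq hD haj, hrow]
  omega

/-- Hook bound along the co-leg. -/
lemma hook_bound_col (hD : IsDiagram D) (hsub : D ⊆ staircase n) {a b : ℕ}
    (hx : IsCornerBox D (a, b)) {i : ℕ} (hi1 : 1 ≤ i) (hia : i < a) :
    hookLength D (i, b) + b + 2 * i ≤ a + n + 1 := by
  have hib : (i, b) ∈ D := rect_mem hD hx.1 hi1 (le_of_lt hia) (hD _ hx.1).2.1 le_rfl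
  have hrowi : i + rowLen D i ≤ n := rowLen_staircase hD hsub hib
  have hcolb : colLen D b = a := ((isCorner_iff hD).1 hx).2.2
  have hle1 : b ≤ rowLen D i := ((mem_iff_rowLen hD).1 hib).2.2
  have hle2 : i ≤ colLen D b := ((mem_iff_colLen hD).1 hib).2.2
  rw [hookLength_eq hD hib, hcolb]
  omega

/-- The telescoping square-root lower bound. -/
lemma telescope (L : ℝ) (hL : 0 ≤ L) (m : ℕ) :
    Real.sqrt ((2 * m + L + 2) / (L + 2)) ≤
      ∏ d ∈ Finset.Icc 1 m, (1 + (2 * (d : ℝ) + L)⁻¹) := by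
  induction m with
  | zero =>
    simp only [Nat.cast_zero, mul_zero, zero_add]
    rw [div_self (by linarith), Real.sqrt_one]
    simp
  | succ m ih =>
    rw [Finset.prod_Icc_succ_top (by omega : 1 ≤ m + 1)]
    set t : ℝ := 2 * m + L + 2 with ht
    have htpos : 0 < t := by positivity
    have hspos : (0 : ℝ) < L + 2 := by linarith
    have hfac : (1 : ℝ) + (2 * ((m : ℝ) + 1) + L)⁻¹ = (t + 1) / t := by
      rw [ht]
      have : 2 * ((m : ℝ) + 1) + L = 2 * (m : ℝ) + L + 2 := by ring
      rw [this]
      field_simp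
    push_cast
    rw [hfac]
    have hgoal : Real.sqrt ((2 * (m : ℝ) + 2 + L + 2) / (L + 2)) ≤
        Real.sqrt (t / (L + 2)) * ((t + 1) / t) := by
      have hrhs : Real.sqrt (t / (L + 2)) * ((t + 1) / t) =
          Real.sqrt ((t / (L + 2)) * ((t + 1) / t) ^ 2) := by
        rw [Real.sqrt_mul (by positivity), Real.sqrt_sq (by positivity)]
      rw [hrhs]
      apply Real.sqrt_le_sqrt
      have hre : t / (L + 2) * ((t + 1) / t) ^ 2 = (t + 1) ^ 2 / (t * (L + 2)) := by
        field_simp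
      have hexp : (2 * (m : ℝ) + 2 + L + 2) = t + 2 := by rw [ht]; ring
      rw [hre, hexp, div_le_div_iff₀ hspos (by positivity)]
      nlinarith [htpos, hspos]
    calc Real.sqrt ((2 * ((m : ℝ) + 1) + L + 2) / (L + 2))
        = Real.sqrt ((2 * (m : ℝ) + 2 + L + 2) / (L + 2)) := by ring_nf
      _ ≤ Real.sqrt (t / (L + 2)) * ((t + 1) / t) := hgoal
      _ ≤ (∏ d ∈ Finset.Icc 1 m, (1 + (2 * (d : ℝ) + L)⁻¹)) * ((t + 1) / t) := by
          apply mul_le_mul_of_nonneg_right _ (by positivity)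
          exact ih
  
/-- Lower bound for the co-arm product. -/
lemma row_prod_lower (hD : IsDiagram D) (hsub : D ⊆ staircase n) {a b : ℕ}
    (hx : IsCornerBox D (a, b)) :
    Real.sqrt ((2 * b + ((n : ℝ) - a - b)) / (((n : ℝ) - a - b) + 2)) ≤
      ∏ j ∈ Finset.Ioo 0 b, (1 + (hkR D (a, j) - 1)⁻¹) := by
  have hstair := mem_staircase.1 (hsub hx.1)
  have h1a : 1 ≤ a := hstair.1
  have h1b : 1 ≤ b := hstair.2.1
  have habn : a + b ≤ n := hstair.2.2
  set L : ℝ := (n : ℝ) - a - b with hL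
  have hL0 : 0 ≤ L := by
    rw [hL]
    have : ((a : ℝ) + b) ≤ n := by exact_mod_cast habn
    linarith
  -- pointwise comparison
  have hpoint : ∀ j ∈ Finset.Ioo 0 b,
      (1 + (2 * (((b - j : ℕ)) : ℝ) + L)⁻¹) ≤ (1 + (hkR D (a, j) - 1)⁻¹) := by
    intro j hj
    rcases Finset.mem_Ioo.1 hj with ⟨hj1, hjb⟩
    have hhk := coarm_hk hD hx hj1 hjb
    have hbound := hook_bound_row hD hsub hx hj1 hjb
    have hcast : (hookLength D (a, j) : ℝ) + a + 2 * j ≤ b + n + 1 := by exact_mod_cast hbound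
    have hup : hkR D (a, j) - 1 ≤ 2 * (((b - j : ℕ)) : ℝ) + L := by
      unfold hkR
      have hbj : (((b - j : ℕ)) : ℝ) = (b : ℝ) - j := by
        push_cast [Nat.cast_sub (le_of_lt hjb)]
        ring
      rw [hbj, hL]
      linarith
    have h2pos : (0 : ℝ) < hkR D (a, j) - 1 := by linarith
    have h3pos : (0 : ℝ) < 2 * (((b - j : ℕ)) : ℝ) + L := by linarith
    have := inv_anti₀ h2pos hup
    linarith
  have hprod1 : ∏ j ∈ Finset.Ioo 0 b, (1 + (2 * (((b - j : ℕ)) : ℝ) + L)⁻¹) ≤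
      ∏ j ∈ Finset.Ioo 0 b, (1 + (hkR D (a, j) - 1)⁻¹) := by
    apply Finset.prod_le_prod _ hpoint
    intro j hj
    rcases Finset.mem_Ioo.1 hj with ⟨hj1, hjb⟩
    have : (0:ℝ) < 2 * (((b - j : ℕ)) : ℝ) + L := by
      have : 1 ≤ b - j := by omega
      have : (1:ℝ) ≤ (((b - j : ℕ)) : ℝ) := by exact_mod_cast this
      linarith
    positivity
  -- reindex
  have hreindex : ∏ j ∈ Finset.Ioo 0 b, (1 + (2 * (((b - j : ℕ)) : ℝ) + L)⁻¹) =
      ∏ d ∈ Finset.Icc 1 (b - 1), (1 + (2 * (d : ℝ) + L)⁻¹) := by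
    apply Finset.prod_nbij' (fun j => b - j) (fun d => b - d)
    · intro j hj
      rcases Finset.mem_Ioo.1 hj with ⟨h1, h2⟩
      exact Finset.mem_Icc.2 ⟨by omega, by omega⟩
    · intro d hd
      rcases Finset.mem_Icc.1 hd with ⟨h1, h2⟩
      exact Finset.mem_Ioo.2 ⟨by omega, by omega⟩
    · intro j hj
      rcases Finset.mem_Ioo.1 hj with ⟨h1, h2⟩
      omega
    · intro d hd
      rcases Finset.mem_Icc.1 hd with ⟨h1, h2⟩
      omega
    · intro j hj
      rfl
  have htel := telescope L hL0 (b - 1)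
  have hb1 : (((b - 1 : ℕ)) : ℝ) = (b : ℝ) - 1 := by
    push_cast [Nat.cast_sub h1b]
    ring
  rw [hb1] at htel
  have heq : (2 * ((b : ℝ) - 1) + L + 2) / (L + 2) = (2 * b + L) / (L + 2) := by
    ring_nf
  rw [heq] at htel
  calc Real.sqrt ((2 * b + L) / (L + 2)) ≤
      ∏ d ∈ Finset.Icc 1 (b - 1), (1 + (2 * (d : ℝ) + L)⁻¹) := htel
    _ = ∏ j ∈ Finset.Ioo 0 b, (1 + (2 * (((b - j : ℕ)) : ℝ) + L)⁻¹) := hreindex.symm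
    _ ≤ _ := hprod1

/-- Lower bound for the co-leg product. -/
lemma col_prod_lower (hD : IsDiagram D) (hsub : D ⊆ staircase n) {a b : ℕ}
    (hx : IsCornerBox D (a, b)) :
    Real.sqrt ((2 * a + ((n : ℝ) - a - b)) / (((n : ℝ) - a - b) + 2)) ≤
      ∏ i ∈ Finset.Ioo 0 a, (1 + (hkR D (i, b) - 1)⁻¹) := by
  have hstair := mem_staircase.1 (hsub hx.1)
  have h1a : 1 ≤ a := hstair.1
  have h1b : 1 ≤ b := hstair.2.1
  have habn : a + b ≤ n := hstair.2.2
  set L : ℝ := (n : ℝ) - a - b with hL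
  have hL0 : 0 ≤ L := by
    rw [hL]
    have : ((a : ℝ) + b) ≤ n := by exact_mod_cast habn
    linarith
  have hpoint : ∀ i ∈ Finset.Ioo 0 a,
      (1 + (2 * (((a - i : ℕ)) : ℝ) + L)⁻¹) ≤ (1 + (hkR D (i, b) - 1)⁻¹) := by
    intro i hi
    rcases Finset.mem_Ioo.1 hi with ⟨hi1, hia⟩
    have hhk := coleg_hk hD hx hi1 hia
    have hbound := hook_bound_col hD hsub hx hi1 hia
    have hcast : (hookLength D (i, b) : ℝ) + b + 2 * i ≤ a + n + 1 := by exact_mod_cast hbound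
    have hup : hkR D (i, b) - 1 ≤ 2 * (((a - i : ℕ)) : ℝ) + L := by
      unfold hkR
      have hai : (((a - i : ℕ)) : ℝ) = (a : ℝ) - i := by
        push_cast [Nat.cast_sub (le_of_lt hia)]
        ring
      rw [hai, hL]
      linarith
    have h2pos : (0 : ℝ) < hkR D (i, b) - 1 := by linarith
    have := inv_anti₀ h2pos hup
    linarith
  have hprod1 : ∏ i ∈ Finset.Ioo 0 a, (1 + (2 * (((a - i : ℕ)) : ℝ) + L)⁻¹) ≤
      ∏ i ∈ Finset.Ioo 0 a, (1 + (hkR D (i, b) - 1)⁻¹) := by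
    apply Finset.prod_le_prod _ hpoint
    intro i hi
    rcases Finset.mem_Ioo.1 hi with ⟨hi1, hia⟩
    have : 1 ≤ a - i := by omega
    have : (1:ℝ) ≤ (((a - i : ℕ)) : ℝ) := by exact_mod_cast this
    positivity
  have hreindex : ∏ i ∈ Finset.Ioo 0 a, (1 + (2 * (((a - i : ℕ)) : ℝ) + L)⁻¹) =
      ∏ d ∈ Finset.Icc 1 (a - 1), (1 + (2 * (d : ℝ) + L)⁻¹) := by
    apply Finset.prod_nbij' (fun i => a - i) (fun d => a - d)
    · intro i hi
      rcases Finset.mem_Ioo.1 hi with ⟨h1, h2⟩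
      exact Finset.mem_Icc.2 ⟨by omega, by omega⟩
    · intro d hd
      rcases Finset.mem_Icc.1 hd with ⟨h1, h2⟩
      exact Finset.mem_Ioo.2 ⟨by omega, by omega⟩
    · intro i hi
      rcases Finset.mem_Ioo.1 hi with ⟨h1, h2⟩
      omega
    · intro d hd
      rcases Finset.mem_Icc.1 hd with ⟨h1, h2⟩
      omega
    · intro i hi
      rfl
  have htel := telescope L hL0 (a - 1)
  have ha1 : (((a - 1 : ℕ)) : ℝ) = (a : ℝ) - 1 := by
    push_cast [Nat.cast_sub h1a]
    ring
  rw [ha1] at htel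
  have heq : (2 * ((a : ℝ) - 1) + L + 2) / (L + 2) = (2 * a + L) / (L + 2) := by
    ring_nf
  rw [heq] at htel
  calc Real.sqrt ((2 * a + L) / (L + 2)) ≤
      ∏ d ∈ Finset.Icc 1 (a - 1), (1 + (2 * (d : ℝ) + L)⁻¹) := htel
    _ = ∏ i ∈ Finset.Ioo 0 a, (1 + (2 * (((a - i : ℕ)) : ℝ) + L)⁻¹) := hreindex.symm
    _ ≤ _ := hprod1

end Final

end YDaux
set_option maxHeartbeats 2000000 in
/-- **Lemma.** Fix `ℓ > 0`. There is `c > 0` depending only on `ℓ` such that for every `n`,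
every Young diagram `D` contained in the staircase diagram of size `n`, and every corner
`x = (i,j)` of `D` with `i, j ≥ n/4` and `n - i - j ≤ ℓ`, a uniformly random standard Young
tableau of shape `D` has its largest entry at `x` with probability at least `c/n`. -/
theorem corner_box_likely (ℓ : ℕ) (hℓ : 0 < ℓ) :
    ∃ c : ℝ, 0 < c ∧ ∀ (n : ℕ) (D : Finset (ℕ × ℕ)), IsDiagram D → D ⊆ staircase n →
      ∀ i j : ℕ, IsCornerBox D (i, j) →
        (n : ℝ) / 4 ≤ (i : ℝ) → (n : ℝ) / 4 ≤ (j : ℝ) → (n : ℝ) - i - j ≤ (ℓ : ℝ) →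
        c / n ≤
          (Nat.card {T : ℕ × ℕ → ℕ // IsSYT D T ∧ T (i, j) = D.card} : ℝ) / (dimYD D : ℝ) := by
  classical
  refine ⟨1 / (2 * ((ℓ : ℝ) + 2)), by positivity, ?_⟩
  intro n D hD hsub i j hx hi4 hj4 hnl
  set c : ℝ := 1 / (2 * ((ℓ : ℝ) + 2)) with hc
  have hstair := YDaux.mem_staircase.1 (hsub hx.1)
  have h1i : 1 ≤ i := hstair.1
  have h1j : 1 ≤ j := hstair.2.1
  have hijn : i + j ≤ n := hstair.2.2
  have hn0 : 0 < n := by omega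
  have hnR : (0 : ℝ) < n := by exact_mod_cast hn0
  have hcardpos : 0 < D.card := Finset.card_pos.2 ⟨_, hx.1⟩
  have hcardR : (0 : ℝ) < (D.card : ℝ) := by exact_mod_cast hcardpos
  have hcard_le : D.card ≤ n * n := le_trans (Finset.card_le_card hsub) YDaux.card_staircase_le
  have hcard_leR : (D.card : ℝ) ≤ (n : ℝ) * n := by exact_mod_cast hcard_le
  have hdimpos : 0 < dimYD D := YDaux.dimYD_pos hD
  have hdimR : (0 : ℝ) < (dimYD D : ℝ) := by exact_mod_cast hdimpos
  have hnum := YDaux.card_top_at_corner hD hx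
  rw [hnum]
  set P : ℝ := ∏ y ∈ coHook D (i, j), (YDaux.hkR D y / (YDaux.hkR D y - 1)) with hP
  have hratio := YDaux.dim_ratio hD hx
  rw [← hP] at hratio
  set L : ℝ := (n : ℝ) - i - j with hL
  have hL0 : 0 ≤ L := by
    have : ((i : ℝ) + j) ≤ n := by exact_mod_cast hijn
    rw [hL]; linarith
  have hLl : L ≤ (ℓ : ℝ) := hnl
  have hiR : (0 : ℝ) < (i : ℝ) := by exact_mod_cast h1i
  have hjR : (0 : ℝ) < (j : ℝ) := by exact_mod_cast h1j
  have hl2 : (0 : ℝ) < (ℓ : ℝ) + 2 := by positivity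
  have hL2 : (0 : ℝ) < L + 2 := by linarith
  -- lower bound on P
  have hProw := YDaux.row_prod_lower hD hsub hx
  have hPcol := YDaux.col_prod_lower hD hsub hx
  rw [← hL] at hProw hPcol
  have hPdecomp := YDaux.prod_coHook hD hx
  rw [← hP] at hPdecomp
  have hsq_i : Real.sqrt (2 * (i : ℝ) / ((ℓ : ℝ) + 2)) ≤ Real.sqrt ((2 * i + L) / (L + 2)) := by
    apply Real.sqrt_le_sqrt
    rw [div_le_div_iff₀ hl2 hL2]
    nlinarith
  have hsq_j : Real.sqrt (2 * (j : ℝ) / ((ℓ : ℝ) + 2)) ≤ Real.sqrt ((2 * j + L) / (L + 2)) := by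
    apply Real.sqrt_le_sqrt
    rw [div_le_div_iff₀ hl2 hL2]
    nlinarith
  have hPge : Real.sqrt (2 * (i : ℝ) / ((ℓ : ℝ) + 2)) * Real.sqrt (2 * (j : ℝ) / ((ℓ : ℝ) + 2))
      ≤ P := by
    rw [hPdecomp]
    have h1 : Real.sqrt (2 * (i : ℝ) / ((ℓ : ℝ) + 2)) ≤
        ∏ y ∈ Finset.Ioo 0 i, (1 + (YDaux.hkR D (y, j) - 1)⁻¹) :=
      le_trans hsq_i hPcol
    have h2 : Real.sqrt (2 * (j : ℝ) / ((ℓ : ℝ) + 2)) ≤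
        ∏ y ∈ Finset.Ioo 0 j, (1 + (YDaux.hkR D (i, y) - 1)⁻¹) :=
      le_trans hsq_j hProw
    exact mul_le_mul h1 h2 (Real.sqrt_nonneg _) (le_trans (Real.sqrt_nonneg _) h1)
  have hsqrt_prod : Real.sqrt (2 * (i : ℝ) / ((ℓ : ℝ) + 2)) *
      Real.sqrt (2 * (j : ℝ) / ((ℓ : ℝ) + 2)) =
      Real.sqrt ((2 * (i : ℝ) / ((ℓ : ℝ) + 2)) * (2 * (j : ℝ) / ((ℓ : ℝ) + 2))) :=
    (Real.sqrt_mul (by positivity) _).symm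
  have hfinal_sqrt : (n : ℝ) / (2 * ((ℓ : ℝ) + 2)) ≤
      Real.sqrt ((2 * (i : ℝ) / ((ℓ : ℝ) + 2)) * (2 * (j : ℝ) / ((ℓ : ℝ) + 2))) := by
    rw [show (2 * (i : ℝ) / ((ℓ : ℝ) + 2)) * (2 * (j : ℝ) / ((ℓ : ℝ) + 2)) =
      4 * ((i : ℝ) * j) / (((ℓ : ℝ) + 2) ^ 2) by field_simp; ring]
    rw [Real.le_sqrt (by positivity)]
    have hij : ((n : ℝ) / 4) * ((n : ℝ) / 4) ≤ (i : ℝ) * j :=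
      mul_le_mul hi4 hj4 (by positivity) (le_trans (by positivity) hi4)
    have hrw : ((n : ℝ) / (2 * ((ℓ : ℝ) + 2))) ^ 2 =
        ((n : ℝ) * n / 4) / (((ℓ : ℝ) + 2) ^ 2) := by
      field_simp
      ring
    rw [hrw]
    apply div_le_div_of_nonneg_right ?_ (by positivity)
    · linarith
    · positivity
  have hPn : (n : ℝ) / (2 * ((ℓ : ℝ) + 2)) ≤ P :=
    le_trans (le_trans hfinal_sqrt (le_of_eq hsqrt_prod.symm)) hPge
  -- convert ratio
  have hdiv : (dimYD (D.erase (i, j)) : ℝ) / (dimYD D : ℝ) = P / (D.card : ℝ) := by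
    rw [div_eq_div_iff (ne_of_gt hdimR) (ne_of_gt hcardR)]
    rw [hratio]
    ring
  rw [hdiv]
  rw [div_le_div_iff₀ hnR hcardR]
  calc c * (D.card : ℝ) ≤ c * ((n : ℝ) * n) := by
        apply mul_le_mul_of_nonneg_left hcard_leR
        positivity
    _ = ((n : ℝ) / (2 * ((ℓ : ℝ) + 2))) * n := by rw [hc]; ring
    _ ≤ P * n := mul_le_mul_of_nonneg_right hPn (le_of_lt hnR)
end
end

section
/- Let X_1,…,X_N be random variables taking values in {1,…,m} ∪ {∞} such that almost surely each a ∈ {1,…,m} appears exactly r times in the sequence X_1,…,X_N. Let A_1,…,A_N be events, and define the filtration F_i = σ(X_1,…,X_i, A_1,…,A_{i−1}). Assume that for some p ∈ [0,1] and all i, P(A_i | F_i) ≥ p almost surely. For a ∈ {1,…,m} let G_a = ∩_{i=1}^N ({X_i ≠ a} ∪ A_i). Then the random variable Σ_{a=1}^m 1_{G_a} stochastically dominates the binomial random variable Bin(m, p^r); that is, for every t ∈ ℝ, P(Σ_{a=1}^m 1_{G_a} ≥ t) ≥ P(Bin(m, p^r) ≥ t). -/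
open MeasureTheory

noncomputable section

/-- The σ-algebra `σ(X_1, …, X_i)` generated by the random variables `X_1, …, X_i`
(taking values in the countable space `ℕ∞ = {1,…} ∪ {∞}`, endowed with the discrete
σ-algebra `⊤`). -/
def sigmaX {Ω : Type*} (X : ℕ → Ω → ℕ∞) (i : ℕ) : MeasurableSpace Ω :=
  ⨆ k ∈ Finset.Icc 1 i, MeasurableSpace.comap (X k) ⊤

/-- The σ-algebra `F_i = σ(X_1, …, X_i, A_1, …, A_{i-1})`. -/
def sigmaXA {Ω : Type*} (X : ℕ → Ω → ℕ∞) (A : ℕ → Set Ω) (i : ℕ) : MeasurableSpace Ω :=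
  sigmaX X i ⊔ ⨆ k ∈ Finset.Icc 1 (i - 1), MeasurableSpace.generateFrom {A k}

/-- `S_k(a) = #{i ≤ k : X_i = a}`. -/
def countX {Ω : Type*} (X : ℕ → Ω → ℕ∞) (k a : ℕ) (ω : Ω) : ℕ :=
  ((Finset.Icc 1 k).filter fun i => X i ω = (a : ℕ∞)).card

def gfun (p t : ℝ) (F : Finset ℕ) (c : ℕ → ℕ) (s : ℕ) : ℝ :=
  ∑ S ∈ F.powerset, (∏ a ∈ S, p ^ c a) * (∏ a ∈ F \ S, (1 - p ^ c a)) *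
    (if t ≤ (S.card + s : ℝ) then 1 else 0)

theorem gfun_congr (p t : ℝ) {F : Finset ℕ} {c c' : ℕ → ℕ} (h : ∀ a ∈ F, c a = c' a) (s : ℕ) :
    gfun p t F c s = gfun p t F c' s := by
  refine Finset.sum_congr rfl fun S hS => ?_
  rw [Finset.mem_powerset] at hS
  have e1 : ∏ a ∈ S, p ^ c a = ∏ a ∈ S, p ^ c' a :=
    Finset.prod_congr rfl fun a ha => by rw [h a (hS ha)]
  have e2 : ∏ a ∈ F \ S, (1 - p ^ c a) = ∏ a ∈ F \ S, (1 - p ^ c' a) :=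
    Finset.prod_congr rfl fun a ha => by rw [h a (Finset.mem_sdiff.1 ha).1]
  rw [e1, e2]

theorem gfun_split (p t : ℝ) {F : Finset ℕ} {b : ℕ} (hb : b ∈ F) (c : ℕ → ℕ) (s : ℕ) :
    gfun p t F c s = p ^ c b * gfun p t (F.erase b) c (s + 1)
      + (1 - p ^ c b) * gfun p t (F.erase b) c s := by
  have hbe : b ∉ F.erase b := Finset.notMem_erase _ _
  have hF : F = insert b (F.erase b) := (Finset.insert_erase hb).symm
  have hA : ∑ S ∈ (F.erase b).powerset,
      (∏ a ∈ S, p ^ c a) * (∏ a ∈ F \ S, (1 - p ^ c a)) *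
        (if t ≤ (S.card + s : ℝ) then 1 else 0)
      = (1 - p ^ c b) * gfun p t (F.erase b) c s := by
    rw [gfun, Finset.mul_sum]
    refine Finset.sum_congr rfl fun S hS => ?_
    rw [Finset.mem_powerset] at hS
    have hbS : b ∉ S := fun h => hbe (hS h)
    have hsd : F \ S = insert b (F.erase b \ S) := by
      ext x
      simp only [Finset.mem_sdiff, Finset.mem_insert, Finset.mem_erase]
      constructor
      · rintro ⟨hxF, hxS⟩
        by_cases hxb : x = b
        · exact Or.inl hxb
        · exact Or.inr ⟨⟨hxb, hxF⟩, hxS⟩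
      · rintro (rfl | ⟨⟨hxb, hxF⟩, hxS⟩)
        · exact ⟨hb, hbS⟩
        · exact ⟨hxF, hxS⟩
    rw [hsd, Finset.prod_insert (fun h => (Finset.mem_erase.1 (Finset.mem_sdiff.1 h).1).1 rfl)]
    ring
  have hB : ∑ S ∈ (F.erase b).powerset,
      (∏ a ∈ insert b S, p ^ c a) * (∏ a ∈ F \ insert b S, (1 - p ^ c a)) *
        (if t ≤ ((insert b S).card + s : ℝ) then 1 else 0)
      = p ^ c b * gfun p t (F.erase b) c (s + 1) := by
    rw [gfun, Finset.mul_sum]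
    refine Finset.sum_congr rfl fun S hS => ?_
    rw [Finset.mem_powerset] at hS
    have hbS : b ∉ S := fun h => hbe (hS h)
    have h1 : ∏ a ∈ insert b S, p ^ c a = p ^ c b * ∏ a ∈ S, p ^ c a := Finset.prod_insert hbS
    have h2 : F \ insert b S = F.erase b \ S := by
      ext x
      simp only [Finset.mem_sdiff, Finset.mem_insert, Finset.mem_erase, not_or]
      tauto
    have h3 : (((insert b S).card : ℝ) + s) = (S.card : ℝ) + (s + 1 : ℕ) := by
      rw [Finset.card_insert_of_notMem hbS]; push_cast; ring
    rw [h1, h2, h3]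
    ring
  rw [gfun]
  rw [show F.powerset = (insert b (F.erase b)).powerset by rw [← hF]]
  rw [Finset.sum_powerset_insert hbe, hA, hB]
  ring

theorem gfun_mono (p t : ℝ) (hp0 : 0 ≤ p) (hp1 : p ≤ 1) (F : Finset ℕ) (c : ℕ → ℕ) (s : ℕ) :
    gfun p t F c s ≤ gfun p t F c (s + 1) := by
  refine Finset.sum_le_sum fun S _ => ?_
  have hw : 0 ≤ (∏ a ∈ S, p ^ c a) * (∏ a ∈ F \ S, (1 - p ^ c a)) :=
    mul_nonneg (Finset.prod_nonneg fun a _ => pow_nonneg hp0 _)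
      (Finset.prod_nonneg fun a _ => by
        have := pow_le_one₀ hp0 hp1 (n := c a); linarith)
  refine mul_le_mul_of_nonneg_left ?_ hw
  by_cases h : t ≤ (S.card + s : ℝ)
  · rw [if_pos h, if_pos]
    push_cast at h ⊢
    linarith
  · rw [if_neg h]
    split <;> norm_num

theorem gfun_nonneg (p t : ℝ) (hp0 : 0 ≤ p) (hp1 : p ≤ 1) (F : Finset ℕ) (c : ℕ → ℕ) (s : ℕ) :
    0 ≤ gfun p t F c s :=
  Finset.sum_nonneg fun S _ => by
    have h1 : (0:ℝ) ≤ ∏ a ∈ S, p ^ c a := Finset.prod_nonneg fun a _ => pow_nonneg hp0 _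
    have h2 : (0:ℝ) ≤ ∏ a ∈ F \ S, (1 - p ^ c a) := Finset.prod_nonneg fun a _ => by
      have := pow_le_one₀ hp0 hp1 (n := c a); linarith
    positivity

theorem gfun_le (p t : ℝ) (hp0 : 0 ≤ p) (hp1 : p ≤ 1) (F : Finset ℕ) (c : ℕ → ℕ) (s : ℕ) :
    gfun p t F c s ≤ 2 ^ F.card := by
  calc gfun p t F c s ≤ ∑ S ∈ F.powerset, (1:ℝ) := by
        refine Finset.sum_le_sum fun S _ => ?_
        have h1 : (∏ a ∈ S, p ^ c a) ≤ 1 :=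
          Finset.prod_le_one (fun a _ => pow_nonneg hp0 _) (fun a _ => pow_le_one₀ hp0 hp1)
        have h1' : (0:ℝ) ≤ ∏ a ∈ S, p ^ c a := Finset.prod_nonneg fun a _ => pow_nonneg hp0 _
        have h2 : (∏ a ∈ F \ S, (1 - p ^ c a)) ≤ 1 :=
          Finset.prod_le_one (fun a _ => by have := pow_le_one₀ hp0 hp1 (n := c a); linarith)
            (fun a _ => by have := pow_nonneg hp0 (c a); linarith)
        have h2' : (0:ℝ) ≤ ∏ a ∈ F \ S, (1 - p ^ c a) := Finset.prod_nonneg fun a _ => by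
          have := pow_le_one₀ hp0 hp1 (n := c a); linarith
        have h3 : (if t ≤ (S.card + s : ℝ) then (1:ℝ) else 0) ≤ 1 := by split <;> norm_num
        have h3' : (0:ℝ) ≤ (if t ≤ (S.card + s : ℝ) then (1:ℝ) else 0) := by split <;> norm_num
        exact mul_le_one₀ (mul_le_one₀ h1 h2' h2) h3' h3
    _ = 2 ^ F.card := by
        rw [Finset.sum_const, Finset.card_powerset]; simp [mul_comm]

theorem gfun_zero (p t : ℝ) {F : Finset ℕ} {c : ℕ → ℕ} (h : ∀ a ∈ F, c a = 0) (s : ℕ) :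
    gfun p t F c s = if t ≤ (F.card + s : ℝ) then 1 else 0 := by
  rw [gfun, Finset.sum_eq_single F]
  · rw [Finset.sdiff_self]
    have : ∏ a ∈ F, p ^ c a = 1 := Finset.prod_eq_one fun a ha => by rw [h a ha, pow_zero]
    simp [this]
  · intro S hS hSF
    rw [Finset.mem_powerset] at hS
    obtain ⟨x, hxF, hxS⟩ : ∃ x ∈ F, x ∉ S := by
      by_contra hc
      push_neg at hc
      exact hSF (Finset.Subset.antisymm hS hc)
    have : ∏ a ∈ F \ S, (1 - p ^ c a) = 0 :=
      Finset.prod_eq_zero (Finset.mem_sdiff.2 ⟨hxF, hxS⟩) (by rw [h x hxF, pow_zero]; ring)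
    simp [this]
  · intro h'; exact absurd (Finset.mem_powerset.2 (Finset.Subset.refl F)) h'

theorem gfun_binomial (p t : ℝ) (m r : ℕ) :
    gfun p t (Finset.Icc 1 m) (fun _ => r) 0 =
      ∑ j ∈ Finset.range (m + 1), if t ≤ (j : ℝ) then
        (m.choose j : ℝ) * (p ^ r) ^ j * (1 - p ^ r) ^ (m - j) else 0 := by
  have hcard : (Finset.Icc 1 m).card = m := by rw [Nat.card_Icc]; omega
  rw [gfun, Finset.sum_powerset, hcard]
  refine Finset.sum_congr rfl fun j hj => ?_
  rw [Finset.mem_range] at hj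
  have key : ∀ S ∈ Finset.powersetCard j (Finset.Icc 1 m),
      (∏ a ∈ S, p ^ r) * (∏ a ∈ Finset.Icc 1 m \ S, (1 - p ^ r)) *
        (if t ≤ (S.card + (0:ℕ) : ℝ) then (1:ℝ) else 0)
      = (if t ≤ (j:ℝ) then (p ^ r) ^ j * (1 - p ^ r) ^ (m - j) else 0) := by
    intro S hS
    rw [Finset.mem_powersetCard] at hS
    obtain ⟨hSsub, hScard⟩ := hS
    rw [Finset.prod_const, Finset.prod_const, Finset.card_sdiff_of_subset hSsub, hcard, hScard]
    by_cases h : t ≤ (j:ℝ)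
    · rw [if_pos (by push_cast; simpa using h), if_pos h]; ring
    · rw [if_neg (by push_cast; simpa using h), if_neg h]; ring
  rw [Finset.sum_congr rfl key, Finset.sum_const, Finset.card_powersetCard, hcard]
  split
  · simp; ring
  · simp

section Counters

variable {Ω : Type*}

def redu (m : ℕ) (X : ℕ → Ω → ℕ∞) (i : ℕ) (ω : Ω) : ℕ :=
  if (X i ω).toNat ≤ m then (X i ω).toNat else 0

theorem redu_eq_iff {m a : ℕ} (X : ℕ → Ω → ℕ∞) {i : ℕ} {ω : Ω} (ha : a ∈ Finset.Icc 1 m) :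
    redu m X i ω = a ↔ X i ω = (a : ℕ∞) := by
  rw [Finset.mem_Icc] at ha
  cases hx : X i ω with
  | top =>
    simp only [redu, hx]
    simp only [ENat.toNat_top, Nat.zero_le, if_pos]
    constructor
    · omega
    · intro h; exact absurd h.symm (ne_of_beq_false rfl)
  | coe b =>
    simp only [redu, hx, ENat.toNat_coe]
    by_cases hb : b ≤ m
    · rw [if_pos hb, Nat.cast_inj]
    · rw [if_neg hb, Nat.cast_inj]
      omega

def countR (m : ℕ) (X : ℕ → Ω → ℕ∞) (k a : ℕ) (ω : Ω) : ℕ :=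
  ((Finset.Icc 1 k).filter fun i => redu m X i ω = a).card

open Classical in
def aliveF (m : ℕ) (X : ℕ → Ω → ℕ∞) (A : ℕ → Set Ω) (k : ℕ) (ω : Ω) : Finset ℕ :=
  (Finset.Icc 1 m).filter fun a => ∀ i ∈ Finset.Icc 1 k, redu m X i ω = a → ω ∈ A i

theorem mem_aliveF {m : ℕ} {X : ℕ → Ω → ℕ∞} {A : ℕ → Set Ω} {k : ℕ} {ω : Ω} {a : ℕ} :
    a ∈ aliveF m X A k ω
      ↔ a ∈ Finset.Icc 1 m ∧ ∀ i ∈ Finset.Icc 1 k, redu m X i ω = a → ω ∈ A i := by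
  unfold aliveF
  exact @Finset.mem_filter ℕ _ (fun a => Classical.propDecidable _) (Finset.Icc 1 m) a

def Vf (p t : ℝ) (m r : ℕ) (X : ℕ → Ω → ℕ∞) (A : ℕ → Set Ω) (k : ℕ) (ω : Ω) : ℝ :=
  gfun p t (aliveF m X A k ω) (fun a => r - countR m X k a ω) 0

def uP (p t : ℝ) (m r : ℕ) (X : ℕ → Ω → ℕ∞) (A : ℕ → Set Ω) (k : ℕ) (ω : Ω) : ℝ :=
  gfun p t (aliveF m X A k ω) (fun a => r - countR m X (k+1) a ω) 0

def uM (p t : ℝ) (m r : ℕ) (X : ℕ → Ω → ℕ∞) (A : ℕ → Set Ω) (k : ℕ) (ω : Ω) : ℝ :=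
  gfun p t ((aliveF m X A k ω).erase (redu m X (k+1) ω))
    (fun a => r - countR m X (k+1) a ω) 0

theorem Icc_succ_insert (k : ℕ) : Finset.Icc 1 (k+1) = insert (k+1) (Finset.Icc 1 k) := by
  ext x; simp [Finset.mem_Icc]; omega

theorem countR_succ (m : ℕ) (X : ℕ → Ω → ℕ∞) (k a : ℕ) (ω : Ω) :
    countR m X (k+1) a ω
      = countR m X k a ω + (if redu m X (k+1) ω = a then 1 else 0) := by
  classical
  by_cases h : redu m X (k+1) ω = a
  · rw [countR, countR, Icc_succ_insert, Finset.filter_insert, if_pos h,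
      Finset.card_insert_of_notMem (by simp [Finset.mem_Icc]), if_pos h]
  · rw [countR, countR, Icc_succ_insert, Finset.filter_insert, if_neg h, if_neg h]
    omega

theorem countR_mono (m : ℕ) (X : ℕ → Ω → ℕ∞) {k K : ℕ} (h : k ≤ K) (a : ℕ) (ω : Ω) :
    countR m X k a ω ≤ countR m X K a ω := by
  classical
  exact Finset.card_le_card
    (Finset.filter_subset_filter _ (Finset.Icc_subset_Icc_right h))

theorem aliveF_succ_mem {m : ℕ} {X : ℕ → Ω → ℕ∞} {A : ℕ → Set Ω} {k : ℕ} {ω : Ω}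
    (h : ω ∈ A (k+1)) : aliveF m X A (k+1) ω = aliveF m X A k ω := by
  classical
  ext a
  simp only [aliveF, Finset.mem_filter, Icc_succ_insert k, Finset.forall_mem_insert]
  tauto

theorem aliveF_succ_not_mem {m : ℕ} {X : ℕ → Ω → ℕ∞} {A : ℕ → Set Ω} {k : ℕ} {ω : Ω}
    (h : ω ∉ A (k+1)) :
    aliveF m X A (k+1) ω = (aliveF m X A k ω).erase (redu m X (k+1) ω) := by
  classical
  ext a
  simp only [aliveF, Finset.mem_filter, Icc_succ_insert k, Finset.forall_mem_insert,
    Finset.mem_erase]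
  constructor
  · rintro ⟨h1, h2, h3⟩
    refine ⟨fun hae => h (h2 ?_), h1, h3⟩
    · rw [hae]
  · rintro ⟨h1, h2, h3⟩
    exact ⟨h2, fun hre => absurd hre.symm h1, h3⟩

open Classical in
theorem Vf_succ (p t : ℝ) (m r : ℕ) (X : ℕ → Ω → ℕ∞) (A : ℕ → Set Ω) (k : ℕ) (ω : Ω) :
    Vf p t m r X A (k+1) ω
      = if ω ∈ A (k+1) then uP p t m r X A k ω else uM p t m r X A k ω := by
  by_cases h : ω ∈ A (k+1)
  · rw [if_pos h, Vf, uP, aliveF_succ_mem h]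
  · rw [if_neg h, Vf, uM, aliveF_succ_not_mem h]

theorem uM_le_uP {p : ℝ} (t : ℝ) (hp0 : 0 ≤ p) (hp1 : p ≤ 1) (m r : ℕ)
    (X : ℕ → Ω → ℕ∞) (A : ℕ → Set Ω) (k : ℕ) (ω : Ω) :
    uM p t m r X A k ω ≤ uP p t m r X A k ω := by
  set b := redu m X (k+1) ω with hb
  by_cases hbF : b ∈ aliveF m X A k ω
  · rw [uP, gfun_split p t hbF]
    rw [uM]
    have hmono := gfun_mono p t hp0 hp1 ((aliveF m X A k ω).erase b)
      (fun a => r - countR m X (k+1) a ω) 0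
    have hpow0 : (0:ℝ) ≤ p ^ (r - countR m X (k+1) b ω) := pow_nonneg hp0 _
    nlinarith
  · rw [uP, uM, Finset.erase_eq_of_notMem hbF]

theorem step_pointwise {p : ℝ} (t : ℝ) (hp0 : 0 ≤ p) (hp1 : p ≤ 1) (N m r : ℕ)
    (X : ℕ → Ω → ℕ∞) (A : ℕ → Set Ω) {k : ℕ} (hkN : k + 1 ≤ N) {ω : Ω}
    (hcnt : ∀ a ∈ Finset.Icc 1 m, countR m X N a ω = r) :
    p * uP p t m r X A k ω + (1 - p) * uM p t m r X A k ω = Vf p t m r X A k ω := by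
  classical
  set b := redu m X (k+1) ω with hbdef
  set F := aliveF m X A k ω with hF
  set c : ℕ → ℕ := fun a => r - countR m X k a ω with hc
  set c' : ℕ → ℕ := fun a => r - countR m X (k+1) a ω with hc'
  have hagree : ∀ a ∈ F.erase b, c' a = c a := by
    intro a ha
    have hab : a ≠ b := (Finset.mem_erase.1 ha).1
    have hne : redu m X (k+1) ω ≠ a := fun h => hab h.symm
    simp only [hc, hc', countR_succ m X k a ω, if_neg hne, add_zero]
  by_cases hbF : b ∈ F
  · -- b alive
    have hbm : b ∈ Finset.Icc 1 m := (mem_aliveF.1 hbF).1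
    have h1 : countR m X (k+1) b ω = countR m X k b ω + 1 := by
      rw [countR_succ]; rw [if_pos rfl]
    have h2 : countR m X (k+1) b ω ≤ r := by
      rw [← hcnt b hbm]; exact countR_mono m X hkN b ω
    have hc'b : c' b + 1 = c b := by simp only [hc, hc', h1]; omega
    have eP : uP p t m r X A k ω
        = p ^ c' b * gfun p t (F.erase b) c 1 + (1 - p ^ c' b) * gfun p t (F.erase b) c 0 := by
      rw [uP, ← hF, ← hc', gfun_split p t hbF c',
        gfun_congr p t hagree 1, gfun_congr p t hagree 0]
    have eM : uM p t m r X A k ω = gfun p t (F.erase b) c 0 := by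
      rw [uM, ← hF, ← hbdef, ← hc', gfun_congr p t hagree 0]
    have eV : Vf p t m r X A k ω
        = p ^ c b * gfun p t (F.erase b) c 1 + (1 - p ^ c b) * gfun p t (F.erase b) c 0 := by
      rw [Vf, ← hF, ← hc, gfun_split p t hbF c]
    rw [eP, eM, eV, ← hc'b, pow_succ]
    ring
  · -- b not alive (or not a counter)
    have hagree' : ∀ a ∈ F, c' a = c a := by
      intro a ha
      have hab : a ≠ b := fun h => hbF (h ▸ ha)
      have hne : redu m X (k+1) ω ≠ a := fun h => hab h.symm
      simp only [hc, hc', countR_succ m X k a ω, if_neg hne, add_zero]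
    have eP : uP p t m r X A k ω = Vf p t m r X A k ω := by
      rw [uP, Vf, ← hF, ← hc, ← hc', gfun_congr p t hagree' 0]
    have eM : uM p t m r X A k ω = Vf p t m r X A k ω := by
      rw [uM, Vf, ← hF, ← hbdef, Finset.erase_eq_of_notMem hbF, ← hc, ← hc',
        gfun_congr p t hagree' 0]
    rw [eP, eM]; ring

end Counters

section Meas

theorem measurable_redu {G : MeasurableSpace Ω} {X : ℕ → Ω → ℕ∞} {i : ℕ}
    (h : MeasurableSpace.comap (X i) ⊤ ≤ G) (m : ℕ) : Measurable[G] (redu m X i) := by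
  have he : redu m X i = (fun y : ℕ∞ => if y.toNat ≤ m then y.toNat else 0) ∘ (X i) := rfl
  rw [he]
  exact Measurable.comp measurable_from_top (Measurable.of_comap_le h)

theorem measurable_countR {G : MeasurableSpace Ω} {X : ℕ → Ω → ℕ∞} {m k : ℕ}
    (h : ∀ i ∈ Finset.Icc 1 k, Measurable[G] (redu m X i)) (a : ℕ) :
    Measurable[G] (fun ω => countR m X k a ω) := by
  classical
  have he : (fun ω => countR m X k a ω)
      = fun ω => ∑ i ∈ Finset.Icc 1 k, if redu m X i ω = a then 1 else 0 := by
    funext ω; rw [countR, Finset.card_filter]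
  rw [he]
  refine Finset.measurable_sum _ (fun i hi => Measurable.ite ?_ measurable_const measurable_const)
  exact (h i hi) (measurableSet_singleton a)

theorem measurable_alive {G : MeasurableSpace Ω} {X : ℕ → Ω → ℕ∞} {A : ℕ → Set Ω} {m k : ℕ}
    (hred : ∀ i ∈ Finset.Icc 1 k, Measurable[G] (redu m X i))
    (hAm : ∀ i ∈ Finset.Icc 1 k, MeasurableSet[G] (A i)) (a : ℕ) :
    MeasurableSet[G] {ω | ∀ i ∈ Finset.Icc 1 k, redu m X i ω = a → ω ∈ A i} := by
  have he : {ω | ∀ i ∈ Finset.Icc 1 k, redu m X i ω = a → ω ∈ A i}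
      = ⋂ i ∈ (Finset.Icc 1 k : Finset ℕ), ({ω | redu m X i ω = a}ᶜ ∪ A i) := by
    ext ω
    simp only [Set.mem_setOf_eq, Set.mem_iInter, Set.mem_union, Set.mem_compl_iff,
      Set.mem_setOf_eq]
    constructor
    · intro hω i hi
      by_cases hr : redu m X i ω = a
      · exact Or.inr (hω i hi hr)
      · exact Or.inl hr
    · intro hω i hi hr
      rcases hω i hi with h' | h'
      · exact absurd hr h'
      · exact h'
  rw [he]
  refine MeasurableSet.biInter (Set.to_countable _) fun i hi => ?_
  exact (((hred i hi) (measurableSet_singleton a)).compl).union (hAm i hi)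

def decF (m : ℕ) (v : Fin (m+1) → Bool × ℕ) : Finset ℕ :=
  (Finset.Icc 1 m).filter fun a => (v ⟨a % (m+1), Nat.mod_lt _ (Nat.succ_pos m)⟩).1 = true

def decC (m : ℕ) (v : Fin (m+1) → Bool × ℕ) : ℕ → ℕ :=
  fun a => (v ⟨a % (m+1), Nat.mod_lt _ (Nat.succ_pos m)⟩).2

theorem measurable_uPuM {G : MeasurableSpace Ω} (p t : ℝ) (m r : ℕ) (X : ℕ → Ω → ℕ∞)
    (A : ℕ → Set Ω) (k : ℕ)
    (hred : ∀ i ∈ Finset.Icc 1 (k+1), Measurable[G] (redu m X i))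
    (hAm : ∀ i ∈ Finset.Icc 1 k, MeasurableSet[G] (A i)) :
    Measurable[G] (uP p t m r X A k) ∧ Measurable[G] (uM p t m r X A k) := by
  classical
  have hred' : ∀ i ∈ Finset.Icc 1 k, Measurable[G] (redu m X i) := fun i hi =>
    hred i (by rw [Finset.mem_Icc] at hi ⊢; omega)
  set E : Ω → (Fin (m+1) → Bool × ℕ) × ℕ := fun ω =>
    (fun j => (decide (∀ i ∈ Finset.Icc 1 k, redu m X i ω = j.1 → ω ∈ A i),
               r - countR m X (k+1) j.1 ω), redu m X (k+1) ω) with hE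
  have hEmeas : Measurable[G] E := by
    refine Measurable.prodMk ?_ (hred (k+1) (by rw [Finset.mem_Icc]; omega))
    refine measurable_pi_lambda _ fun j => ?_
    refine Measurable.prodMk ?_ ?_
    · refine measurable_to_countable' fun b => ?_
      cases b
      · have : (fun ω => decide (∀ i ∈ Finset.Icc 1 k, redu m X i ω = j.1 → ω ∈ A i)) ⁻¹' {false}
            = {ω | ∀ i ∈ Finset.Icc 1 k, redu m X i ω = j.1 → ω ∈ A i}ᶜ := by
          ext ω; simp
        rw [this]
        exact (measurable_alive hred' hAm j.1).compl
      · have : (fun ω => decide (∀ i ∈ Finset.Icc 1 k, redu m X i ω = j.1 → ω ∈ A i)) ⁻¹' {true}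
            = {ω | ∀ i ∈ Finset.Icc 1 k, redu m X i ω = j.1 → ω ∈ A i} := by
          ext ω; simp
        rw [this]
        exact measurable_alive hred' hAm j.1
    · exact (measurable_of_countable fun n => r - n).comp (measurable_countR hred j.1)
  have key : ∀ a ∈ Finset.Icc 1 m, ∀ ω,
      (E ω).1 ⟨a % (m+1), Nat.mod_lt _ (Nat.succ_pos m)⟩
        = (decide (∀ i ∈ Finset.Icc 1 k, redu m X i ω = a → ω ∈ A i),
           r - countR m X (k+1) a ω) := by
    intro a ha ω
    rw [Finset.mem_Icc] at ha
    have hmod : a % (m+1) = a := Nat.mod_eq_of_lt (by omega)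
    simp only [hE, hmod]
  have hdecF : ∀ ω, decF m (E ω).1 = aliveF m X A k ω := by
    intro ω
    ext a
    by_cases ham : a ∈ Finset.Icc 1 m
    · rw [decF, Finset.mem_filter, key a ham ω, mem_aliveF]
      simp [ham]
    · rw [decF, Finset.mem_filter, mem_aliveF]
      tauto
  have hdecC : ∀ ω, ∀ a ∈ Finset.Icc 1 m, decC m (E ω).1 a = r - countR m X (k+1) a ω := by
    intro ω a ha
    rw [decC, key a ha ω]
  constructor
  · have he : uP p t m r X A k = (fun x => gfun p t (decF m x.1) (decC m x.1) 0) ∘ E := by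
      funext ω
      show uP p t m r X A k ω = gfun p t (decF m (E ω).1) (decC m (E ω).1) 0
      rw [uP, hdecF ω]
      exact (gfun_congr p t (fun a ha => (hdecC ω a (mem_aliveF.1 ha).1).symm) 0)
    rw [he]
    exact (measurable_of_countable _).comp hEmeas
  · have he : uM p t m r X A k
        = (fun x => gfun p t ((decF m x.1).erase x.2) (decC m x.1) 0) ∘ E := by
      funext ω
      show uM p t m r X A k ω = gfun p t ((decF m (E ω).1).erase (E ω).2) (decC m (E ω).1) 0
      rw [uM, hdecF ω]
      show gfun p t ((aliveF m X A k ω).erase (redu m X (k+1) ω)) _ 0 = _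
      exact (gfun_congr p t (fun a ha =>
        (hdecC ω a (mem_aliveF.1 (Finset.mem_of_mem_erase ha)).1).symm) 0)
    rw [he]
    exact (measurable_of_countable _).comp hEmeas

end Meas

theorem countR_eq_countX {m : ℕ} (X : ℕ → Ω → ℕ∞) {a : ℕ} (ha : a ∈ Finset.Icc 1 m)
    (k : ℕ) (ω : Ω) : countR m X k a ω = countX X k a ω := by
  classical
  rw [countR, countX]
  congr 1
  exact Finset.filter_congr fun i _ => by rw [redu_eq_iff X ha]

theorem aliveF_subset {m : ℕ} {X : ℕ → Ω → ℕ∞} {A : ℕ → Set Ω} {k : ℕ} {ω : Ω} :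
    aliveF m X A k ω ⊆ Finset.Icc 1 m := fun a ha => (mem_aliveF.1 ha).1





theorem gfun_abs_le {p t : ℝ} (hp0 : 0 ≤ p) (hp1 : p ≤ 1) {F : Finset ℕ} {m : ℕ}
    (hF : F ⊆ Finset.Icc 1 m) (c : ℕ → ℕ) (s : ℕ) : |gfun p t F c s| ≤ 2 ^ m := by
  have h1 := gfun_nonneg p t hp0 hp1 F c s
  have h2 := gfun_le p t hp0 hp1 F c s
  have h3 : (2:ℝ) ^ F.card ≤ 2 ^ m := by
    apply pow_le_pow_right₀ (by norm_num)
    calc F.card ≤ (Finset.Icc 1 m).card := Finset.card_le_card hF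
      _ = m := by rw [Nat.card_Icc]; omega
  have h4 : (0:ℝ) < 2^m := by positivity
  rw [abs_le]
  exact ⟨by nlinarith, by nlinarith⟩

theorem step_integral {Ω : Type*} [mΩ : MeasurableSpace Ω] (P : Measure Ω) [IsProbabilityMeasure P]
    (N m r : ℕ) (X : ℕ → Ω → ℕ∞) (hXmeas : ∀ i, @Measurable Ω ℕ∞ _ ⊤ (X i))
    (hXcount : ∀ᵐ ω ∂P, ∀ a ∈ Finset.Icc 1 m, countX X N a ω = r)
    (A : ℕ → Set Ω) (hA : ∀ i, MeasurableSet (A i))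
    (p : ℝ) (hp0 : 0 ≤ p) (hp1 : p ≤ 1) (t : ℝ) {k : ℕ} (hkN : k + 1 ≤ N)
    (hcond : ∀ᵐ ω ∂P,
      p ≤ (P[(A (k+1)).indicator (fun _ => (1 : ℝ)) | sigmaXA X A (k+1)]) ω) :
    ∫ ω, Vf p t m r X A k ω ∂P ≤ ∫ ω, Vf p t m r X A (k+1) ω ∂P := by
  classical
  have hG : sigmaXA X A (k+1) ≤ mΩ := by
    rw [sigmaXA]
    apply sup_le
    · rw [sigmaX]
      exact iSup₂_le fun j _ => (hXmeas j).comap_le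
    · refine iSup₂_le fun j _ => MeasurableSpace.generateFrom_le ?_
      intro s hs
      rw [Set.mem_singleton_iff] at hs
      subst hs
      exact hA j
  have hredG : ∀ i ∈ Finset.Icc 1 (k+1), Measurable[sigmaXA X A (k+1)] (redu m X i) := by
    intro i hi
    refine measurable_redu (le_trans ?_ le_sup_left) m
    exact le_iSup₂ (f := fun j (_ : j ∈ Finset.Icc 1 (k+1)) => MeasurableSpace.comap (X j) ⊤) i hi
  have hAG : ∀ i ∈ Finset.Icc 1 k, MeasurableSet[sigmaXA X A (k+1)] (A i) := by
    intro i hi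
    have h1 : MeasurableSpace.generateFrom {A i} ≤ sigmaXA X A (k+1) := by
      refine le_trans ?_ le_sup_right
      exact le_iSup₂ (f := fun j (_ : j ∈ Finset.Icc 1 (k+1-1)) =>
        MeasurableSpace.generateFrom {A j}) i hi
    exact h1 _ (MeasurableSpace.measurableSet_generateFrom rfl)
  obtain ⟨hmP, hmM⟩ := measurable_uPuM (G := sigmaXA X A (k+1)) p t m r X A k hredG hAG
  have hmP' : Measurable[mΩ] (uP p t m r X A k) := hmP.mono hG le_rfl
  have hmM' : Measurable[mΩ] (uM p t m r X A k) := hmM.mono hG le_rfl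
  have hboundP : ∀ ω, ‖uP p t m r X A k ω‖ ≤ 2 ^ m := fun ω => by
    rw [Real.norm_eq_abs, uP]
    exact gfun_abs_le hp0 hp1 aliveF_subset _ _
  have hboundM : ∀ ω, ‖uM p t m r X A k ω‖ ≤ 2 ^ m := fun ω => by
    rw [Real.norm_eq_abs, uM]
    exact gfun_abs_le hp0 hp1 (fun a ha => aliveF_subset (Finset.mem_of_mem_erase ha)) _ _
  have hiP : Integrable (uP p t m r X A k) P :=
    Integrable.mono' (integrable_const ((2:ℝ)^m))
      (hmP'.aestronglyMeasurable (μ := P))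
      (Filter.Eventually.of_forall hboundP)
  have hiM : Integrable (uM p t m r X A k) P :=
    Integrable.mono' (integrable_const ((2:ℝ)^m)) hmM'.aestronglyMeasurable
      (Filter.Eventually.of_forall hboundM)
  set d : Ω → ℝ := fun ω => uP p t m r X A k ω - uM p t m r X A k ω with hd
  have hmd : Measurable[sigmaXA X A (k+1)] d := hmP.sub hmM
  have hmd' : Measurable[mΩ] d := hmP'.sub hmM' 
  have hid : Integrable d P := hiP.sub hiM
  have hd0 : ∀ ω, 0 ≤ d ω := fun ω => by
    rw [hd]
    have := uM_le_uP t hp0 hp1 m r X A k ω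
    simp only []
    linarith
  set oneA : Ω → ℝ := (A (k+1)).indicator (fun _ => (1:ℝ)) with h1A
  have hi1A : Integrable oneA P := (integrable_const (1:ℝ)).indicator (hA (k+1))
  have hbd : ∃ C, ∀ ω, ‖d ω‖ ≤ C := by
    refine ⟨2^m + 2^m, fun ω => ?_⟩
    rw [hd]
    calc ‖uP p t m r X A k ω - uM p t m r X A k ω‖
        ≤ ‖uP p t m r X A k ω‖ + ‖uM p t m r X A k ω‖ := norm_sub_le _ _
      _ ≤ 2^m + 2^m := add_le_add (hboundP ω) (hboundM ω)
  have hi_d1A : Integrable (d * oneA) P :=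
    Integrable.bdd_mul hi1A (hmd'.aestronglyMeasurable (μ := P)) (Filter.Eventually.of_forall hbd.choose_spec)
  haveI : SigmaFinite (P.trim hG) := inferInstance
  have hpull : P[d * oneA | sigmaXA X A (k+1)] =ᵐ[P] d * P[oneA | sigmaXA X A (k+1)] :=
    condExp_mul_of_stronglyMeasurable_left hmd.stronglyMeasurable hi_d1A hi1A
  have hi_dc : Integrable (d * P[oneA | sigmaXA X A (k+1)]) P :=
    Integrable.bdd_mul integrable_condExp (hmd'.aestronglyMeasurable (μ := P)) (Filter.Eventually.of_forall hbd.choose_spec)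
  -- ∫ Vf (k+1) = ∫ uM + ∫ d * 1A
  have e1 : ∫ ω, Vf p t m r X A (k+1) ω ∂P
      = ∫ ω, uM p t m r X A k ω ∂P + ∫ ω, (d * oneA) ω ∂P := by
    rw [← integral_add hiM hi_d1A]
    refine integral_congr_ae (Filter.Eventually.of_forall fun ω => ?_)
    rw [Vf_succ]
    by_cases hω : ω ∈ A (k+1)
    · rw [if_pos hω]
      simp only [Pi.mul_apply, h1A, Set.indicator_of_mem hω, hd]
      ring
    · rw [if_neg hω]
      simp only [Pi.mul_apply, h1A, Set.indicator_of_notMem hω, hd]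
      ring
  have e2 : ∫ ω, (d * oneA) ω ∂P = ∫ ω, (d * P[oneA | sigmaXA X A (k+1)]) ω ∂P := by
    rw [← integral_condExp hG (f := d * oneA)]
    exact integral_congr_ae hpull
  have e3 : ∫ ω, p * d ω ∂P ≤ ∫ ω, (d * P[oneA | sigmaXA X A (k+1)]) ω ∂P := by
    refine integral_mono_ae (hid.const_mul p) hi_dc ?_
    filter_upwards [hcond] with ω hc
    simp only [Pi.mul_apply]
    have := hd0 ω
    nlinarith
  have e4 : ∫ ω, Vf p t m r X A k ω ∂P
      = ∫ ω, uM p t m r X A k ω ∂P + ∫ ω, p * d ω ∂P := by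
    rw [integral_const_mul]
    have : ∫ ω, d ω ∂P
        = ∫ ω, uP p t m r X A k ω ∂P - ∫ ω, uM p t m r X A k ω ∂P :=
      integral_sub hiP hiM
    rw [this]
    have e5 : ∫ ω, Vf p t m r X A k ω ∂P
        = ∫ ω, (p * uP p t m r X A k ω + (1-p) * uM p t m r X A k ω) ∂P := by
      refine (integral_congr_ae ?_).symm
      filter_upwards [hXcount] with ω hω
      refine step_pointwise t hp0 hp1 N m r X A hkN fun a ha => ?_
      rw [countR_eq_countX X ha N ω]
      exact hω a ha
    rw [e5, integral_add (hiP.const_mul p) (hiM.const_mul (1-p)),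
      integral_const_mul, integral_const_mul]
    ring
  rw [e1, e4]
  have := le_trans e3 (le_of_eq e2.symm)
  linarith

/-- **Lemma (counters).** Let `X_1, …, X_N` take values in `{1,…,m} ∪ {∞}`, a.s. each
`a ∈ {1,…,m}` appearing exactly `r` times, let `A_1, …, A_N` be events with
`P(A_i ∣ F_i) ≥ p` a.s. where `F_i = σ(X_1,…,X_i,A_1,…,A_{i-1})`, and let
`G_a = ⋂_i ({X_i ≠ a} ∪ A_i)`.  Then `Σ_a 1_{G_a}` stochastically dominates `Bin(m, p^r)`:
for every `t ∈ ℝ`, `P(Σ_a 1_{G_a} ≥ t) ≥ P(Bin(m, p^r) ≥ t)`. -/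
theorem counters_dominate_binomial {Ω : Type*} [MeasurableSpace Ω]
    (P : Measure Ω) [IsProbabilityMeasure P]
    (N m r : ℕ) (hN : 0 < N) (hm : 0 < m) (hr : 0 < r)
    (X : ℕ → Ω → ℕ∞) (hXmeas : ∀ i, @Measurable Ω ℕ∞ _ ⊤ (X i))
    (hXval : ∀ᵐ ω ∂P, ∀ i ∈ Finset.Icc 1 N,
      X i ω = ⊤ ∨ ∃ a ∈ Finset.Icc 1 m, X i ω = (a : ℕ∞))
    (hXcount : ∀ᵐ ω ∂P, ∀ a ∈ Finset.Icc 1 m, countX X N a ω = r)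
    (A : ℕ → Set Ω) (hA : ∀ i, MeasurableSet (A i))
    (p : ℝ) (hp0 : 0 ≤ p) (hp1 : p ≤ 1)
    (hcond : ∀ i ∈ Finset.Icc 1 N, ∀ᵐ ω ∂P,
      p ≤ (P[(A i).indicator (fun _ => (1 : ℝ)) | sigmaXA X A i]) ω) :
    ∀ t : ℝ,
      (∑ j ∈ Finset.range (m + 1), if t ≤ (j : ℝ) then
          (m.choose j : ℝ) * (p ^ r) ^ j * (1 - p ^ r) ^ (m - j) else 0) ≤
        (P {ω | t ≤ (Nat.card {a : ℕ // a ∈ Finset.Icc 1 m ∧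
          ∀ i ∈ Finset.Icc 1 N, X i ω = (a : ℕ∞) → ω ∈ A i} : ℝ)}).toReal := by
  intro t
  classical
  have hmono : ∀ k, k ≤ N → ∫ ω, Vf p t m r X A 0 ω ∂P ≤ ∫ ω, Vf p t m r X A k ω ∂P := by
    intro k
    induction k with
    | zero => intro _; exact le_rfl
    | succ n ih =>
      intro hk
      refine le_trans (ih (by omega)) ?_
      exact step_integral P N m r X hXmeas hXcount A hA p hp0 hp1 t hk
        (hcond (n+1) (by rw [Finset.mem_Icc]; omega))
  have h0 : ∫ ω, Vf p t m r X A 0 ω ∂P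
      = ∑ j ∈ Finset.range (m + 1), if t ≤ (j : ℝ) then
          (m.choose j : ℝ) * (p ^ r) ^ j * (1 - p ^ r) ^ (m - j) else 0 := by
    have hVconst : ∀ ω : Ω, Vf p t m r X A 0 ω = gfun p t (Finset.Icc 1 m) (fun _ => r) 0 := by
      intro ω
      rw [Vf]
      have h1 : aliveF m X A 0 ω = Finset.Icc 1 m := by
        ext a
        rw [mem_aliveF]
        simp
      have h2 : ∀ a ∈ Finset.Icc 1 m, r - countR m X 0 a ω = (fun _ : ℕ => r) a := by
        intro a _
        have hc0 : countR m X 0 a ω = 0 := by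
          rw [countR]
          simp
        simp only [hc0]
        omega
      rw [h1, gfun_congr p t h2 0]
    rw [show (fun ω => Vf p t m r X A 0 ω)
        = fun _ : Ω => gfun p t (Finset.Icc 1 m) (fun _ => r) 0 from funext hVconst]
    rw [integral_const, probReal_univ, one_smul, gfun_binomial]
  set S0 := {ω : Ω | t ≤ ((aliveF m X A N ω).card : ℝ)} with hS0def
  have hcardmeas : Measurable fun ω => ((aliveF m X A N ω).card : ℝ) := by
    have h1 : (fun ω => (aliveF m X A N ω).card)
        = fun ω => ∑ a ∈ Finset.Icc 1 m,
            if (∀ i ∈ Finset.Icc 1 N, redu m X i ω = a → ω ∈ A i) then 1 else 0 := by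
      funext ω; rw [aliveF, Finset.card_filter]
    have h2 : Measurable fun ω => (aliveF m X A N ω).card := by
      rw [h1]
      refine Finset.measurable_sum _ fun a _ =>
        Measurable.ite ?_ measurable_const measurable_const
      exact measurable_alive (fun i _ => measurable_redu (hXmeas i).comap_le m)
        (fun i _ => hA i) a
    exact (measurable_of_countable fun n : ℕ => ((n:ℝ))).comp h2
  have hS0 : MeasurableSet S0 := measurableSet_le measurable_const hcardmeas
  have hNint : ∫ ω, Vf p t m r X A N ω ∂P = (P S0).toReal := by
    have heq : ∫ ω, Vf p t m r X A N ω ∂P = ∫ ω, S0.indicator (1 : Ω → ℝ) ω ∂P := by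
      refine integral_congr_ae ?_
      filter_upwards [hXcount] with ω hω
      have hzero : ∀ a ∈ aliveF m X A N ω, r - countR m X N a ω = 0 := by
        intro a ha
        have ham := (mem_aliveF.1 ha).1
        rw [countR_eq_countX X ham, hω a ham]
        omega
      have hv : Vf p t m r X A N ω
          = if t ≤ ((aliveF m X A N ω).card : ℝ) then 1 else 0 := by
        rw [Vf, gfun_zero p t hzero 0]
        norm_num
      rw [hv, Set.indicator_apply, Pi.one_apply]
      by_cases h : t ≤ ((aliveF m X A N ω).card : ℝ)
      · rw [if_pos h, if_pos (show ω ∈ S0 from h)]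
      · rw [if_neg h, if_neg (show ω ∉ S0 from h)]
    rw [heq, integral_indicator_one hS0]; rfl
  have hseteq : {ω : Ω | t ≤ (Nat.card {a : ℕ // a ∈ Finset.Icc 1 m ∧
      ∀ i ∈ Finset.Icc 1 N, X i ω = (a : ℕ∞) → ω ∈ A i} : ℝ)} = S0 := by
    ext ω
    simp only [Set.mem_setOf_eq, hS0def]
    have hcardeq : Nat.card {a : ℕ // a ∈ Finset.Icc 1 m ∧
        ∀ i ∈ Finset.Icc 1 N, X i ω = (a : ℕ∞) → ω ∈ A i} = (aliveF m X A N ω).card := by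
      have hiff : ∀ a : ℕ, (a ∈ Finset.Icc 1 m ∧
          ∀ i ∈ Finset.Icc 1 N, X i ω = (a : ℕ∞) → ω ∈ A i) ↔ a ∈ aliveF m X A N ω := by
        intro a
        rw [mem_aliveF]
        constructor
        · rintro ⟨h1, h2⟩
          exact ⟨h1, fun i hi hr => h2 i hi ((redu_eq_iff X h1).1 hr)⟩
        · rintro ⟨h1, h2⟩
          exact ⟨h1, fun i hi hx => h2 i hi ((redu_eq_iff X h1).2 hx)⟩
      rw [Nat.card_congr (Equiv.subtypeEquivRight hiff), Nat.card_eq_fintype_card,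
        Fintype.card_coe]
    rw [hcardeq]
  rw [hseteq, ← hNint, ← h0]
  exact hmono N le_rfl

end
end

section
/- Let X_1,…,X_N be random variables taking values in {1,…,m} ∪ {∞} such that almost surely each a ∈ {1,…,m} appears exactly r times. Set S_k(a) = #{i ≤ k : X_i = a} (so S_k(a) ≤ r), let F̂_k = σ(X_1,…,X_k), and suppose that for some c > 0 and all a ∈ {1,…,m} and 0 ≤ k < N, almost surely on the event {S_k(a) < r} one has P(X_{k+1} = a | F̂_k) > c/m. Let D_k = #{a ∈ {1,…,m} : S_k(a) = r}. Then for every ε > 0 there exist constants c₁, c₂ > 0, depending only on c, r and ε (and in particular not on m or N), such that P(D_K ≤ (1−ε)m) < e^{−c₂ m}, where K = min(⌈c₁ m⌉, N). -/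
open MeasureTheory

noncomputable section

section Helpers

set_option linter.unusedSectionVars false

variable {Ω : Type*} [m0 : MeasurableSpace Ω]

lemma sigmaX_le (X : ℕ → Ω → ℕ∞) (hX : ∀ i, @Measurable Ω ℕ∞ _ ⊤ (X i)) (k : ℕ) :
    sigmaX X k ≤ m0 := by
  apply iSup_le; intro i; apply iSup_le; intro _
  exact measurable_iff_comap_le.mp (hX i)

lemma measurableSet_X_eq (X : ℕ → Ω → ℕ∞) {k i : ℕ} (hi : i ∈ Finset.Icc 1 k) (a : ℕ∞) :
    MeasurableSet[sigmaX X k] {ω | X i ω = a} := by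
  have h1 : MeasurableSpace.comap (X i) ⊤ ≤ sigmaX X k :=
    le_iSup₂ (f := fun j _ => MeasurableSpace.comap (X j) ⊤) i hi
  exact h1 _ ⟨{a}, trivial, rfl⟩

lemma measurable_countX (X : ℕ → Ω → ℕ∞) (k a : ℕ) :
    Measurable[sigmaX X k] fun ω => countX X k a ω := by
  have h : (fun ω => countX X k a ω)
      = fun ω => ∑ i ∈ Finset.Icc 1 k, if X i ω = (a : ℕ∞) then 1 else 0 := by
    funext ω; exact Finset.card_filter _ _
  rw [h]
  exact Finset.measurable_sum _ fun i hi =>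
    Measurable.ite (measurableSet_X_eq X hi a) measurable_const measurable_const

lemma countX_mono (X : ℕ → Ω → ℕ∞) {k k' : ℕ} (h : k ≤ k') (a : ℕ) (ω : Ω) :
    countX X k a ω ≤ countX X k' a ω :=
  Finset.card_le_card (Finset.filter_subset_filter _ (Finset.Icc_subset_Icc_right h))

lemma countX_succ (X : ℕ → Ω → ℕ∞) (k a : ℕ) (ω : Ω) :
    countX X (k+1) a ω = countX X k a ω + (if X (k+1) ω = (a : ℕ∞) then 1 else 0) := by
  classical
  unfold countX
  rw [← Finset.insert_Icc_right_eq_Icc_add_one (by omega : 1 ≤ k+1), Finset.filter_insert]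
  split
  · rw [Finset.card_insert_of_notMem (by simp [Finset.mem_filter])]
  · simp

lemma integrable_of_bdd {P : Measure Ω} [IsFiniteMeasure P] {f : Ω → ℝ} {C : ℝ}
    (hf : AEStronglyMeasurable f P) (h : ∀ ω, ‖f ω‖ ≤ C) : Integrable f P :=
  ⟨hf, HasFiniteIntegral.of_bounded (Filter.Eventually.of_forall h)⟩

/-- The weight `A_k = 1_{D_k ≤ (1-ε)m}`. -/
def AA (r : ℕ) (ε : ℝ) (m : ℕ) (X : ℕ → Ω → ℕ∞) (k : ℕ) (ω : Ω) : ℝ :=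
  if ((((Finset.Icc 1 m).filter fun a => countX X k a ω = r).card : ℝ) ≤ (1 - ε) * m)
    then 1 else 0

/-- `T_k = ∑_a S_k(a)`. -/
def TT (m : ℕ) (X : ℕ → Ω → ℕ∞) (k : ℕ) (ω : Ω) : ℝ :=
  ∑ a ∈ Finset.Icc 1 m, (countX X k a ω : ℝ)

/-- `W_k = A_k e^{-T_k}`. -/
def WW (r : ℕ) (ε : ℝ) (m : ℕ) (X : ℕ → Ω → ℕ∞) (k : ℕ) (ω : Ω) : ℝ :=
  AA r ε m X k ω * Real.exp (-(TT m X k ω))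

lemma measurable_DD (r m : ℕ) (X : ℕ → Ω → ℕ∞) (k : ℕ) :
    Measurable[sigmaX X k] fun ω =>
      ((((Finset.Icc 1 m).filter fun a => countX X k a ω = r).card : ℝ)) := by
  classical
  have h : (fun ω => ((((Finset.Icc 1 m).filter fun a => countX X k a ω = r).card : ℝ)))
      = fun ω => ∑ a ∈ Finset.Icc 1 m, if countX X k a ω = r then (1:ℝ) else 0 := by
    funext ω; rw [Finset.sum_boole]
  rw [h]
  exact Finset.measurable_sum _ fun a _ =>
    Measurable.ite ((measurable_countX X k a) (measurableSet_singleton r))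
      measurable_const measurable_const

lemma measurable_AA (r : ℕ) (ε : ℝ) (m : ℕ) (X : ℕ → Ω → ℕ∞) (k : ℕ) :
    Measurable[sigmaX X k] (AA r ε m X k) := by
  unfold AA
  exact Measurable.ite (measurableSet_le (measurable_DD r m X k) measurable_const)
    measurable_const measurable_const

lemma measurable_TT (m : ℕ) (X : ℕ → Ω → ℕ∞) (k : ℕ) :
    Measurable[sigmaX X k] (TT m X k) := by
  unfold TT
  exact Finset.measurable_sum _ fun a _ =>
    measurable_from_top.comp (measurable_countX X k a)

lemma measurable_WW (r : ℕ) (ε : ℝ) (m : ℕ) (X : ℕ → Ω → ℕ∞) (k : ℕ) :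
    Measurable[sigmaX X k] (WW r ε m X k) :=
  (measurable_AA r ε m X k).mul (Real.measurable_exp.comp (measurable_TT m X k).neg)

lemma TT_nonneg (m : ℕ) (X : ℕ → Ω → ℕ∞) (k : ℕ) (ω : Ω) : 0 ≤ TT m X k ω :=
  Finset.sum_nonneg fun a _ => by positivity

lemma AA_zero_or_one (r : ℕ) (ε : ℝ) (m : ℕ) (X : ℕ → Ω → ℕ∞) (k : ℕ) (ω : Ω) :
    AA r ε m X k ω = 0 ∨ AA r ε m X k ω = 1 := by
  unfold AA; split <;> simp

lemma WW_nonneg (r : ℕ) (ε : ℝ) (m : ℕ) (X : ℕ → Ω → ℕ∞) (k : ℕ) (ω : Ω) :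
    0 ≤ WW r ε m X k ω := by
  unfold WW AA; split <;> positivity

lemma WW_le_one (r : ℕ) (ε : ℝ) (m : ℕ) (X : ℕ → Ω → ℕ∞) (k : ℕ) (ω : Ω) :
    WW r ε m X k ω ≤ 1 := by
  have h1 : Real.exp (-(TT m X k ω)) ≤ 1 := by
    rw [Real.exp_le_one_iff]; linarith [TT_nonneg m X k ω]
  unfold WW AA; split
  · simpa using h1
  · rw [zero_mul]; norm_num

lemma norm_WW_le_one (r : ℕ) (ε : ℝ) (m : ℕ) (X : ℕ → Ω → ℕ∞) (k : ℕ) (ω : Ω) :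
    ‖WW r ε m X k ω‖ ≤ 1 := by
  rw [Real.norm_eq_abs, abs_of_nonneg (WW_nonneg r ε m X k ω)]
  exact WW_le_one r ε m X k ω

lemma integrable_WW (r : ℕ) (ε : ℝ) (m : ℕ) (X : ℕ → Ω → ℕ∞)
    (hXm : ∀ i, @Measurable Ω ℕ∞ _ ⊤ (X i)) (k : ℕ)
    (P : Measure Ω) [IsProbabilityMeasure P] :
    Integrable (WW r ε m X k) P :=
  integrable_of_bdd ((measurable_WW r ε m X k).mono (sigmaX_le X hXm k)
    le_rfl).aestronglyMeasurable (norm_WW_le_one r ε m X k)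

end Helpers

section Step

set_option linter.unusedSectionVars false
set_option maxHeartbeats 1000000

variable {Ω : Type*} [m0 : MeasurableSpace Ω]

lemma step_bound (r : ℕ) (hr : 0 < r) (c ε ρ : ℝ) (hc : 0 < c) (hε : 0 < ε)
    (hρ : ρ = max (1 - (1 - Real.exp (-1)) * (c * ε)) (Real.exp (-1)))
    (P : Measure Ω) [IsProbabilityMeasure P] (N m : ℕ) (hm : 0 < m)
    (X : ℕ → Ω → ℕ∞) (hXm : ∀ i, @Measurable Ω ℕ∞ _ ⊤ (X i))
    (htotal : ∀ᵐ ω ∂P, ∀ a ∈ Finset.Icc 1 m, countX X N a ω = r)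
    (hcond : ∀ a ∈ Finset.Icc 1 m, ∀ k < N, ∀ᵐ ω ∂P, countX X k a ω < r →
      c / m < (P[Set.indicator {ω' | X (k + 1) ω' = (a : ℕ∞)}
        (fun _ => (1 : ℝ)) | sigmaX X k]) ω)
    (k : ℕ) (hk : k + 1 ≤ N) :
    ∫ ω, WW r ε m X (k+1) ω ∂P ≤ ρ * ∫ ω, WW r ε m X k ω ∂P := by
  classical
  have hle : sigmaX X k ≤ m0 := sigmaX_le X hXm k
  haveI hsf : SigmaFinite (P.trim hle) := inferInstance
  set f : ℕ → Ω → ℝ :=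
    fun a => Set.indicator {ω' | X (k + 1) ω' = (a : ℕ∞)} (fun _ => (1 : ℝ)) with hfdef
  have hf01 : ∀ (a : ℕ) (ω : Ω), f a ω = if X (k+1) ω = (a : ℕ∞) then 1 else 0 := by
    intro a ω; simp [hfdef, Set.indicator_apply, Set.mem_setOf_eq]
  set inc : Ω → ℝ := fun ω => ∑ a ∈ Finset.Icc 1 m, f a ω with hincdef
  have hinc_card : ∀ ω, inc ω
      = (((Finset.Icc 1 m).filter fun a : ℕ => X (k+1) ω = (a : ℕ∞)).card : ℝ) := by
    intro ω
    have h1 : inc ω = ∑ a ∈ Finset.Icc 1 m, (if X (k+1) ω = (a : ℕ∞) then (1:ℝ) else 0) := by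
      rw [hincdef]; exact Finset.sum_congr rfl fun a _ => hf01 a ω
    rw [h1, Finset.card_filter, Nat.cast_sum]
    exact Finset.sum_congr rfl fun a _ => by split <;> simp
  have hinc01 : ∀ ω, inc ω = 0 ∨ inc ω = 1 := by
    intro ω
    rw [hinc_card]
    have hcard : (((Finset.Icc 1 m).filter fun a : ℕ => X (k+1) ω = (a : ℕ∞)).card) ≤ 1 := by
      apply Finset.card_le_one.mpr
      intro a ha b hb
      simp only [Finset.mem_filter] at ha hb
      have h2 := ha.2.symm.trans hb.2
      exact_mod_cast h2
    rcases Nat.le_one_iff_eq_zero_or_eq_one.mp hcard with h | h <;> simp [h]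
  have hinc_nonneg : ∀ ω, 0 ≤ inc ω := by
    intro ω; rcases hinc01 ω with h | h <;> rw [h] <;> norm_num
  set g : Ω → ℝ := fun ω => Real.exp (-(inc ω)) with hgdef
  have hg_eq : ∀ ω, g ω = 1 - (1 - Real.exp (-1)) * inc ω := by
    intro ω; rcases hinc01 ω with h | h <;> simp only [hgdef, h] <;> simp <;> ring
  have hXsetm : ∀ a : ℕ, MeasurableSet {ω | X (k+1) ω = (a : ℕ∞)} :=
    fun a => (hXm (k+1)) (show MeasurableSet[⊤] {((a : ℕ∞))} from trivial)
  have hf_meas : ∀ a : ℕ, Measurable (f a) :=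
    fun a => measurable_const.indicator (hXsetm a)
  have hf_int : ∀ a ∈ Finset.Icc 1 m, Integrable (f a) P := fun a _ =>
    integrable_of_bdd (C := 1) (hf_meas a).aestronglyMeasurable
      (fun ω => by rw [hf01]; split <;> simp)
  have hinc_meas : Measurable inc := Finset.measurable_sum _ fun a _ => hf_meas a
  have hg_meas : Measurable g := Real.measurable_exp.comp hinc_meas.neg
  have hg_bd : ∀ ω, ‖g ω‖ ≤ 1 := by
    intro ω
    rw [Real.norm_eq_abs, abs_of_pos (Real.exp_pos _), Real.exp_le_one_iff]
    linarith [hinc_nonneg ω]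
  have hg_int : Integrable g P := integrable_of_bdd hg_meas.aestronglyMeasurable hg_bd
  have hinc_int : Integrable inc P :=
    integrable_of_bdd (C := 1) hinc_meas.aestronglyMeasurable
      (fun ω => by rcases hinc01 ω with h | h <;> rw [Real.norm_eq_abs, h] <;> norm_num)
  have hcond_inc : P[inc | sigmaX X k] =ᵐ[P] ∑ a ∈ Finset.Icc 1 m, P[f a | sigmaX X k] := by
    have h1 : inc = ∑ a ∈ Finset.Icc 1 m, f a := by
      funext ω; rw [hincdef]; rw [Finset.sum_apply]
    rw [h1]
    exact condExp_finsetSum hf_int _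
  have hcond_g : P[g | sigmaX X k]
      =ᵐ[P] fun ω => 1 - (1 - Real.exp (-1)) * (P[inc | sigmaX X k]) ω := by
    have h1 : g = (fun _ => (1:ℝ)) - (1 - Real.exp (-1)) • inc := by
      funext ω
      simp only [Pi.sub_apply, Pi.smul_apply, smul_eq_mul]
      rw [hg_eq ω]
    rw [h1]
    have h2 := condExp_sub (m := sigmaX X k) (μ := P)
      (integrable_const (1:ℝ)) (hinc_int.smul (1 - Real.exp (-1)))
    refine h2.trans ?_
    have h4 := condExp_smul (μ := P) (m := sigmaX X k) (1 - Real.exp (-1)) inc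
    filter_upwards [h4] with ω hω
    have h3 : (P[fun _ => (1:ℝ) | sigmaX X k]) ω = 1 := by
      rw [condExp_const hle]
    simp only [Pi.sub_apply, h3, hω, Pi.smul_apply, smul_eq_mul]
  have hp_nonneg : ∀ a ∈ Finset.Icc 1 m, (0 : Ω → ℝ) ≤ᵐ[P] P[f a | sigmaX X k] :=
    fun a _ => condExp_nonneg (Filter.Eventually.of_forall fun ω => by
      rw [Pi.zero_apply, hf01]; split <;> norm_num)
  -- counts are bounded by r a.e. at times k and k+1
  have hbd : ∀ᵐ ω ∂P, ∀ a ∈ Finset.Icc 1 m,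
      countX X (k+1) a ω ≤ r ∧ countX X k a ω ≤ r := by
    filter_upwards [htotal] with ω hω a ha
    constructor
    · calc countX X (k+1) a ω ≤ countX X N a ω := countX_mono X hk a ω
        _ = r := hω a ha
    · calc countX X k a ω ≤ countX X N a ω := countX_mono X (by omega) a ω
        _ = r := hω a ha
  -- T_{k+1} = T_k + inc
  have hTsucc : ∀ ω, TT m X (k+1) ω = TT m X k ω + inc ω := by
    intro ω
    have h5 : ∀ a : ℕ, (countX X (k+1) a ω : ℝ)
        = (countX X k a ω : ℝ) + (if X (k+1) ω = (a : ℕ∞) then (1:ℝ) else 0) := by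
      intro a
      rw [countX_succ, Nat.cast_add]
      congr 1
      split <;> simp
    unfold TT
    rw [Finset.sum_congr rfl (fun a _ => h5 a), Finset.sum_add_distrib]
    congr 1
    rw [hincdef]
    exact (Finset.sum_congr rfl fun a _ => (hf01 a _).symm)
  -- A_{k+1} ≤ A_k a.e.
  have hAmono : ∀ᵐ ω ∂P, AA r ε m X (k+1) ω ≤ AA r ε m X k ω := by
    filter_upwards [hbd] with ω hω
    have hsub : ((Finset.Icc 1 m).filter fun a => countX X k a ω = r)
        ⊆ ((Finset.Icc 1 m).filter fun a => countX X (k+1) a ω = r) := by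
      intro a ha
      simp only [Finset.mem_filter] at ha ⊢
      refine ⟨ha.1, le_antisymm ((hω a ha.1).1) ?_⟩
      calc r = countX X k a ω := ha.2.symm
        _ ≤ countX X (k+1) a ω := countX_mono X (by omega) a ω
    have hcard := Finset.card_le_card hsub
    unfold AA
    split_ifs with h1 h2
    · exact le_refl _
    · exact absurd (le_trans (by exact_mod_cast hcard) h1) h2
    · norm_num
    · exact le_refl _
  -- pointwise: W_{k+1} ≤ W_k * g
  have hptwise : ∀ᵐ ω ∂P, WW r ε m X (k+1) ω ≤ WW r ε m X k ω * g ω := by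
    filter_upwards [hAmono] with ω hA
    have hx : (0:ℝ) ≤ Real.exp (-(TT m X k ω)) * Real.exp (-(inc ω)) := by positivity
    unfold WW
    calc AA r ε m X (k+1) ω * Real.exp (-(TT m X (k+1) ω))
        = AA r ε m X (k+1) ω * (Real.exp (-(TT m X k ω)) * Real.exp (-(inc ω))) := by
          rw [hTsucc ω, neg_add, Real.exp_add]
      _ ≤ AA r ε m X k ω * (Real.exp (-(TT m X k ω)) * Real.exp (-(inc ω))) :=
          mul_le_mul_of_nonneg_right hA hx
      _ = AA r ε m X k ω * Real.exp (-(TT m X k ω)) * g ω := by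
          rw [hgdef]; ring
  have hWk_meas0 : Measurable (WW r ε m X k) := (measurable_WW r ε m X k).mono hle le_rfl
  have hWg_int : Integrable (fun ω => WW r ε m X k ω * g ω) P := by
    refine integrable_of_bdd (C := 1) ((hWk_meas0.mul hg_meas).aestronglyMeasurable) ?_
    intro ω
    rw [norm_mul]
    calc ‖WW r ε m X k ω‖ * ‖g ω‖ ≤ 1 * 1 :=
      mul_le_mul (norm_WW_le_one r ε m X k ω) (hg_bd ω) (norm_nonneg _) zero_le_one
    _ = 1 := by norm_num
  have hWg_int' : Integrable ((WW r ε m X k) * g) P := hWg_int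
  have hpull : P[(WW r ε m X k) * g | sigmaX X k]
      =ᵐ[P] (WW r ε m X k) * P[g | sigmaX X k] :=
    condExp_mul_of_stronglyMeasurable_left (measurable_WW r ε m X k).stronglyMeasurable
      hWg_int' hg_int
  -- conditional bound : on {A_k = 1}, P[g|F_k] ≤ ρ
  have hcond_bd : ∀ᵐ ω ∂P, AA r ε m X k ω = 1 → (P[g | sigmaX X k]) ω ≤ ρ := by
    have hae_cond : ∀ᵐ ω ∂P, ∀ a ∈ Finset.Icc 1 m,
        (countX X k a ω < r → c / m < (P[f a | sigmaX X k]) ω) := by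
      rw [Filter.eventually_all_finset]
      intro a ha
      exact hcond a ha k (by omega)
    have hae_nonneg : ∀ᵐ ω ∂P, ∀ a ∈ Finset.Icc 1 m, 0 ≤ (P[f a | sigmaX X k]) ω := by
      rw [Filter.eventually_all_finset]
      intro a ha
      filter_upwards [hp_nonneg a ha] with ω hω using hω
    have hsum_eq : ∀ᵐ ω ∂P, (P[inc | sigmaX X k]) ω
        = ∑ a ∈ Finset.Icc 1 m, (P[f a | sigmaX X k]) ω := by
      filter_upwards [hcond_inc] with ω hω
      rw [hω, Finset.sum_apply]
    filter_upwards [hae_cond, hae_nonneg, hsum_eq, hcond_g, hbd] with ω h1 h2 h3 h4 h5 hA1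
    have hDle : ((((Finset.Icc 1 m).filter fun a => countX X k a ω = r).card : ℝ))
        ≤ (1 - ε) * m := by
      by_contra hcon
      unfold AA at hA1
      rw [if_neg hcon] at hA1
      norm_num at hA1
    have hUF : ((Finset.Icc 1 m).filter fun a => countX X k a ω < r)
        = (Finset.Icc 1 m).filter fun a => ¬(countX X k a ω = r) := by
      apply Finset.filter_congr
      intro a ha
      have := (h5 a ha).2
      constructor
      · intro h; omega
      · intro h; omega
    have hcards : ((Finset.Icc 1 m).filter fun a => countX X k a ω = r).card
        + ((Finset.Icc 1 m).filter fun a => countX X k a ω < r).card = m := by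
      rw [hUF, Finset.card_filter_add_card_filter_not, Nat.card_Icc]
      omega
    have hm0 : (0:ℝ) < m := by exact_mod_cast hm
    have hUcard : ε * m ≤ ((((Finset.Icc 1 m).filter fun a => countX X k a ω < r).card : ℝ)) := by
      have h6 : ((((Finset.Icc 1 m).filter fun a => countX X k a ω = r).card : ℝ))
          + (((Finset.Icc 1 m).filter fun a => countX X k a ω < r).card : ℝ) = m := by
        exact_mod_cast hcards
      linarith
    have hsum_ge : c * ε ≤ ∑ a ∈ Finset.Icc 1 m, (P[f a | sigmaX X k]) ω := by
      set U := (Finset.Icc 1 m).filter fun a => countX X k a ω < r with hUdef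
      have hsub : U ⊆ Finset.Icc 1 m := Finset.filter_subset _ _
      have h6 : ∑ _a ∈ U, (c / m) ≤ ∑ a ∈ U, (P[f a | sigmaX X k]) ω :=
        Finset.sum_le_sum fun a ha =>
          le_of_lt (h1 a (hsub ha) (Finset.mem_filter.mp ha).2)
      have h7 : ∑ a ∈ U, (P[f a | sigmaX X k]) ω
          ≤ ∑ a ∈ Finset.Icc 1 m, (P[f a | sigmaX X k]) ω :=
        Finset.sum_le_sum_of_subset_of_nonneg hsub fun a ha _ => h2 a ha
      have h8 : ∑ _a ∈ U, (c / m) = (U.card : ℝ) * (c / m) := by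
        rw [Finset.sum_const, nsmul_eq_mul]
      have h9 : c * ε ≤ (U.card : ℝ) * (c / m) := by
        have h10 : c * ε = (ε * m) * (c / m) := by field_simp
        rw [h10]
        exact mul_le_mul_of_nonneg_right hUcard (by positivity)
      linarith
    have he : (0:ℝ) ≤ 1 - Real.exp (-1) := by
      have : Real.exp (-1:ℝ) ≤ 1 := by rw [Real.exp_le_one_iff]; norm_num
      linarith
    calc (P[g | sigmaX X k]) ω
        = 1 - (1 - Real.exp (-1)) * (P[inc | sigmaX X k]) ω := h4
      _ ≤ 1 - (1 - Real.exp (-1)) * (c * ε) := by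
          rw [h3]; nlinarith [hsum_ge, he]
      _ ≤ ρ := by rw [hρ]; exact le_max_left _ _
  -- integrability of the remaining players
  have hWk1_int : Integrable (WW r ε m X (k+1)) P := integrable_WW r ε m X hXm (k+1) P
  have hWk_int : Integrable (WW r ε m X k) P := integrable_WW r ε m X hXm k P
  have hWρ_int : Integrable (fun ω => WW r ε m X k ω * ρ) P := hWk_int.mul_const ρ
  have hcexp_int : Integrable (P[g | sigmaX X k]) P := integrable_condExp
  have hWcexp_int : Integrable (fun ω => WW r ε m X k ω * (P[g | sigmaX X k]) ω) P :=
    hcexp_int.bdd_mul hWk_meas0.aestronglyMeasurable (c := 1) (Filter.Eventually.of_forall (norm_WW_le_one r ε m X k))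
  calc ∫ ω, WW r ε m X (k+1) ω ∂P
      ≤ ∫ ω, WW r ε m X k ω * g ω ∂P := integral_mono_ae hWk1_int hWg_int hptwise
    _ = ∫ ω, (P[(WW r ε m X k) * g | sigmaX X k]) ω ∂P :=
        (integral_condExp (f := (WW r ε m X k) * g) hle).symm
    _ = ∫ ω, WW r ε m X k ω * (P[g | sigmaX X k]) ω ∂P := by
        refine integral_congr_ae (hpull.mono fun ω hω => ?_)
        simpa [Pi.mul_apply] using hω
    _ ≤ ∫ ω, WW r ε m X k ω * ρ ∂P := by
        refine integral_mono_ae hWcexp_int hWρ_int ?_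
        filter_upwards [hcond_bd] with ω hω
        rcases AA_zero_or_one r ε m X k ω with hA0 | hA1
        · have hW0 : WW r ε m X k ω = 0 := by unfold WW; rw [hA0, zero_mul]
          simp [hW0]
        · exact mul_le_mul_of_nonneg_left (hω hA1) (WW_nonneg r ε m X k ω)
    _ = ρ * ∫ ω, WW r ε m X k ω ∂P := by rw [integral_mul_const, mul_comm]

end Step

section Final

set_option linter.unusedSectionVars false
set_option maxHeartbeats 1000000

variable {Ω : Type*} [m0 : MeasurableSpace Ω]

lemma main_bound (r : ℕ) (hr : 0 < r) (c ε ρ : ℝ) (hc : 0 < c) (hε : 0 < ε)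
    (hρ : ρ = max (1 - (1 - Real.exp (-1)) * (c * ε)) (Real.exp (-1)))
    (P : Measure Ω) [IsProbabilityMeasure P] (N m : ℕ) (hm : 0 < m)
    (X : ℕ → Ω → ℕ∞) (hXm : ∀ i, @Measurable Ω ℕ∞ _ ⊤ (X i))
    (htotal : ∀ᵐ ω ∂P, ∀ a ∈ Finset.Icc 1 m, countX X N a ω = r)
    (hcond : ∀ a ∈ Finset.Icc 1 m, ∀ k < N, ∀ᵐ ω ∂P, countX X k a ω < r →
      c / m < (P[Set.indicator {ω' | X (k + 1) ω' = (a : ℕ∞)}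
        (fun _ => (1 : ℝ)) | sigmaX X k]) ω)
    (K : ℕ) (hK : K ≤ N) :
    ∫ ω, WW r ε m X K ω ∂P ≤ ρ ^ K := by
  have hρ0 : (0:ℝ) ≤ ρ := le_trans (Real.exp_pos _).le (hρ ▸ le_max_right _ _)
  induction K with
  | zero =>
    rw [pow_zero]
    calc ∫ ω, WW r ε m X 0 ω ∂P ≤ ∫ _ω, (1:ℝ) ∂P :=
          integral_mono (integrable_WW r ε m X hXm 0 P) (integrable_const 1)
            (fun ω => WW_le_one r ε m X 0 ω)
      _ = 1 := by simp
  | succ k ih =>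
    calc ∫ ω, WW r ε m X (k+1) ω ∂P
        ≤ ρ * ∫ ω, WW r ε m X k ω ∂P :=
          step_bound r hr c ε ρ hc hε hρ P N m hm X hXm htotal hcond k hK
      _ ≤ ρ * ρ ^ k := mul_le_mul_of_nonneg_left (ih (by omega)) hρ0
      _ = ρ ^ (k+1) := by rw [pow_succ]; ring

end Final

set_option maxHeartbeats 1000000 in
/-- **Lemma (linear time estimate).** Let `X_1, …, X_N` take values in `{1,…,m} ∪ {∞}`,
a.s. each `a ∈ {1,…,m}` appearing exactly `r` times, and suppose that on the event
`{S_k(a) < r}` one a.s. has `P(X_{k+1} = a ∣ σ(X_1,…,X_k)) > c/m`.  Let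
`D_k = #{a : S_k(a) = r}`.  For every `ε > 0` there are constants `c₁, c₂ > 0` depending
only on `c, r, ε` (not on `m`, `N`, or the process) such that
`P(D_K ≤ (1-ε) m) < e^{-c₂ m}` where `K = min(⌈c₁ m⌉, N)`. -/
theorem counters_fill_in_linear_time (r : ℕ) (hr : 0 < r) (c : ℝ) (hc : 0 < c)
    (ε : ℝ) (hε : 0 < ε) :
    ∃ c₁ c₂ : ℝ, 0 < c₁ ∧ 0 < c₂ ∧
      ∀ (Ω : Type*) [MeasurableSpace Ω] (P : Measure Ω) [IsProbabilityMeasure P]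
        (N m : ℕ), 0 < N → 0 < m →
        ∀ X : ℕ → Ω → ℕ∞, (∀ i, @Measurable Ω ℕ∞ _ ⊤ (X i)) →
        (∀ᵐ ω ∂P, ∀ i ∈ Finset.Icc 1 N,
          X i ω = ⊤ ∨ ∃ a ∈ Finset.Icc 1 m, X i ω = (a : ℕ∞)) →
        (∀ᵐ ω ∂P, ∀ a ∈ Finset.Icc 1 m, countX X N a ω = r) →
        (∀ a ∈ Finset.Icc 1 m, ∀ k < N, ∀ᵐ ω ∂P, countX X k a ω < r →
          c / m < (P[Set.indicator {ω' | X (k + 1) ω' = (a : ℕ∞)}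
            (fun _ => (1 : ℝ)) | sigmaX X k]) ω) →
        (P {ω | (((Finset.Icc 1 m).filter fun a =>
            countX X (min ⌈c₁ * (m : ℝ)⌉₊ N) a ω = r).card : ℝ) ≤ (1 - ε) * m}).toReal <
          Real.exp (-c₂ * m) := by

  classical
  set ρ : ℝ := max (1 - (1 - Real.exp (-1)) * (c * ε)) (Real.exp (-1)) with hρdef
  have hexp1 : Real.exp (-1:ℝ) < 1 := by
    calc Real.exp (-1:ℝ) < Real.exp 0 := Real.exp_lt_exp.mpr (by norm_num)
      _ = 1 := Real.exp_zero
  have hρpos : 0 < ρ := lt_of_lt_of_le (Real.exp_pos _) (le_max_right _ _)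
  have hρlt1 : ρ < 1 := by
    apply max_lt _ hexp1
    nlinarith [mul_pos hc hε]
  have hlog : Real.log ρ < 0 := Real.log_neg hρpos hρlt1
  set c₁ : ℝ := ((r:ℝ) + 1) / (-Real.log ρ) with hc₁def
  have hc₁pos : 0 < c₁ := div_pos (by positivity) (by linarith)
  refine ⟨c₁, 1, hc₁pos, one_pos, ?_⟩
  intro Ω mΩ P instP N m hN hm X hXm hrange htotal hcond
  have hm0 : (0:ℝ) < m := by exact_mod_cast hm
  by_cases hKN : ⌈c₁ * (m:ℝ)⌉₊ ≤ N
  · -- main case : K = ⌈c₁ m⌉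
    rw [min_eq_left hKN]
    set K := ⌈c₁ * (m:ℝ)⌉₊ with hKdef
    have hle : sigmaX X K ≤ mΩ := sigmaX_le X hXm K
    have hDmeas : Measurable fun ω =>
        ((((Finset.Icc 1 m).filter fun a => countX X K a ω = r).card : ℝ)) :=
      (measurable_DD r m X K).mono hle le_rfl
    have hEmeas : MeasurableSet {ω |
        ((((Finset.Icc 1 m).filter fun a => countX X K a ω = r).card : ℝ)) ≤ (1 - ε) * m} :=
      measurableSet_le hDmeas measurable_const
    have hptwise : ∀ᵐ ω ∂P, Set.indicator {ω |
          ((((Finset.Icc 1 m).filter fun a => countX X K a ω = r).card : ℝ)) ≤ (1 - ε) * m}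
          (1 : Ω → ℝ) ω
        ≤ Real.exp (((r:ℝ) - ε) * m) * WW r ε m X K ω := by
      filter_upwards [htotal] with ω hω
      by_cases hE : ((((Finset.Icc 1 m).filter fun a => countX X K a ω = r).card : ℝ))
          ≤ (1 - ε) * m
      · rw [Set.indicator_apply, if_pos (show ω ∈ _ from hE), Pi.one_apply]
        have hA1 : AA r ε m X K ω = 1 := by unfold AA; rw [if_pos hE]
        have hbd : ∀ a ∈ Finset.Icc 1 m, countX X K a ω ≤ r := fun a ha => by
          calc countX X K a ω ≤ countX X N a ω := countX_mono X hKN a ω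
            _ = r := hω a ha
        have hTle : TT m X K ω ≤ ((r:ℝ) - ε) * m := by
          set F := (Finset.Icc 1 m).filter fun a => countX X K a ω = r with hF
          set U := (Finset.Icc 1 m).filter fun a => ¬(countX X K a ω = r) with hU
          have hsplit : TT m X K ω
              = ∑ a ∈ F, (countX X K a ω : ℝ) + ∑ a ∈ U, (countX X K a ω : ℝ) := by
            unfold TT
            rw [hF, hU, Finset.sum_filter_add_sum_filter_not]
          have hFsum : ∑ a ∈ F, (countX X K a ω : ℝ) = (F.card : ℝ) * r := by
            have h9 : ∀ a ∈ F, (countX X K a ω : ℝ) = (r : ℝ) := fun a ha => by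
              rw [(Finset.mem_filter.mp ha).2]
            rw [Finset.sum_congr rfl h9, Finset.sum_const, nsmul_eq_mul]
          have hUsum : ∑ a ∈ U, (countX X K a ω : ℝ) ≤ (U.card : ℝ) * ((r:ℝ) - 1) := by
            have h9 : ∀ a ∈ U, (countX X K a ω : ℝ) ≤ (r:ℝ) - 1 := by
              intro a ha
              have h1 := hbd a (Finset.mem_filter.mp ha).1
              have h2 := (Finset.mem_filter.mp ha).2
              have h3 : countX X K a ω + 1 ≤ r := by omega
              have h4 : ((countX X K a ω : ℝ) + 1) ≤ (r:ℝ) := by exact_mod_cast h3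
              linarith
            calc ∑ a ∈ U, (countX X K a ω : ℝ) ≤ ∑ _a ∈ U, ((r:ℝ) - 1) :=
                  Finset.sum_le_sum h9
              _ = (U.card : ℝ) * ((r:ℝ) - 1) := by rw [Finset.sum_const, nsmul_eq_mul]
          have hcards : F.card + U.card = m := by
            rw [hF, hU, Finset.card_filter_add_card_filter_not, Nat.card_Icc]
            omega
          have hcardsR : (F.card : ℝ) + (U.card : ℝ) = m := by exact_mod_cast hcards
          have hr1 : (1:ℝ) ≤ (r:ℝ) := by exact_mod_cast hr
          nlinarith [hE, hsplit, hFsum, hUsum, hcardsR]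
        have hWeq : Real.exp (((r:ℝ) - ε) * m) * WW r ε m X K ω
            = Real.exp (((r:ℝ) - ε) * m - TT m X K ω) := by
          unfold WW
          rw [hA1, one_mul, ← Real.exp_add]
          ring_nf
        rw [hWeq]
        calc (1:ℝ) = Real.exp 0 := Real.exp_zero.symm
          _ ≤ Real.exp (((r:ℝ) - ε) * m - TT m X K ω) :=
            Real.exp_le_exp.mpr (by linarith)
      · rw [Set.indicator_apply, if_neg (show ω ∉ _ from hE)]
        exact mul_nonneg (Real.exp_pos _).le (WW_nonneg r ε m X K ω)
    have hind_int : Integrable (Set.indicator {ω |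
        ((((Finset.Icc 1 m).filter fun a => countX X K a ω = r).card : ℝ)) ≤ (1 - ε) * m}
        (1 : Ω → ℝ)) P := by
      refine integrable_of_bdd (C := 1) ((measurable_one.indicator hEmeas).aestronglyMeasurable) ?_
      intro ω
      rw [Set.indicator_apply]
      split <;> simp
    have hWint : Integrable (WW r ε m X K) P := integrable_WW r ε m X hXm K P
    have hmain := main_bound r hr c ε ρ hc hε hρdef P N m hm X hXm htotal hcond K hKN
    have h5 : ρ ^ K = Real.exp ((K:ℝ) * Real.log ρ) := by
      rw [← Real.exp_log hρpos, ← Real.exp_nat_mul, Real.log_exp]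
    have h6 : c₁ * m ≤ (K:ℝ) := Nat.le_ceil _
    have h7 : (K:ℝ) * Real.log ρ ≤ (c₁ * m) * Real.log ρ :=
      mul_le_mul_of_nonpos_right h6 hlog.le
    have h8 : (c₁ * m) * Real.log ρ = -(((r:ℝ) + 1)) * m := by
      have hln : -Real.log ρ ≠ 0 := by linarith
      rw [hc₁def, div_mul_eq_mul_div, div_mul_eq_mul_div, div_eq_iff hln]
      ring
    calc (P {ω | ((((Finset.Icc 1 m).filter fun a =>
            countX X K a ω = r).card : ℝ)) ≤ (1 - ε) * m}).toReal
        = ∫ ω, Set.indicator {ω | ((((Finset.Icc 1 m).filter fun a =>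
            countX X K a ω = r).card : ℝ)) ≤ (1 - ε) * m} (1 : Ω → ℝ) ω ∂P :=
          (integral_indicator_one hEmeas).symm
      _ ≤ ∫ ω, Real.exp (((r:ℝ) - ε) * m) * WW r ε m X K ω ∂P :=
          integral_mono_ae hind_int (hWint.const_mul _) hptwise
      _ = Real.exp (((r:ℝ) - ε) * m) * ∫ ω, WW r ε m X K ω ∂P := integral_const_mul _ _
      _ ≤ Real.exp (((r:ℝ) - ε) * m) * ρ ^ K :=
          mul_le_mul_of_nonneg_left hmain (Real.exp_pos _).le
      _ = Real.exp (((r:ℝ) - ε) * m + (K:ℝ) * Real.log ρ) := by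
          rw [h5, ← Real.exp_add]
      _ < Real.exp (-1 * m) := by
          apply Real.exp_lt_exp.mpr
          nlinarith [mul_pos hε hm0]
  · -- degenerate case : K = N, the event is null
    push_neg at hKN
    rw [min_eq_right hKN.le]
    have hnull : P {ω | (((Finset.Icc 1 m).filter fun a =>
        countX X N a ω = r).card : ℝ) ≤ (1 - ε) * m} = 0 := by
      refine measure_mono_null ?_ (ae_iff.mp htotal)
      intro ω hω hall
      have hfull : ((Finset.Icc 1 m).filter fun a => countX X N a ω = r)
          = Finset.Icc 1 m :=
        Finset.filter_true_of_mem fun a ha => hall a ha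
      rw [Set.mem_setOf_eq, hfull, Nat.card_Icc] at hω
      have h1 : (m:ℝ) ≤ (1 - ε) * m := by
        have : ((m + 1 - 1 : ℕ) : ℝ) = (m:ℝ) := by push_cast; ring
        rw [this] at hω
        exact hω
      nlinarith [mul_pos hε hm0]
    rw [hnull, ENNReal.toReal_zero]
    exact Real.exp_pos _
end
end

section
/- Let (Ω, F, P) be a probability space with a filtration F′_1 ⊆ F′_2 ⊆ … ⊆ F′_{N+1} ⊆ F, let p ∈ (0,1], and let A′_1,…,A′_N be events such that A′_i ∈ F′_{i+1} and P(A′_i | F′_i) = p almost surely for every i. Let τ_1 < τ_2 < … < τ_ℓ be stopping times with respect to (F′_i) taking values in {1,…,N}. Then P(∩_{i=1}^{ℓ} A′_{τ_i}) = p^ℓ, where for a stopping time τ the event A′_τ is defined as ∪_{j=1}^N ({τ = j} ∩ A′_j). -/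
open MeasureTheory

noncomputable section

lemma key_lemma {Ω : Type*} {m : MeasurableSpace Ω} [m0 : MeasurableSpace Ω] (P : Measure Ω) [IsProbabilityMeasure P]
    (hm : m ≤ m0) (A : Set Ω) (hA : MeasurableSet[m0] A)
    (p : ℝ)
    (hcond : ∀ᵐ ω ∂P, (P[A.indicator (fun _ => (1 : ℝ)) | m]) ω = p)
    (S : Set Ω) (hS : MeasurableSet[m] S) :
    (P (S ∩ A)).toReal = p * (P S).toReal := by
  have hint : Integrable (A.indicator (fun _ => (1 : ℝ))) P :=
    (integrable_const (1:ℝ)).indicator hA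
  have h1 : ∫ x in S, A.indicator (fun _ => (1 : ℝ)) x ∂P = (P (S ∩ A)).toReal := by
    rw [setIntegral_indicator hA]
    simp
    rfl
  have h2 := setIntegral_condExp hm hint hS
  have h3 : ∫ x in S, (P[A.indicator (fun _ => (1 : ℝ)) | m]) x ∂P = p * (P S).toReal := by
    rw [integral_congr_ae (ae_restrict_of_ae hcond)]
    simp [mul_comm]
    exact Or.inl rfl
  rw [← h1, ← h2, h3]

/-- **Lemma (stopping times).** Let `F'_1 ⊆ ⋯ ⊆ F'_{N+1}` be a filtration, `p ∈ (0,1]`,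
and `A'_1, …, A'_N` events with `A'_i ∈ F'_{i+1}` and `P(A'_i ∣ F'_i) = p` a.s.
If `τ_1 < ⋯ < τ_L` are stopping times with values in `{1,…,N}`, then
`P(⋂_i A'_{τ_i}) = p^L`, where `A'_τ = ⋃_j ({τ = j} ∩ A'_j)`. -/
theorem prob_of_events_at_stopping_times {Ω : Type*} [MeasurableSpace Ω]
    (P : Measure Ω) [IsProbabilityMeasure P] (N : ℕ) (hN : 0 < N)
    (F : ℕ → MeasurableSpace Ω)
    (hmono : ∀ i j : ℕ, 1 ≤ i → i ≤ j → j ≤ N + 1 → F i ≤ F j)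
    (hle : ∀ i ∈ Finset.Icc 1 (N + 1), F i ≤ ‹MeasurableSpace Ω›)
    (p : ℝ) (hp0 : 0 < p) (hp1 : p ≤ 1)
    (A : ℕ → Set Ω) (hA : ∀ i ∈ Finset.Icc 1 N, MeasurableSet[F (i + 1)] (A i))
    (hcond : ∀ i ∈ Finset.Icc 1 N, ∀ᵐ ω ∂P,
      (P[(A i).indicator (fun _ => (1 : ℝ)) | F i]) ω = p)
    (L : ℕ) (τ : ℕ → Ω → ℕ)
    (hτval : ∀ k ∈ Finset.Icc 1 L, ∀ ω, τ k ω ∈ Finset.Icc 1 N)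
    (hτstop : ∀ k ∈ Finset.Icc 1 L, ∀ i ∈ Finset.Icc 1 N,
      MeasurableSet[F i] {ω | τ k ω ≤ i})
    (hτmono : ∀ ω, ∀ k ∈ Finset.Icc 1 L, ∀ k' ∈ Finset.Icc 1 L,
      k < k' → τ k ω < τ k' ω) :
    (P (⋂ k ∈ Finset.Icc 1 L, {ω | ω ∈ A (τ k ω)})).toReal = p ^ L := by
  -- global measurability of A i
  have hAglob : ∀ i ∈ Finset.Icc 1 N, MeasurableSet[‹MeasurableSpace Ω›] (A i) := by
    intro i hi
    have hi' := Finset.mem_Icc.mp hi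
    exact hle (i+1) (Finset.mem_Icc.mpr ⟨by omega, by omega⟩) _ (hA i hi)
  induction L with
  | zero => simp
  | succ L ih =>
    have hmem : ∀ k ∈ Finset.Icc 1 L, k ∈ Finset.Icc 1 (L+1) := by
      intro k hk
      simp only [Finset.mem_Icc] at *
      omega
    have hLmem : (L+1) ∈ Finset.Icc 1 (L+1) := Finset.mem_Icc.mpr ⟨by omega, le_rfl⟩
    have IH := ih (fun k hk => hτval k (hmem k hk)) (fun k hk => hτstop k (hmem k hk))
      (fun ω k hk k' hk' h => hτmono ω k (hmem k hk) k' (hmem k' hk') h)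
    set B : Set Ω := ⋂ k ∈ Finset.Icc 1 L, {ω | ω ∈ A (τ k ω)} with hB
    set C : ℕ → Set Ω := fun j => B ∩ {ω | τ (L+1) ω = j} with hC
    -- {τ k = i} is F j measurable for 1 ≤ i ≤ j ≤ N
    have heqmeas : ∀ k ∈ Finset.Icc 1 (L+1), ∀ i j : ℕ, 1 ≤ i → i ≤ j → j ≤ N →
        MeasurableSet[F j] {ω | τ k ω = i} := by
      intro k hk i j hi hij hjN
      have h1 : MeasurableSet[F j] {ω | τ k ω ≤ i} :=
        hmono i j hi hij (by omega) _ (hτstop k hk i (Finset.mem_Icc.mpr ⟨hi, by omega⟩))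
      have h2 : MeasurableSet[F j] {ω | τ k ω ≤ i - 1} := by
        rcases Nat.eq_or_lt_of_le hi with h | h
        · have : {ω | τ k ω ≤ i - 1} = ∅ := by
            ext ω
            have := Finset.mem_Icc.mp (hτval k hk ω)
            simp only [Set.mem_setOf_eq, Set.mem_empty_iff_false, iff_false]
            omega
          rw [this]; exact @MeasurableSet.empty _ (F j)
        · exact hmono (i-1) j (by omega) (by omega) (by omega) _
            (hτstop k hk (i-1) (Finset.mem_Icc.mpr ⟨by omega, by omega⟩))
      have : {ω | τ k ω = i} = {ω | τ k ω ≤ i} \ {ω | τ k ω ≤ i - 1} := by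
        ext ω; simp only [Set.mem_setOf_eq, Set.mem_diff]; omega
      rw [this]; exact h1.diff h2
    -- C j is F j measurable
    have hCmeas : ∀ j ∈ Finset.Icc 1 N, MeasurableSet[F j] (C j) := by
      intro j hj
      obtain ⟨hj1, hjN⟩ := Finset.mem_Icc.mp hj
      have hCeq : C j = {ω | τ (L+1) ω = j} ∩
          ⋂ k ∈ Finset.Icc 1 L, ⋃ i ∈ Finset.Ioo 0 j, ({ω | τ k ω = i} ∩ A i) := by
        ext ω
        simp only [hC, hB, Set.mem_inter_iff, Set.mem_iInter, Set.mem_iUnion, Set.mem_setOf_eq,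
          Finset.mem_Ioo, exists_prop]
        constructor
        · rintro ⟨hBω, hτω⟩
          refine ⟨hτω, fun k hk => ⟨τ k ω, ⟨?_, ?_⟩, rfl, hBω k hk⟩⟩
          · have := Finset.mem_Icc.mp (hτval k (hmem k hk) ω); omega
          · have := hτmono ω k (hmem k hk) (L+1) hLmem
              (by have := Finset.mem_Icc.mp hk; omega)
            omega
        · rintro ⟨hτω, hk⟩
          refine ⟨fun k hkk => ?_, hτω⟩
          obtain ⟨i, _, hi, hAi⟩ := hk k hkk
          show ω ∈ A (τ k ω)
          rw [hi]; exact hAi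
      rw [hCeq]
      refine MeasurableSet.inter (heqmeas (L+1) hLmem j j hj1 le_rfl hjN) ?_
      refine Finset.measurableSet_biInter _ (fun k hk => ?_)
      refine Finset.measurableSet_biUnion _ (fun i hi => ?_)
      obtain ⟨hi0, hij⟩ := Finset.mem_Ioo.mp hi
      refine MeasurableSet.inter (heqmeas k (hmem k hk) i j (by omega) (by omega) hjN) ?_
      exact hmono (i+1) j (by omega) (by omega) (by omega) _
        (hA i (Finset.mem_Icc.mpr ⟨by omega, by omega⟩))
    -- B is the disjoint union of the C j
    have hBunion : B = ⋃ j ∈ Finset.Icc 1 N, C j := by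
      ext ω
      simp only [hC, Set.mem_iUnion, Set.mem_inter_iff, Set.mem_setOf_eq, exists_prop]
      constructor
      · intro hω
        exact ⟨τ (L+1) ω, hτval (L+1) hLmem ω, hω, rfl⟩
      · rintro ⟨j, _, hω, _⟩; exact hω
    -- the new intersection is the disjoint union of the (C j ∩ A j)
    have hInter : (⋂ k ∈ Finset.Icc 1 (L+1), {ω | ω ∈ A (τ k ω)}) =
        ⋃ j ∈ Finset.Icc 1 N, (C j ∩ A j) := by
      ext ω
      simp only [hC, hB, Set.mem_iInter, Set.mem_iUnion, Set.mem_inter_iff, Set.mem_setOf_eq,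
        exists_prop]
      constructor
      · intro hω
        refine ⟨τ (L+1) ω, hτval (L+1) hLmem ω, ⟨fun k hk => hω k (hmem k hk), rfl⟩, ?_⟩
        exact hω (L+1) hLmem
      · rintro ⟨j, _, ⟨hBω, hτω⟩, hAω⟩
        intro k hk
        rcases Finset.mem_Icc.mp hk with ⟨hk1, hk2⟩
        by_cases h : k = L + 1
        · subst h; show ω ∈ A (τ (L+1) ω); rw [hτω]; exact hAω
        · exact hBω k (Finset.mem_Icc.mpr ⟨hk1, by omega⟩)
    -- global measurability of C j
    have hCglob : ∀ j ∈ Finset.Icc 1 N, MeasurableSet (C j) := fun j hj =>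
      hle j (Finset.mem_Icc.mpr ⟨(Finset.mem_Icc.mp hj).1, by
        have := (Finset.mem_Icc.mp hj).2; omega⟩) _ (hCmeas j hj)
    -- disjointness
    have hdisjCA : ((Finset.Icc 1 N : Finset ℕ) : Set ℕ).PairwiseDisjoint
        (fun j => C j ∩ A j) := by
      intro a _ b _ hab
      refine Set.disjoint_left.mpr (fun ω hωa hωb => hab ?_)
      have h1 : τ (L+1) ω = a := hωa.1.2
      have h2 : τ (L+1) ω = b := hωb.1.2
      omega
    have hdisjC : ((Finset.Icc 1 N : Finset ℕ) : Set ℕ).PairwiseDisjoint C := by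
      intro a _ b _ hab
      refine Set.disjoint_left.mpr (fun ω hωa hωb => hab ?_)
      have h1 : τ (L+1) ω = a := hωa.2
      have h2 : τ (L+1) ω = b := hωb.2
      omega
    have hsum1 : P (⋃ j ∈ Finset.Icc 1 N, (C j ∩ A j)) =
        ∑ j ∈ Finset.Icc 1 N, P (C j ∩ A j) :=
      measure_biUnion_finset hdisjCA (fun j hj => (hCglob j hj).inter (hAglob j hj))
    have hsum2 : P (⋃ j ∈ Finset.Icc 1 N, C j) = ∑ j ∈ Finset.Icc 1 N, P (C j) :=
      measure_biUnion_finset hdisjC (fun j hj => hCglob j hj)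
    -- put everything together
    have hkey : ∀ j ∈ Finset.Icc 1 N, (P (C j ∩ A j)).toReal = p * (P (C j)).toReal := by
      intro j hj
      obtain ⟨hj1, hjN⟩ := Finset.mem_Icc.mp hj
      exact key_lemma P (hle j (Finset.mem_Icc.mpr ⟨hj1, by omega⟩)) (A j) (hAglob j hj)
        p (hcond j hj) (C j) (hCmeas j hj)
    calc (P (⋂ k ∈ Finset.Icc 1 (L+1), {ω | ω ∈ A (τ k ω)})).toReal
        = (∑ j ∈ Finset.Icc 1 N, P (C j ∩ A j)).toReal := by rw [hInter, hsum1]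
      _ = ∑ j ∈ Finset.Icc 1 N, (P (C j ∩ A j)).toReal :=
          ENNReal.toReal_sum (fun j _ => measure_ne_top P _)
      _ = ∑ j ∈ Finset.Icc 1 N, p * (P (C j)).toReal := Finset.sum_congr rfl hkey
      _ = p * ∑ j ∈ Finset.Icc 1 N, (P (C j)).toReal := by rw [Finset.mul_sum]
      _ = p * (∑ j ∈ Finset.Icc 1 N, P (C j)).toReal := by
          rw [ENNReal.toReal_sum (fun j _ => measure_ne_top P _)]
      _ = p * (P B).toReal := by rw [← hsum2, ← hBunion]
      _ = p * p ^ L := by rw [IH]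
      _ = p ^ (L + 1) := by ring
end
end

section
/- Let (Ω, F, P) be a probability space with a filtration F′_1 ⊆ … ⊆ F′_{N+1} ⊆ F, let p ∈ (0,1], and let A′_1,…,A′_N be events with A′_i ∈ F′_{i+1} and P(A′_i | F′_i) = p almost surely for every i. Let X_1,…,X_N be random variables taking values in {1,…,m} ∪ {∞} such that σ(X_1,…,X_i) ⊆ F′_i for every i and such that almost surely each a ∈ {1,…,m} appears exactly r times in the sequence X_1,…,X_N. For a ∈ {1,…,m} set G′_a = ∩_{i=1}^N ({X_i ≠ a} ∪ A′_i). Then for every subset S ⊆ {1,…,m}, P(∩_{a∈S} G′_a) = p^{r|S|}; in particular the events G′_1,…,G′_m are mutually independent and each has probability p^r. -/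
open MeasureTheory

noncomputable section

namespace EventsGAux

/-- The event that all constraints up to time `k` are satisfied. -/
def Bset {Ω : Type*} (A : ℕ → Set Ω) (X : ℕ → Ω → ℕ∞) (T : Finset ℕ∞) (k : ℕ) : Set Ω :=
  {ω | ∀ i ∈ Finset.Icc 1 k, X i ω ∈ T → ω ∈ A i}

/-- Number of indices `i ≤ k` with `X i ω ∈ T`. -/
def cnt {Ω : Type*} (X : ℕ → Ω → ℕ∞) (T : Finset ℕ∞) (k : ℕ) (ω : Ω) : ℕ :=
  ((Finset.Icc 1 k).filter fun i => X i ω ∈ T).card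

lemma cnt_le {Ω : Type*} (X : ℕ → Ω → ℕ∞) (T : Finset ℕ∞) (k : ℕ) (ω : Ω) :
    cnt X T k ω ≤ k := by
  calc cnt X T k ω ≤ (Finset.Icc 1 k).card := Finset.card_filter_le _ _
  _ = k := by simp

lemma Icc_succ (k : ℕ) : Finset.Icc 1 (k+1) = insert (k+1) (Finset.Icc 1 k) :=
  (Finset.insert_Icc_right_eq_Icc_add_one (by omega)).symm

lemma cnt_succ {Ω : Type*} (X : ℕ → Ω → ℕ∞) (T : Finset ℕ∞) (k : ℕ) (ω : Ω) :
    cnt X T (k+1) ω = cnt X T k ω + (if X (k+1) ω ∈ T then 1 else 0) := by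
  unfold cnt
  rw [Icc_succ, Finset.filter_insert]
  split_ifs with hx
  · rw [Finset.card_insert_of_notMem (by simp)]
  · simp

lemma mem_Bset_succ {Ω : Type*} (A : ℕ → Set Ω) (X : ℕ → Ω → ℕ∞) (T : Finset ℕ∞)
    (k : ℕ) (ω : Ω) :
    ω ∈ Bset A X T (k+1) ↔ ω ∈ Bset A X T k ∧ (X (k+1) ω ∈ T → ω ∈ A (k+1)) := by
  unfold Bset
  simp only [Set.mem_setOf_eq, Icc_succ, Finset.mem_insert]
  constructor
  · intro h
    exact ⟨fun i hi hx => h i (Or.inr hi) hx, h (k+1) (Or.inl rfl)⟩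
  · rintro ⟨h1, h2⟩ i (rfl | hi)
    · exact h2
    · exact h1 i hi

end EventsGAux

open EventsGAux

/-- **Lemma (independence of the events `G'_a`).** Let `F'_1 ⊆ ⋯ ⊆ F'_{N+1}` be a
filtration, `p ∈ (0,1]`, and `A'_1, …, A'_N` events with `A'_i ∈ F'_{i+1}` and
`P(A'_i ∣ F'_i) = p` a.s.  Let `X_1, …, X_N` be random variables adapted to the filtration
(`σ(X_1,…,X_i) ⊆ F'_i`) with values in `{1,…,m} ∪ {∞}`, a.s. each `a ∈ {1,…,m}`
appearing exactly `r` times.  With `G'_a = ⋂_{i=1}^N ({X_i ≠ a} ∪ A'_i)`, for every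
`S ⊆ {1,…,m}` we have `P(⋂_{a ∈ S} G'_a) = p^{r |S|}`; in particular the events `G'_a`
are mutually independent, each of probability `p^r`. -/
theorem events_G_independent {Ω : Type*} [MeasurableSpace Ω]
    (P : Measure Ω) [IsProbabilityMeasure P] (N m r : ℕ) (hN : 0 < N) (hm : 0 < m)
    (hr : 0 < r) (F : ℕ → MeasurableSpace Ω)
    (hmono : ∀ i j : ℕ, 1 ≤ i → i ≤ j → j ≤ N + 1 → F i ≤ F j)
    (hle : ∀ i ∈ Finset.Icc 1 (N + 1), F i ≤ ‹MeasurableSpace Ω›)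
    (p : ℝ) (hp0 : 0 < p) (hp1 : p ≤ 1)
    (A : ℕ → Set Ω) (hA : ∀ i ∈ Finset.Icc 1 N, MeasurableSet[F (i + 1)] (A i))
    (hcond : ∀ i ∈ Finset.Icc 1 N, ∀ᵐ ω ∂P,
      (P[(A i).indicator (fun _ => (1 : ℝ)) | F i]) ω = p)
    (X : ℕ → Ω → ℕ∞)
    (hXadapted : ∀ i ∈ Finset.Icc 1 N, ∀ k ∈ Finset.Icc 1 i,
      @Measurable Ω ℕ∞ (F i) ⊤ (X k))
    (hXval : ∀ᵐ ω ∂P, ∀ i ∈ Finset.Icc 1 N,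
      X i ω = ⊤ ∨ ∃ a ∈ Finset.Icc 1 m, X i ω = (a : ℕ∞))
    (hXcount : ∀ᵐ ω ∂P, ∀ a ∈ Finset.Icc 1 m, countX X N a ω = r) :
    ∀ S : Finset ℕ, S ⊆ Finset.Icc 1 m →
      (P (⋂ a ∈ S, {ω | ∀ i ∈ Finset.Icc 1 N, X i ω = (a : ℕ∞) → ω ∈ A i})).toReal =
        p ^ (r * S.card) := by
  intro S hS
  set T : Finset ℕ∞ := S.image (Nat.cast) with hTdef
  have hFle : ∀ i, 1 ≤ i → i ≤ N + 1 → F i ≤ ‹MeasurableSpace Ω› :=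
    fun i h1 h2 => hle i (Finset.mem_Icc.2 ⟨h1, h2⟩)
  have hAmeas : ∀ i, 1 ≤ i → i ≤ N → MeasurableSet (A i) := fun i h1 h2 =>
    hFle (i+1) (by omega) (by omega) _ (hA i (Finset.mem_Icc.2 ⟨h1, h2⟩))
  -- the key consequence of the conditional probability hypothesis
  have key : ∀ i, 1 ≤ i → i ≤ N → ∀ s : Set Ω, MeasurableSet[F i] s →
      (P (A i ∩ s)).toReal = p * (P s).toReal := by
    intro i h1 h2 s hs
    have hFi : F i ≤ ‹MeasurableSpace Ω› := hFle i h1 (by omega)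
    have hAm : MeasurableSet (A i) := hAmeas i h1 h2
    have hint : Integrable ((A i).indicator fun _ => (1:ℝ)) P :=
      (integrable_const 1).indicator hAm
    have h1' := setIntegral_condExp hFi hint hs
    have h2' : ∫ x in s, (P[(A i).indicator (fun _ => (1:ℝ)) | F i]) x ∂P
        = p * (P s).toReal := by
      rw [integral_congr_ae (ae_restrict_of_ae (hcond i (Finset.mem_Icc.2 ⟨h1, h2⟩)))]
      simp [mul_comm, Measure.real]
    have h3' : ∫ x in s, (A i).indicator (fun _ => (1:ℝ)) x ∂P = (P (A i ∩ s)).toReal := by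
      rw [setIntegral_indicator hAm]
      simp [Set.inter_comm, Measure.real]
    rw [h3', h2'] at h1'
    exact h1'.symm
  -- measurability helpers
  have hTmeas : ∀ (M : MeasurableSpace Ω) (i : ℕ), @Measurable Ω ℕ∞ M ⊤ (X i) →
      MeasurableSet[M] {ω | X i ω ∈ T} :=
    fun M i h => h MeasurableSpace.measurableSet_top
  have hcntMeas : ∀ (M : MeasurableSpace Ω) (k : ℕ),
      (∀ i ∈ Finset.Icc 1 k, @Measurable Ω ℕ∞ M ⊤ (X i)) →
      Measurable[M] (cnt X T k) := by
    intro M k hX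
    have heq : cnt X T k = fun ω => ∑ i ∈ Finset.Icc 1 k,
        (if X i ω ∈ T then 1 else 0) := by
      funext ω
      simp only [cnt, Finset.card_filter]
    rw [heq]
    exact Finset.measurable_sum _ fun i hi =>
      Measurable.ite (hTmeas M i (hX i hi)) measurable_const measurable_const
  have hlevel : ∀ (M : MeasurableSpace Ω) (k : ℕ), Measurable[M] (cnt X T k) →
      ∀ (pr : ℕ → Prop), MeasurableSet[M] {ω | pr (cnt X T k ω)} :=
    fun M k hc pr => hc (MeasurableSpace.measurableSet_top)
  have hBMeas : ∀ (M : MeasurableSpace Ω) (k : ℕ),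
      (∀ i ∈ Finset.Icc 1 k, @Measurable Ω ℕ∞ M ⊤ (X i)) →
      (∀ i ∈ Finset.Icc 1 k, MeasurableSet[M] (A i)) →
      MeasurableSet[M] (Bset A X T k) := by
    intro M k hX hA'
    have heq : Bset A X T k = ⋂ i ∈ Finset.Icc 1 k, ({ω | X i ω ∈ T}ᶜ ∪ A i) := by
      ext ω
      simp only [Bset, Set.mem_setOf_eq, Set.mem_iInter, Set.mem_union, Set.mem_compl_iff]
      exact ⟨fun h i hi => or_iff_not_imp_left.2 fun hx => h i hi (not_not.1 hx),
        fun h i hi hx => (h i hi).resolve_left (not_not.2 hx)⟩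
    rw [heq]
    exact MeasurableSet.biInter (Finset.Icc 1 k).countable_toSet fun i hi =>
      ((hTmeas M i (hX i hi)).compl.union (hA' i hi))
  -- ambient measurability of X i
  have hXm0 : ∀ i, 1 ≤ i → i ≤ N → @Measurable Ω ℕ∞ _ ⊤ (X i) := fun i h1 h2 =>
    Measurable.mono (hXadapted N (Finset.mem_Icc.2 ⟨hN, le_rfl⟩) i
      (Finset.mem_Icc.2 ⟨h1, h2⟩)) (hFle N hN (by omega)) le_rfl
  have hXm0' : ∀ k, k ≤ N → ∀ i ∈ Finset.Icc 1 k, @Measurable Ω ℕ∞ _ ⊤ (X i) :=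
    fun k hk i hi => hXm0 i (Finset.mem_Icc.1 hi).1 (le_trans (Finset.mem_Icc.1 hi).2 hk)
  have hAm0' : ∀ k, k ≤ N → ∀ i ∈ Finset.Icc 1 k, MeasurableSet (A i) :=
    fun k hk i hi => hAmeas i (Finset.mem_Icc.1 hi).1 (le_trans (Finset.mem_Icc.1 hi).2 hk)
  have hBm0 : ∀ k, k ≤ N → MeasurableSet (Bset A X T k) :=
    fun k hk => hBMeas _ k (hXm0' k hk) (hAm0' k hk)
  have hcntm0 : ∀ k, k ≤ N → Measurable (cnt X T k) :=
    fun k hk => hcntMeas _ k (hXm0' k hk)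
  have hpne : p ≠ 0 := ne_of_gt hp0
  have hppow : ∀ j : ℕ, p ^ j ≠ 0 := fun j => pow_ne_zero j hpne
  -- the main invariant
  have inv : ∀ k, k ≤ N → ∑ j ∈ Finset.range (k+1),
      (P (Bset A X T k ∩ {ω | cnt X T k ω = j})).toReal / p ^ j = 1 := by
    intro k
    induction k with
    | zero =>
      intro _
      have hIcc : Finset.Icc 1 0 = ∅ := by decide
      have hB : Bset A X T 0 ∩ {ω | cnt X T 0 ω = 0} = Set.univ := by
        ext ω; simp [Bset, cnt, hIcc]
      rw [Finset.sum_range_one, hB]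
      simp
    | succ k ih =>
      intro hk1
      have hkN : k ≤ N := by omega
      have hk1N : k + 1 ≤ N := hk1
      set E : Set Ω := {ω | X (k+1) ω ∈ T} with hEdef
      have hEm0 : MeasurableSet E := hTmeas _ (k+1) (hXm0 (k+1) (by omega) hk1N)
      have hBk := hBm0 k hkN
      have hck := hcntm0 k hkN
      -- F (k+1)-measurability of the relevant sets
      have hXF : ∀ i ∈ Finset.Icc 1 (k+1), @Measurable Ω ℕ∞ (F (k+1)) ⊤ (X i) :=
        hXadapted (k+1) (Finset.mem_Icc.2 ⟨by omega, hk1N⟩)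
      have hXFk : ∀ i ∈ Finset.Icc 1 k, @Measurable Ω ℕ∞ (F (k+1)) ⊤ (X i) := by
        intro i hi
        obtain ⟨hi1, hi2⟩ := Finset.mem_Icc.1 hi
        exact hXF i (Finset.mem_Icc.2 ⟨hi1, by omega⟩)
      have hAFk : ∀ i ∈ Finset.Icc 1 k, MeasurableSet[F (k+1)] (A i) := by
        intro i hi
        obtain ⟨hi1, hi2⟩ := Finset.mem_Icc.1 hi
        exact hmono (i+1) (k+1) (by omega) (by omega) (by omega) _
          (hA i (Finset.mem_Icc.2 ⟨hi1, by omega⟩))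
      have hBF : MeasurableSet[F (k+1)] (Bset A X T k) := hBMeas _ k hXFk hAFk
      have hcF : Measurable[F (k+1)] (cnt X T k) := hcntMeas _ k hXFk
      have hEF : MeasurableSet[F (k+1)] E :=
        hTmeas _ (k+1) (hXF (k+1) (Finset.mem_Icc.2 ⟨by omega, le_rfl⟩))
      -- decomposition of the event at time k+1
      have hdecomp : ∀ j, Bset A X T (k+1) ∩ {ω | cnt X T (k+1) ω = j} =
          (Bset A X T k ∩ {ω | cnt X T k ω = j} ∩ Eᶜ) ∪
          (A (k+1) ∩ (Bset A X T k ∩ {ω | cnt X T k ω + 1 = j} ∩ E)) := by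
        intro j
        ext ω
        by_cases hx : X (k+1) ω ∈ T <;>
          simp only [Set.mem_inter_iff, Set.mem_union, Set.mem_compl_iff, Set.mem_setOf_eq,
            mem_Bset_succ, cnt_succ, hx, hEdef, if_true, if_false, add_zero,
            not_true_eq_false, not_false_eq_true, and_true, and_false, or_false,
            false_or, true_implies, false_implies] <;> tauto
      have hstep : ∀ j, (P (Bset A X T (k+1) ∩ {ω | cnt X T (k+1) ω = j})).toReal =
          (P (Bset A X T k ∩ {ω | cnt X T k ω = j} ∩ Eᶜ)).toReal +
          p * (P (Bset A X T k ∩ {ω | cnt X T k ω + 1 = j} ∩ E)).toReal := by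
        intro j
        have hdisj : Disjoint (Bset A X T k ∩ {ω | cnt X T k ω = j} ∩ Eᶜ)
            (A (k+1) ∩ (Bset A X T k ∩ {ω | cnt X T k ω + 1 = j} ∩ E)) := by
          rw [Set.disjoint_left]
          rintro ω ⟨_, hEc⟩ ⟨_, _, hE⟩
          exact hEc hE
        have hmeas2 : MeasurableSet
            (A (k+1) ∩ (Bset A X T k ∩ {ω | cnt X T k ω + 1 = j} ∩ E)) :=
          (hAmeas (k+1) (by omega) hk1N).inter
            ((hBk.inter (hlevel _ k hck (fun x => x + 1 = j))).inter hEm0)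
        rw [hdecomp j, measure_union hdisj hmeas2,
          ENNReal.toReal_add (measure_ne_top P _) (measure_ne_top P _)]
        congr 1
        exact key (k+1) (by omega) hk1N _
          ((hBF.inter (hlevel _ k hcF (fun x => x + 1 = j))).inter hEF)
      -- the sum manipulation
      have hsum1 : ∑ j ∈ Finset.range (k+2),
          (P (Bset A X T k ∩ {ω | cnt X T k ω = j} ∩ Eᶜ)).toReal / p ^ j =
          ∑ j ∈ Finset.range (k+1),
          (P (Bset A X T k ∩ {ω | cnt X T k ω = j} ∩ Eᶜ)).toReal / p ^ j := by
        rw [Finset.sum_range_succ]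
        have hempty : Bset A X T k ∩ {ω | cnt X T k ω = k+1} ∩ Eᶜ = ∅ := by
          rw [Set.eq_empty_iff_forall_notMem]
          rintro ω ⟨⟨_, hc⟩, _⟩
          simp only [Set.mem_setOf_eq] at hc
          have := cnt_le X T k ω
          omega
        rw [hempty]
        simp
      have hsum2 : ∑ j ∈ Finset.range (k+2),
          (p * (P (Bset A X T k ∩ {ω | cnt X T k ω + 1 = j} ∩ E)).toReal) / p ^ j =
          ∑ j ∈ Finset.range (k+1),
          (P (Bset A X T k ∩ {ω | cnt X T k ω = j} ∩ E)).toReal / p ^ j := by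
        rw [Finset.sum_range_succ']
        have h0 : Bset A X T k ∩ {ω | cnt X T k ω + 1 = 0} ∩ E = ∅ := by
          rw [Set.eq_empty_iff_forall_notMem]
          rintro ω ⟨⟨_, hc⟩, _⟩
          simp only [Set.mem_setOf_eq] at hc
          omega
        rw [h0]
        simp only [measure_empty, ENNReal.toReal_zero, mul_zero, zero_div, add_zero,
          pow_zero]
        refine Finset.sum_congr rfl fun j _ => ?_
        have hset : {ω | cnt X T k ω + 1 = j + 1} = {ω | cnt X T k ω = j} := by
          ext ω; simp
        rw [hset, pow_succ]
        field_simp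
      have hsplit : ∀ j, (P (Bset A X T k ∩ {ω | cnt X T k ω = j} ∩ Eᶜ)).toReal +
          (P (Bset A X T k ∩ {ω | cnt X T k ω = j} ∩ E)).toReal =
          (P (Bset A X T k ∩ {ω | cnt X T k ω = j})).toReal := by
        intro j
        rw [← ENNReal.toReal_add (measure_ne_top P _) (measure_ne_top P _),
          ← measure_union ?_ ((hBk.inter (hlevel _ k hck (fun x => x = j))).inter hEm0)]
        · congr 1
          rw [Set.union_comm, Set.inter_union_compl]
        · exact Disjoint.mono Set.inter_subset_right Set.inter_subset_right
            (disjoint_compl_left)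
      calc ∑ j ∈ Finset.range (k+1+1),
          (P (Bset A X T (k+1) ∩ {ω | cnt X T (k+1) ω = j})).toReal / p ^ j
          = ∑ j ∈ Finset.range (k+2),
            ((P (Bset A X T k ∩ {ω | cnt X T k ω = j} ∩ Eᶜ)).toReal / p ^ j +
             (p * (P (Bset A X T k ∩ {ω | cnt X T k ω + 1 = j} ∩ E)).toReal) / p ^ j) := by
            refine Finset.sum_congr rfl fun j _ => ?_
            rw [hstep j, add_div]
        _ = ∑ j ∈ Finset.range (k+2),
              (P (Bset A X T k ∩ {ω | cnt X T k ω = j} ∩ Eᶜ)).toReal / p ^ j +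
            ∑ j ∈ Finset.range (k+2),
              (p * (P (Bset A X T k ∩ {ω | cnt X T k ω + 1 = j} ∩ E)).toReal) / p ^ j :=
            Finset.sum_add_distrib
        _ = ∑ j ∈ Finset.range (k+1),
              (P (Bset A X T k ∩ {ω | cnt X T k ω = j} ∩ Eᶜ)).toReal / p ^ j +
            ∑ j ∈ Finset.range (k+1),
              (P (Bset A X T k ∩ {ω | cnt X T k ω = j} ∩ E)).toReal / p ^ j := by
            rw [hsum1, hsum2]
        _ = ∑ j ∈ Finset.range (k+1),
              (P (Bset A X T k ∩ {ω | cnt X T k ω = j})).toReal / p ^ j := by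
            rw [← Finset.sum_add_distrib]
            refine Finset.sum_congr rfl fun j _ => ?_
            rw [← add_div, hsplit j]
        _ = 1 := ih hkN
  -- identify the goal set with `Bset`
  have hgoal_set : (⋂ a ∈ S, {ω | ∀ i ∈ Finset.Icc 1 N, X i ω = (a:ℕ∞) → ω ∈ A i}) =
      Bset A X T N := by
    ext ω
    simp only [Set.mem_iInter, Set.mem_setOf_eq, Bset, hTdef, Finset.mem_image]
    constructor
    · rintro h i hi ⟨a, haS, hEq⟩
      exact h a haS i hi hEq.symm
    · intro h a haS i hi hEq
      exact h i hi ⟨a, haS, hEq.symm⟩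
  -- a.e. value of the count at time N
  have hcntN : ∀ᵐ ω ∂P, cnt X T N ω = r * S.card := by
    filter_upwards [hXcount] with ω hω
    have hsplit : (Finset.Icc 1 N).filter (fun i => X i ω ∈ T) =
        S.biUnion (fun a => (Finset.Icc 1 N).filter fun i => X i ω = (a:ℕ∞)) := by
      ext i
      simp only [Finset.mem_filter, Finset.mem_biUnion, hTdef, Finset.mem_image]
      constructor
      · rintro ⟨hi, a, haS, hEq⟩
        exact ⟨a, haS, hi, hEq.symm⟩
      · rintro ⟨a, haS, hi, hEq⟩
        exact ⟨hi, a, haS, hEq.symm⟩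
    have hdisj : ∀ a ∈ S, ∀ b ∈ S, a ≠ b →
        Disjoint ((Finset.Icc 1 N).filter fun i => X i ω = (a:ℕ∞))
          ((Finset.Icc 1 N).filter fun i => X i ω = (b:ℕ∞)) := by
      intro a _ b _ hab
      rw [Finset.disjoint_left]
      intro i h1 h2
      rw [Finset.mem_filter] at h1 h2
      have : (a:ℕ∞) = (b:ℕ∞) := by rw [← h1.2, ← h2.2]
      exact hab (by exact_mod_cast this)
    have hcard : cnt X T N ω =
        ∑ a ∈ S, ((Finset.Icc 1 N).filter fun i => X i ω = (a:ℕ∞)).card := by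
      unfold cnt
      rw [hsplit, Finset.card_biUnion hdisj]
    have hsum : ∑ a ∈ S, ((Finset.Icc 1 N).filter fun i => X i ω = (a:ℕ∞)).card =
        ∑ _a ∈ S, r :=
      Finset.sum_congr rfl fun a ha => hω a (hS ha)
    rw [hcard, hsum, Finset.sum_const, smul_eq_mul, mul_comm]
  set R := r * S.card with hRdef
  have hnullc : P {ω | ¬ (cnt X T N ω = R)} = 0 := ae_iff.1 hcntN
  have hnull : ∀ j, j ≠ R → P (Bset A X T N ∩ {ω | cnt X T N ω = j}) = 0 := by
    intro j hj
    refine measure_mono_null ?_ hnullc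
    rintro ω ⟨_, hc⟩
    simp only [Set.mem_setOf_eq] at hc ⊢
    omega
  have hinvN := inv N le_rfl
  have hRN : R ≤ N := by
    by_contra hcon
    push_neg at hcon
    rw [Finset.sum_eq_zero (fun j hj => by
      rw [hnull j (by have := Finset.mem_range.1 hj; omega)]
      simp)] at hinvN
    exact one_ne_zero hinvN.symm
  rw [Finset.sum_eq_single_of_mem R (Finset.mem_range.2 (by omega))
    (fun j _ hj => by rw [hnull j hj]; simp)] at hinvN
  have hq : (P (Bset A X T N ∩ {ω | cnt X T N ω = R})).toReal = p ^ R :=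
    by
      have := (div_eq_one_iff_eq (hppow R)).1 hinvN
      exact this
  rw [hgoal_set]
  have hBN : P (Bset A X T N) = P (Bset A X T N ∩ {ω | cnt X T N ω = R}) := by
    refine (measure_inter_conull ?_).symm
    refine measure_mono_null ?_ hnullc
    intro ω hω
    exact hω
  rw [hBN, hq]
end
end
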